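/- arXiv:2209.10154 — 7 statements merged into one kernel-verified Lean document; each statement's English description precedes it below -/
import Mathlib

section
/- Let p > -1, δ > 0 and μ > 0. Then there exist constants C₁ > 0, C₂ > 0 and t₀ > 0 such that for all t ≥ t₀: C₁ t^{-(p+1)} ≤ ∫₀^δ (1+r)^{-μt} r^p dr ≤ C₂ t^{-(p+1)}. -/
open MeasureTheory Real Set

lemma aux_rpow_int {p b : ℝ} (hp : -1 < p) : IntegrableOn (fun r : ℝ => r ^ p) (Ioo 0 b) := by
  exact ((intervalIntegral.intervalIntegrable_rpow' hp (a := 0) (b := b)).1).mono_set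
    Ioo_subset_Ioc_self

lemma aux_int_rpow {p b : ℝ} (hp : -1 < p) (hb : 0 ≤ b) :
    ∫ r in Ioo (0:ℝ) b, r ^ p = b ^ (p + 1) / (p + 1) := by
  rw [← integral_Ioc_eq_integral_Ioo, ← intervalIntegral.integral_of_le hb,
    integral_rpow (Or.inl hp), Real.zero_rpow (by linarith), sub_zero]

/-- Lemma 2.1: for `p > -1`, `δ > 0`, `μ > 0`,
`∫₀^δ (1+r)^{-μt} r^p dr ∼ t^{-(p+1)}` as `t → ∞`. -/
theorem stmt0 (p δ μ : ℝ) (hp : -1 < p) (hδ : 0 < δ) (hμ : 0 < μ) :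
    ∃ C₁ C₂ t₀ : ℝ, 0 < C₁ ∧ 0 < C₂ ∧ 0 < t₀ ∧ ∀ t : ℝ, t₀ ≤ t →
      C₁ * t ^ (-(p + 1)) ≤ (∫ r in Set.Ioo (0:ℝ) δ, (1 + r) ^ (-(μ * t)) * r ^ p) ∧
      (∫ r in Set.Ioo (0:ℝ) δ, (1 + r) ^ (-(μ * t)) * r ^ p) ≤ C₂ * t ^ (-(p + 1)) := by
  have hp1 : (0:ℝ) < p + 1 := by linarith
  set c : ℝ := μ / (1 + δ) with hc_def
  have hc : 0 < c := div_pos hμ (by linarith)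
  refine ⟨Real.exp (-1) * μ ^ (-(p + 1)) / (p + 1), Real.Gamma (p + 1) * c ^ (-(p + 1)),
    max 1 (1 / (μ * δ)), by positivity,
    mul_pos (Real.Gamma_pos_of_pos hp1) (rpow_pos_of_pos hc _), by positivity, ?_⟩
  intro t ht
  have ht1 : 1 ≤ t := le_trans (le_max_left _ _) ht
  have ht0 : 0 < t := by linarith
  have hμt : 0 < μ * t := by positivity
  set a : ℝ := (μ * t)⁻¹ with ha_def
  have hapos : 0 < a := by positivity
  have haδ : a ≤ δ := by
    have h1 : 1 / (μ * δ) ≤ t := le_trans (le_max_right _ _) ht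
    rw [div_le_iff₀ (by positivity)] at h1
    rw [ha_def, inv_le_iff_one_le_mul₀ hμt]
    nlinarith
  -- integrability of the main integrand
  have hmeas : ∀ b : ℝ, 0 < b →
      AEStronglyMeasurable (fun r : ℝ => (1 + r) ^ (-(μ * t)) * r ^ p)
        (volume.restrict (Ioo (0:ℝ) b)) := by
    intro b hb
    refine ContinuousOn.aestronglyMeasurable ?_ measurableSet_Ioo
    refine ContinuousOn.mul ?_ ?_
    · exact ContinuousOn.rpow_const (by fun_prop) (fun x hx => Or.inl (by nlinarith [hx.1]))
    · exact ContinuousOn.rpow_const continuousOn_id (fun x hx => Or.inl hx.1.ne')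
  have hIntf : ∀ b : ℝ, 0 < b →
      IntegrableOn (fun r : ℝ => (1 + r) ^ (-(μ * t)) * r ^ p) (Ioo 0 b) := by
    intro b hb
    refine Integrable.mono' (aux_rpow_int hp) (hmeas b hb) ?_
    filter_upwards [ae_restrict_mem measurableSet_Ioo] with r hr
    have h1r : (0:ℝ) < 1 + r := by nlinarith [hr.1]
    have hb1 : (1 + r) ^ (-(μ * t)) ≤ 1 :=
      Real.rpow_le_one_of_one_le_of_nonpos (by linarith [hr.1]) (by nlinarith)
    rw [Real.norm_eq_abs, abs_of_nonneg (mul_nonneg (Real.rpow_nonneg h1r.le _)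
      (Real.rpow_nonneg hr.1.le _))]
    calc (1 + r) ^ (-(μ * t)) * r ^ p ≤ 1 * r ^ p := by
          exact mul_le_mul_of_nonneg_right hb1 (rpow_nonneg hr.1.le p)
      _ = r ^ p := one_mul _
  have hfnonneg : ∀ r ∈ Ioo (0:ℝ) δ, 0 ≤ (1 + r) ^ (-(μ * t)) * r ^ p := by
    intro r hr
    have h1r : (0:ℝ) < 1 + r := by nlinarith [hr.1]
    exact mul_nonneg (Real.rpow_nonneg h1r.le _) (Real.rpow_nonneg hr.1.le _)
  constructor
  · -- lower bound
    have step1 : ∫ r in Ioo (0:ℝ) a, (1 + r) ^ (-(μ * t)) * r ^ p ≤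
        ∫ r in Ioo (0:ℝ) δ, (1 + r) ^ (-(μ * t)) * r ^ p := by
      refine setIntegral_mono_set (hIntf δ hδ) ?_ ?_
      · filter_upwards [ae_restrict_mem measurableSet_Ioo] with r hr
        exact hfnonneg r hr
      · exact Filter.Eventually.of_forall (Ioo_subset_Ioo le_rfl haδ)
    have step2 : ∫ r in Ioo (0:ℝ) a, Real.exp (-1) * r ^ p ≤
        ∫ r in Ioo (0:ℝ) a, (1 + r) ^ (-(μ * t)) * r ^ p := by
      refine setIntegral_mono_on ((aux_rpow_int hp).const_mul _) (hIntf a hapos)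
        measurableSet_Ioo ?_
      intro r hr
      have hr0 := hr.1
      have h1r : (0:ℝ) < 1 + r := by linarith
      have hlog : Real.log (1 + r) ≤ r := by
        have := Real.log_le_sub_one_of_pos h1r
        linarith
      have hkey : Real.exp (-1) ≤ (1 + r) ^ (-(μ * t)) := by
        rw [Real.rpow_def_of_pos h1r]
        refine Real.exp_le_exp.mpr ?_
        have hra : r ≤ (μ * t)⁻¹ := hr.2.le
        have hla : Real.log (1 + r) ≤ (μ * t)⁻¹ := le_trans hlog hra
        have h1 : μ * t * Real.log (1 + r) ≤ μ * t * (μ * t)⁻¹ :=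
          mul_le_mul_of_nonneg_left hla hμt.le
        rw [mul_inv_cancel₀ hμt.ne'] at h1
        nlinarith [h1]
      exact mul_le_mul_of_nonneg_right hkey (rpow_nonneg hr0.le p)
    have step3 : ∫ r in Ioo (0:ℝ) a, Real.exp (-1) * r ^ p
        = Real.exp (-1) * (a ^ (p + 1) / (p + 1)) := by
      rw [integral_const_mul, aux_int_rpow hp hapos.le]
    have hval : a ^ (p + 1) = μ ^ (-(p + 1)) * t ^ (-(p + 1)) := by
      rw [ha_def, Real.inv_rpow hμt.le, ← Real.rpow_neg hμt.le,
        Real.mul_rpow hμ.le ht0.le]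
    calc Real.exp (-1) * μ ^ (-(p + 1)) / (p + 1) * t ^ (-(p + 1))
        = Real.exp (-1) * (a ^ (p + 1) / (p + 1)) := by rw [hval]; ring
      _ = ∫ r in Ioo (0:ℝ) a, Real.exp (-1) * r ^ p := step3.symm
      _ ≤ _ := le_trans step2 step1
  · -- upper bound
    have hct : 0 < c * t := by positivity
    have hIntH : IntegrableOn (fun x : ℝ => x ^ p * Real.exp (-(c * t * x))) (Ioi 0) := by
      have := integrableOn_rpow_mul_exp_neg_mul_rpow hp one_pos hct
      refine this.congr_fun ?_ measurableSet_Ioi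
      intro x hx
      simp only [Real.rpow_one]
      ring_nf
    have step1 : ∫ r in Ioo (0:ℝ) δ, (1 + r) ^ (-(μ * t)) * r ^ p ≤
        ∫ r in Ioo (0:ℝ) δ, r ^ p * Real.exp (-(c * t * r)) := by
      refine setIntegral_mono_on (hIntf δ hδ) (hIntH.mono_set (fun x hx => hx.1))
        measurableSet_Ioo ?_
      intro r hr
      have hr0 := hr.1
      have h1r : (0:ℝ) < 1 + r := by linarith
      have hlog : r / (1 + δ) ≤ Real.log (1 + r) := by
        have h2 := Real.log_le_sub_one_of_pos (inv_pos.mpr h1r)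
        rw [Real.log_inv] at h2
        have h3 : 1 - (1 + r)⁻¹ ≤ Real.log (1 + r) := by linarith
        have h4 : r / (1 + r) = 1 - (1 + r)⁻¹ := by field_simp; ring
        have h5 : r / (1 + δ) ≤ r / (1 + r) := by
          apply div_le_div_of_nonneg_left hr0.le h1r
          linarith [hr.2]
        linarith
      have hkey : (1 + r) ^ (-(μ * t)) ≤ Real.exp (-(c * t * r)) := by
        rw [Real.rpow_def_of_pos h1r]
        refine Real.exp_le_exp.mpr ?_
        have : c * t * r = μ * t * (r / (1 + δ)) := by
          rw [hc_def]; ring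
        rw [this]
        nlinarith
      calc (1 + r) ^ (-(μ * t)) * r ^ p ≤ Real.exp (-(c * t * r)) * r ^ p :=
            mul_le_mul_of_nonneg_right hkey (rpow_nonneg hr0.le p)
        _ = r ^ p * Real.exp (-(c * t * r)) := mul_comm _ _
    have step2 : ∫ r in Ioo (0:ℝ) δ, r ^ p * Real.exp (-(c * t * r)) ≤
        ∫ r in Ioi (0:ℝ), r ^ p * Real.exp (-(c * t * r)) := by
      refine setIntegral_mono_set hIntH ?_ ?_
      · filter_upwards [ae_restrict_mem measurableSet_Ioi] with r hr
        exact mul_nonneg (Real.rpow_nonneg (le_of_lt hr) _) (Real.exp_nonneg _)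
      · exact Filter.Eventually.of_forall (fun x hx => hx.1)
    have step3 : ∫ r in Ioi (0:ℝ), r ^ p * Real.exp (-(c * t * r))
        = (1 / (c * t)) ^ (p + 1) * Real.Gamma (p + 1) := by
      have := Real.integral_rpow_mul_exp_neg_mul_Ioi hp1 hct
      simp only [add_sub_cancel_right] at this
      exact this
    have hval : (1 / (c * t)) ^ (p + 1) = c ^ (-(p + 1)) * t ^ (-(p + 1)) := by
      rw [one_div, Real.inv_rpow hct.le, ← Real.rpow_neg hct.le,
        Real.mul_rpow hc.le ht0.le]
    calc (∫ r in Ioo (0:ℝ) δ, (1 + r) ^ (-(μ * t)) * r ^ p)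
        ≤ (1 / (c * t)) ^ (p + 1) * Real.Gamma (p + 1) := by
          rw [← step3]; exact le_trans step1 step2
      _ = Real.Gamma (p + 1) * c ^ (-(p + 1)) * t ^ (-(p + 1)) := by rw [hval]; ring
end

section
/- Let μ > 2, let δ > 0 be the unique positive root of μ log(1+δ) = 2δ, and let δ₁ ∈ (0, min{μ/2 - 1, δ}] (so that μ² - 4(1+δ₁)² > 0). Then for all r ∈ [0, δ₁]: √(μ² - 4(1+δ₁)²) · log(1+r) ≤ √(μ² log²(1+r) - 4r²) ≤ μ log(1+r); in particular μ² log²(1+r) - 4r² ≥ 0 on [0, δ₁]. -/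
/-- Lemma 3.1 (1): for `μ > 2` and `δ₁ ∈ (0, min (μ/2 - 1) δ]`, on `[0, δ₁]` one has
`√(μ² - 4(1+δ₁)²) log(1+r) ≤ √(μ² log²(1+r) - 4r²) ≤ μ log(1+r)`, and
`μ² log²(1+r) - 4r² ≥ 0`. -/
theorem stmt3 (μ δ δ₁ : ℝ) (hμ : 2 < μ) (hδ : 0 < δ)
    (hroot : μ * Real.log (1 + δ) = 2 * δ)
    (hδ₁ : 0 < δ₁) (hδ₁le : δ₁ ≤ min (μ / 2 - 1) δ) :
    ∀ r ∈ Set.Icc (0:ℝ) δ₁,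
      Real.sqrt (μ ^ 2 - 4 * (1 + δ₁) ^ 2) * Real.log (1 + r) ≤
        Real.sqrt (μ ^ 2 * Real.log (1 + r) ^ 2 - 4 * r ^ 2) ∧
      Real.sqrt (μ ^ 2 * Real.log (1 + r) ^ 2 - 4 * r ^ 2) ≤ μ * Real.log (1 + r) ∧
      0 ≤ μ ^ 2 * Real.log (1 + r) ^ 2 - 4 * r ^ 2 := by
  intro r hr
  obtain ⟨hr0, hrδ₁⟩ := hr
  have hδ₁' : δ₁ ≤ μ / 2 - 1 := le_trans hδ₁le (min_le_left _ _)
  have h1r : (0:ℝ) < 1 + r := by linarith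
  set L := Real.log (1 + r) with hLdef
  have hL : 0 ≤ L := Real.log_nonneg (by linarith)
  -- log (1+r) ≥ r / (1+r)
  have hinv : Real.log ((1 + r)⁻¹) ≤ (1 + r)⁻¹ - 1 :=
    Real.log_le_sub_one_of_pos (by positivity)
  have hloginv : Real.log ((1 + r)⁻¹) = -L := by
    rw [Real.log_inv]
  have hkey : r ≤ (1 + δ₁) * L := by
    have h1 : r / (1 + r) ≤ L := by
      rw [hloginv] at hinv
      have : 1 - (1 + r)⁻¹ ≤ L := by linarith
      have h2 : 1 - (1 + r)⁻¹ = r / (1 + r) := by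
        field_simp
        ring
      linarith [this, h2 ▸ this]
    have h3 : r ≤ (1 + r) * L := by
      have := (div_le_iff₀ h1r).mp h1
      linarith
    nlinarith [mul_le_mul_of_nonneg_right (show (1:ℝ) + r ≤ 1 + δ₁ by linarith) hL]
  have hsq : 4 * r ^ 2 ≤ 4 * (1 + δ₁) ^ 2 * L ^ 2 := by
    nlinarith [mul_le_mul hkey hkey hr0 (by positivity : (0:ℝ) ≤ (1 + δ₁) * L)]
  have hμδ : 4 * (1 + δ₁) ^ 2 ≤ μ ^ 2 := by nlinarith
  have h0 : 0 ≤ μ ^ 2 * L ^ 2 - 4 * r ^ 2 := by nlinarith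
  refine ⟨?_, ?_, h0⟩
  · have h1 : Real.sqrt (μ ^ 2 - 4 * (1 + δ₁) ^ 2) * L =
        Real.sqrt ((μ ^ 2 - 4 * (1 + δ₁) ^ 2) * L ^ 2) := by
      rw [Real.sqrt_mul (by linarith), Real.sqrt_sq hL]
    rw [h1]
    exact Real.sqrt_le_sqrt (by nlinarith)
  · have h2 : μ ^ 2 * L ^ 2 - 4 * r ^ 2 ≤ (μ * L) ^ 2 := by nlinarith
    calc Real.sqrt (μ ^ 2 * L ^ 2 - 4 * r ^ 2) ≤ Real.sqrt ((μ * L) ^ 2) :=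
          Real.sqrt_le_sqrt h2
      _ = μ * L := Real.sqrt_sq (by positivity)
end

section
/- Let μ > 2, let δ > 0 be the unique positive root of μ log(1+δ) = 2δ, and let δ₁ ∈ (0, min{μ/2 - 1, δ}]. Define λ₊(r) := (-μ log(1+r) + √(μ² log²(1+r) - 4r²))/2 for r ∈ [0, δ₁]. Then there exist constants c ≥ d > 0 such that -c·r ≤ λ₊(r) ≤ -d·r for all r ∈ [0, δ₁]. -/
/-- Lemma 3.1 (2): for `μ > 2` and `δ₁ ∈ (0, min (μ/2 - 1) δ]`, there are constants
`c ≥ d > 0` such that `-c r ≤ λ₊(r) ≤ -d r` on `[0, δ₁]`. -/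
theorem stmt4 (μ δ δ₁ : ℝ) (hμ : 2 < μ) (hδ : 0 < δ)
    (hroot : μ * Real.log (1 + δ) = 2 * δ)
    (hδ₁ : 0 < δ₁) (hδ₁le : δ₁ ≤ min (μ / 2 - 1) δ) :
    ∃ c d : ℝ, 0 < d ∧ d ≤ c ∧ ∀ r ∈ Set.Icc (0:ℝ) δ₁,
      -c * r ≤ (-(μ * Real.log (1 + r)) +
          Real.sqrt (μ ^ 2 * Real.log (1 + r) ^ 2 - 4 * r ^ 2)) / 2 ∧
      (-(μ * Real.log (1 + r)) +
          Real.sqrt (μ ^ 2 * Real.log (1 + r) ^ 2 - 4 * r ^ 2)) / 2 ≤ -d * r := by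
  have hμ0 : (0:ℝ) < μ := by linarith
  have hd1 : 2 * (1 + δ₁) ≤ μ := by
    have h1 : δ₁ ≤ μ / 2 - 1 := le_trans hδ₁le (min_le_left _ _)
    linarith
  refine ⟨2 * (1 + δ₁) / μ, 1 / μ, by positivity, ?_, ?_⟩
  · rw [div_le_div_iff₀ hμ0 hμ0]; nlinarith
  · rintro r ⟨hr0, hr1⟩
    set L := Real.log (1 + r) with hL
    have h1r : (0:ℝ) < 1 + r := by linarith
    have hLnn : 0 ≤ L := Real.log_nonneg (by linarith)
    have hLle : L ≤ r := by
      have := Real.log_le_sub_one_of_pos h1r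
      linarith
    have hLge : r / (1 + δ₁) ≤ L := by
      have h' : Real.log (1 + r)⁻¹ ≤ (1 + r)⁻¹ - 1 :=
        Real.log_le_sub_one_of_pos (by positivity)
      rw [Real.log_inv] at h'
      have h2 : r / (1 + r) ≤ L := by
        have he : (1 + r)⁻¹ - 1 = -(r / (1 + r)) := by field_simp; ring
        rw [he] at h'
        linarith
      have h3 : r / (1 + δ₁) ≤ r / (1 + r) := by gcongr
      linarith
    have hkey : 2 * r ≤ μ * L := by
      have h4 : μ * (r / (1 + δ₁)) ≤ μ * L :=
        mul_le_mul_of_nonneg_left hLge (le_of_lt hμ0)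
      have h5 : 2 * r ≤ μ * (r / (1 + δ₁)) := by
        rw [← mul_div_assoc, le_div_iff₀ (by linarith : (0:ℝ) < 1 + δ₁)]
        nlinarith
      linarith
    have hhnn : 0 ≤ μ ^ 2 * L ^ 2 - 4 * r ^ 2 := by nlinarith
    constructor
    · -- lower bound: μL - 2cr ≤ √h
      obtain ⟨c, hcdef⟩ : ∃ c, c = 2 * (1 + δ₁) / μ := ⟨_, rfl⟩
      rw [← hcdef]
      have hcμ : c * μ = 2 * (1 + δ₁) := by rw [hcdef]; field_simp
      have hcle : c ≤ 1 := by rw [hcdef, div_le_one hμ0]; linarith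
      have hc0 : 0 < c := by rw [hcdef]; positivity
      rcases le_or_gt (μ * L - 2 * c * r) 0 with hcase | hcase
      · have hs := Real.sqrt_nonneg (μ ^ 2 * L ^ 2 - 4 * r ^ 2)
        linarith
      · have h6 : 2 * r ≤ μ * c * L := by
          have e2 : 2 * (1 + δ₁) * (r / (1 + δ₁)) = 2 * r := by
            field_simp
          have e1 : 2 * r ≤ 2 * (1 + δ₁) * L := by
            have := mul_le_mul_of_nonneg_left hLge
              (by positivity : (0:ℝ) ≤ 2 * (1 + δ₁))
            linarith [e2 ▸ this]
          have e3 : μ * c * L = 2 * (1 + δ₁) * L := by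
            rw [mul_comm μ c, hcμ]
          linarith
        have h6r : 2 * r * r ≤ μ * c * L * r := mul_le_mul_of_nonneg_right h6 hr0
        have hc2' : c ^ 2 ≤ 1 := by
          nlinarith [mul_nonneg (sub_nonneg.2 hcle) hc0.le]
        have hc2 : c ^ 2 * r ^ 2 ≤ r ^ 2 := by
          nlinarith [mul_nonneg (sub_nonneg.2 hc2') (sq_nonneg r)]
        have hsq : (μ * L - 2 * c * r) ^ 2 ≤ μ ^ 2 * L ^ 2 - 4 * r ^ 2 := by
          nlinarith [h6r, hc2]
        have h7 := Real.sqrt_le_sqrt hsq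
        rw [Real.sqrt_sq hcase.le] at h7
        linarith
    · -- upper bound: √h ≤ μL - 2tr with t = 1/μ
      obtain ⟨t, htdef⟩ : ∃ t, t = 1 / μ := ⟨_, rfl⟩
      rw [← htdef]
      have htμ : t * μ = 1 := by rw [htdef]; field_simp
      have ht0 : 0 < t := by rw [htdef]; positivity
      have htle : t ≤ 1 := by rw [htdef, div_le_one hμ0]; linarith
      have htr : t * r ≤ r := by nlinarith [mul_le_mul_of_nonneg_right htle hr0]
      have hB : 0 ≤ μ * L - 2 * t * r := by linarith
      have hLrr : L * r ≤ r * r := mul_le_mul_of_nonneg_right hLle hr0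
      have e4 : t * μ * (L * r) = L * r := by rw [htμ]; ring
      have hsq : μ ^ 2 * L ^ 2 - 4 * r ^ 2 ≤ (μ * L - 2 * t * r) ^ 2 := by
        nlinarith [e4, hLrr, sq_nonneg (t * r)]
      have h7 := Real.sqrt_le_sqrt hsq
      rw [Real.sqrt_sq hB] at h7
      linarith
end

section
/- Let n ≥ 1, μ ∈ (0, 2), u₀ ∈ L¹(ℝⁿ) and u₁ ∈ L^{1,1}(ℝⁿ). For ξ ∈ ℝⁿ \ {0} write r := |ξ| and b(r) := √(r² - (μ²/4) log²(1+r)), and define w(t,ξ) := (1+r)^{-μt/2} [ cos(b(r)t)·û₀(ξ) + (μ log(1+r)/(2b(r)))·sin(b(r)t)·û₀(ξ) + (1/b(r))·sin(b(r)t)·û₁(ξ) ] and χ(t,ξ) := P₁ (1+r)^{-μt/2} (1/b(r)) sin(γ t r), where γ := √(4-μ²)/2 and P₁ := ∫_{ℝⁿ} u₁(x) dx. Then there exist constants C > 0, α > 0 and t₀ > 0, with C depending only on n and μ, such that for all t ≥ t₀: ∫_{ℝⁿ} |w(t,ξ) - χ(t,ξ)|² dξ ≤ C (P₁² + ‖u₁‖²_{1,1}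 + ‖u₀‖₁²) t^{-n} + C P₁² e^{-αt}. -/
open MeasureTheory

/-- The Fourier transform `f̂(ξ) = ∫ e^{-i x·ξ} f(x) dx`. -/
noncomputable def fourierTransformCLM' {n : ℕ} (f : EuclideanSpace ℝ (Fin n) → ℂ)
    (ξ : EuclideanSpace ℝ (Fin n)) : ℂ :=
  ∫ x, Complex.exp (-(Complex.I * ((inner ℝ x ξ : ℝ) : ℂ))) * f x

open Real Set

/-- `exp(-c) ≤ (m+1)!/c^(m+1)` for `c > 0`. -/
lemma auxExp {c : ℝ} (hc : 0 < c) (m : ℕ) :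
    Real.exp (-c) ≤ ((m+1).factorial : ℝ) / c ^ (m+1) := by
  rw [le_div_iff₀ (by positivity)]
  have h := Real.pow_div_factorial_le_exp c hc.le (m+1)
  rw [div_le_iff₀ (by positivity)] at h
  calc Real.exp (-c) * c ^ (m+1) ≤ Real.exp (-c) * (Real.exp c * ((m+1).factorial : ℝ)) :=
        mul_le_mul_of_nonneg_left h (Real.exp_pos _).le
  _ = ((m+1).factorial : ℝ) := by rw [← mul_assoc, ← Real.exp_add]; simp

/-- `log 2 * r ≤ log (1+r)` for `r ∈ [0,1]`. -/
lemma auxLog2 {r : ℝ} (h0 : 0 ≤ r) (h1 : r ≤ 1) : Real.log 2 * r ≤ Real.log (1+r) := by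
  refine (Real.le_log_iff_exp_le (by linarith)).mpr ?_
  have h := convexOn_exp.2 (Set.mem_univ (0:ℝ)) (Set.mem_univ (Real.log 2))
    (by linarith : (0:ℝ) ≤ 1 - r) h0 (by ring)
  simp only [smul_eq_mul, mul_zero, zero_add, Real.exp_zero, Real.exp_log two_pos] at h
  calc Real.exp (Real.log 2 * r) = Real.exp (r * Real.log 2) := by ring_nf
  _ ≤ (1-r) * 1 + r * 2 := h
  _ = 1 + r := by ring

/-- Integrability of `r^m (1+r)^{-s}` on `(0,∞)`. -/
lemma auxIntOn (m : ℕ) {s : ℝ} (hs : 2*(m:ℝ) + 4 ≤ s) :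
    IntegrableOn (fun r : ℝ => r ^ m * (1+r) ^ (-s)) (Set.Ioi 0) := by
  have hmeas : Measurable (fun r : ℝ => r ^ m * (1+r) ^ (-s)) := by fun_prop
  have hIoc : IntegrableOn (fun r : ℝ => r ^ m * (1+r) ^ (-s)) (Set.Ioc 0 1) := by
    refine Integrable.mono' (g := fun _ => (1:ℝ))
      (integrableOn_const measure_Ioc_lt_top.ne) hmeas.aestronglyMeasurable ?_
    filter_upwards [ae_restrict_mem measurableSet_Ioc] with r hr
    have h1 : (0:ℝ) < 1 + r := by linarith [hr.1]
    have h2 : (1+r) ^ (-s) ≤ 1 :=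
      Real.rpow_le_one_of_one_le_of_nonpos (by linarith [hr.1.le]) (by linarith)
    have h3 : r ^ m ≤ 1 := pow_le_one₀ hr.1.le hr.2
    have h4 : (0:ℝ) ≤ r ^ m := pow_nonneg hr.1.le m
    have h5 : (0:ℝ) ≤ (1+r) ^ (-s) := Real.rpow_nonneg h1.le _
    rw [Real.norm_eq_abs, abs_of_nonneg (by positivity)]
    nlinarith
  have hIoi : IntegrableOn (fun r : ℝ => r ^ m * (1+r) ^ (-s)) (Set.Ioi 1) := by
    refine Integrable.mono' (g := fun r => (2:ℝ) ^ (-s/2) * r ^ ((m:ℝ) - s/2))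
      (((integrableOn_Ioi_rpow_of_lt (by push_cast; linarith) one_pos).const_mul _)) 
      hmeas.aestronglyMeasurable ?_
    filter_upwards [ae_restrict_mem measurableSet_Ioi] with r hr
    rw [Set.mem_Ioi] at hr
    have h0 : (0:ℝ) < r := by linarith
    have h1 : (0:ℝ) < 1 + r := by linarith
    rw [Real.norm_eq_abs, abs_of_nonneg (by positivity)]
    have e1 : (1+r) ^ (-s) = (1+r) ^ (-s/2) * (1+r) ^ (-s/2) := by
      rw [← Real.rpow_add h1]; ring_nf
    have e2 : (1+r) ^ (-s/2) ≤ (2:ℝ) ^ (-s/2) :=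
      Real.rpow_le_rpow_of_nonpos two_pos (by linarith) (by linarith)
    have e3 : (1+r) ^ (-s/2) ≤ r ^ (-s/2) :=
      Real.rpow_le_rpow_of_nonpos h0 (by linarith) (by linarith)
    have e4 : r ^ m * r ^ (-s/2) = r ^ ((m:ℝ) - s/2) := by
      rw [← Real.rpow_natCast r m, ← Real.rpow_add h0]; ring_nf
    calc r ^ m * (1+r) ^ (-s) = (1+r)^(-s/2) * ((1+r)^(-s/2) * r ^ m) := by rw [e1]; ring
    _ ≤ (2:ℝ)^(-s/2) * (r^(-s/2) * r ^ m) := by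
        have hrm : (0:ℝ) ≤ r ^ m := pow_nonneg h0.le m
        have h6 : (1+r)^(-s/2) * r^m ≤ r^(-s/2) * r^m := mul_le_mul_of_nonneg_right e3 hrm
        exact mul_le_mul e2 h6 (by positivity) (by positivity)
    _ = (2:ℝ)^(-s/2) * r ^ ((m:ℝ) - s/2) := by rw [← e4]; ring_nf
  have : Set.Ioi (0:ℝ) = Set.Ioc 0 1 ∪ Set.Ioi 1 := (Set.Ioc_union_Ioi_eq_Ioi zero_le_one).symm
  rw [this]
  exact hIoc.union hIoi

/-- `∫_0^∞ r^m (1+r)^{-s} dr ≤ D_m / s^{m+1}` for `s ≥ 2m+4`. -/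
theorem auxOneD (m : ℕ) {s : ℝ} (hs : 2*(m:ℝ) + 4 ≤ s) :
    ∫ r in Set.Ioi (0:ℝ), r ^ m * (1+r) ^ (-s) ≤
      ((m.factorial : ℝ) + ((m+1).factorial : ℝ)) * 4 ^ (m+1) / s ^ (m+1) := by
  have hm : (0:ℝ) ≤ m := Nat.cast_nonneg m
  have hspos : (0:ℝ) < s := by linarith
  have hlog2 : (0:ℝ) < Real.log 2 := Real.log_pos one_lt_two
  have hlog2' : (1:ℝ)/4 < Real.log 2 / 2 := by
    have : Real.log 2 ≥ 0.6931471803 := Real.log_two_gt_d9.le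
    linarith
  -- split the integral
  have hsplit : Set.Ioi (0:ℝ) = Set.Ioc 0 1 ∪ Set.Ioi 1 := (Set.Ioc_union_Ioi_eq_Ioi zero_le_one).symm
  have hIoc : IntegrableOn (fun r : ℝ => r ^ m * (1+r) ^ (-s)) (Set.Ioc 0 1) :=
    (auxIntOn m hs).mono_set (by rw [hsplit]; exact Set.subset_union_left)
  have hIoi : IntegrableOn (fun r : ℝ => r ^ m * (1+r) ^ (-s)) (Set.Ioi 1) :=
    (auxIntOn m hs).mono_set (by rw [hsplit]; exact Set.subset_union_right)
  rw [hsplit, setIntegral_union (Set.Ioc_disjoint_Ioi le_rfl) measurableSet_Ioi hIoc hIoi]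
  -- first piece
  have hg1int : IntegrableOn (fun r : ℝ => r ^ (m:ℝ) * Real.exp (-(Real.log 2 * s) * r)) (Set.Ioi 0) := by
    have := integrableOn_rpow_mul_exp_neg_mul_rpow (s := (m:ℝ)) (p := 1)
      (by have : (0:ℝ) ≤ m := Nat.cast_nonneg m; linarith : (-1:ℝ) < (m:ℝ)) one_pos (by positivity : (0:ℝ) < Real.log 2 * s)
    simpa [Real.rpow_one] using this
  have piece1 : (∫ r in Set.Ioc (0:ℝ) 1, r ^ m * (1+r) ^ (-s)) ≤
      (m.factorial : ℝ) / (Real.log 2 * s) ^ (m+1) := by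
    have step1 : (∫ r in Set.Ioc (0:ℝ) 1, r ^ m * (1+r) ^ (-s)) ≤
        ∫ r in Set.Ioc (0:ℝ) 1, r ^ (m:ℝ) * Real.exp (-(Real.log 2 * s) * r) := by
      refine setIntegral_mono_on hIoc (hg1int.mono_set (by
        rw [hsplit]; exact Set.subset_union_left)) measurableSet_Ioc ?_
      intro r hr
      have h0 : (0:ℝ) < 1 + r := by linarith [hr.1]
      have e1 : (1+r) ^ (-s) = Real.exp (Real.log (1+r) * (-s)) := by
        rw [Real.rpow_def_of_pos h0]
      have e2 : Real.log (1+r) * (-s) ≤ -(Real.log 2 * s) * r := by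
        have := auxLog2 hr.1.le hr.2
        nlinarith
      rw [e1, ← Real.rpow_natCast r m]
      exact mul_le_mul_of_nonneg_left (Real.exp_le_exp.mpr e2) (Real.rpow_nonneg hr.1.le _)
    have step2 : (∫ r in Set.Ioc (0:ℝ) 1, r ^ (m:ℝ) * Real.exp (-(Real.log 2 * s) * r)) ≤
        ∫ r in Set.Ioi (0:ℝ), r ^ (m:ℝ) * Real.exp (-(Real.log 2 * s) * r) := by
      refine setIntegral_mono_set hg1int ?_ ?_
      · filter_upwards [ae_restrict_mem measurableSet_Ioi] with r hr
        have : (0:ℝ) < r := hr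
        positivity
      · exact Filter.Eventually.of_forall (fun r hr => hr.1)
    have step3 : (∫ r in Set.Ioi (0:ℝ), r ^ (m:ℝ) * Real.exp (-(Real.log 2 * s) * r)) =
        (m.factorial : ℝ) / (Real.log 2 * s) ^ (m+1) := by
      have := integral_rpow_mul_exp_neg_mul_rpow (p := 1) (q := (m:ℝ))
        one_pos (by have : (0:ℝ) ≤ m := Nat.cast_nonneg m; linarith : (-1:ℝ) < (m:ℝ)) (by positivity : (0:ℝ) < Real.log 2 * s)
      simp only [Real.rpow_one, div_one, one_div] at this
      rw [this, Real.Gamma_nat_eq_factorial]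
      rw [Real.rpow_neg (by positivity), ← Real.rpow_natCast (Real.log 2 * s) (m+1)]
      push_cast
      ring
    linarith
  -- second piece
  have piece2 : (∫ r in Set.Ioi (1:ℝ), r ^ m * (1+r) ^ (-s)) ≤
      ((m+1).factorial : ℝ) / (Real.log 2 / 2 * s) ^ (m+1) := by
    have hp : (m:ℝ) - s/2 < -1 := by linarith
    have step1 : (∫ r in Set.Ioi (1:ℝ), r ^ m * (1+r) ^ (-s)) ≤
        ∫ r in Set.Ioi (1:ℝ), (2:ℝ) ^ (-s/2) * r ^ ((m:ℝ) - s/2) := by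
      refine setIntegral_mono_on hIoi
        ((integrableOn_Ioi_rpow_of_lt hp one_pos).const_mul _) measurableSet_Ioi ?_
      intro r hr
      rw [Set.mem_Ioi] at hr
      have h0 : (0:ℝ) < r := by linarith
      have h1 : (0:ℝ) < 1 + r := by linarith
      have e1 : (1+r) ^ (-s) = (1+r) ^ (-s/2) * (1+r) ^ (-s/2) := by
        rw [← Real.rpow_add h1]; ring_nf
      have e2 : (1+r) ^ (-s/2) ≤ (2:ℝ) ^ (-s/2) :=
        Real.rpow_le_rpow_of_nonpos two_pos (by linarith) (by linarith)
      have e3 : (1+r) ^ (-s/2) ≤ r ^ (-s/2) :=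
        Real.rpow_le_rpow_of_nonpos h0 (by linarith) (by linarith)
      have e4 : r ^ m * r ^ (-s/2) = r ^ ((m:ℝ) - s/2) := by
        rw [← Real.rpow_natCast r m, ← Real.rpow_add h0]; ring_nf
      have hrm : (0:ℝ) ≤ r ^ m := pow_nonneg h0.le m
      calc r ^ m * (1+r) ^ (-s) = (1+r)^(-s/2) * ((1+r)^(-s/2) * r ^ m) := by rw [e1]; ring
      _ ≤ (2:ℝ)^(-s/2) * (r^(-s/2) * r ^ m) := by
          have h6 : (1+r)^(-s/2) * r^m ≤ r^(-s/2) * r^m := mul_le_mul_of_nonneg_right e3 hrm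
          exact mul_le_mul e2 h6 (by positivity) (by positivity)
      _ = (2:ℝ)^(-s/2) * r ^ ((m:ℝ) - s/2) := by rw [← e4]; ring
    have step2 : (∫ r in Set.Ioi (1:ℝ), (2:ℝ) ^ (-s/2) * r ^ ((m:ℝ) - s/2)) =
        (2:ℝ) ^ (-s/2) * (1 / (s/2 - m - 1)) := by
      rw [MeasureTheory.integral_const_mul, integral_Ioi_rpow_of_lt hp one_pos]
      rw [Real.one_rpow]
      congr 1
      rw [div_eq_div_iff (by linarith) (by linarith)]
      ring
    have step3 : (2:ℝ) ^ (-s/2) * (1 / (s/2 - m - 1)) ≤ (2:ℝ) ^ (-s/2) := by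
      have h2 : (1:ℝ) ≤ s/2 - m - 1 := by linarith
      have h3 : (0:ℝ) < (2:ℝ) ^ (-s/2) := by positivity
      have h4 : 1 / (s/2 - m - 1) ≤ 1 := by
        rw [div_le_one (by linarith)]; linarith
      nlinarith
    have step4 : (2:ℝ) ^ (-s/2) ≤ ((m+1).factorial : ℝ) / (Real.log 2 / 2 * s) ^ (m+1) := by
      have e : (2:ℝ) ^ (-s/2) = Real.exp (-(Real.log 2 / 2 * s)) := by
        rw [Real.rpow_def_of_pos two_pos]; ring_nf
      rw [e]
      exact auxExp (by positivity) m
    linarith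
  -- combine
  have h4 : (0:ℝ) < Real.log 2 / 2 * s := by positivity
  have key1 : (m.factorial:ℝ) / (Real.log 2 * s) ^ (m+1) ≤ (m.factorial:ℝ) / (Real.log 2/2 * s) ^ (m+1) := by
    apply div_le_div_of_nonneg_left (by positivity) (by positivity)
    apply pow_le_pow_left₀ h4.le
    nlinarith
  have key2 : ((m.factorial:ℝ) + (m+1).factorial) / (Real.log 2/2 * s) ^ (m+1) ≤
      ((m.factorial : ℝ) + ((m+1).factorial : ℝ)) * 4 ^ (m+1) / s ^ (m+1) := by
    rw [div_le_div_iff₀ (by positivity) (by positivity)]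
    have h5 : s ^ (m+1) ≤ 4 ^ (m+1) * (Real.log 2/2 * s) ^ (m+1) := by
      rw [← mul_pow]
      apply pow_le_pow_left₀ hspos.le
      nlinarith
    have h6 : (0:ℝ) ≤ (m.factorial:ℝ) + (m+1).factorial := by positivity
    calc ((m.factorial:ℝ) + (m+1).factorial) * s ^ (m+1)
        ≤ ((m.factorial:ℝ) + (m+1).factorial) * (4 ^ (m+1) * (Real.log 2/2 * s) ^ (m+1)) :=
          mul_le_mul_of_nonneg_left h5 h6
      _ = ((m.factorial:ℝ) + (m+1).factorial) * 4 ^ (m+1) * (Real.log 2/2 * s) ^ (m+1) := by ring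
  have hsum : (m.factorial:ℝ) / (Real.log 2/2 * s) ^ (m+1) + ((m+1).factorial:ℝ) / (Real.log 2/2 * s) ^ (m+1)
      = ((m.factorial:ℝ) + (m+1).factorial) / (Real.log 2/2 * s) ^ (m+1) := by
    rw [← add_div]
  linarith

lemma auxNormExp (c : ℝ) : ‖Complex.exp (-(Complex.I * (c : ℂ)))‖ = 1 := by
  rw [Complex.norm_exp]
  simp [Complex.mul_re]

lemma auxExpSubOne (c : ℝ) : ‖Complex.exp (-(Complex.I * (c : ℂ))) - 1‖ ≤ |c| := by
  have e : -(Complex.I * (c : ℂ)) = ((-c : ℝ) : ℂ) * Complex.I := by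
    push_cast; ring
  rw [e, Complex.exp_mul_I, ← Complex.ofReal_cos, ← Complex.ofReal_sin]
  have hnn : (0:ℝ) ≤ ‖(((Real.cos (-c) : ℝ)):ℂ) + ((Real.sin (-c) : ℝ):ℂ) * Complex.I - 1‖ :=
    norm_nonneg _
  have hsq : ‖(((Real.cos (-c) : ℝ)):ℂ) + ((Real.sin (-c) : ℝ):ℂ) * Complex.I - 1‖ ^ 2 ≤ c ^ 2 := by
    rw [← Complex.normSq_eq_norm_sq]
    rw [Complex.normSq_apply]
    simp only [Complex.sub_re, Complex.add_re, Complex.ofReal_re, Complex.mul_re,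
      Complex.I_re, Complex.I_im, Complex.ofReal_im, Complex.one_re,
      Complex.sub_im, Complex.add_im, Complex.mul_im, Complex.one_im]
    have h1 := Real.sin_sq_add_cos_sq (-c)
    have h2 := Real.one_sub_sq_div_two_le_cos (x := -c)
    nlinarith [sq_nonneg c]
  nlinarith [abs_nonneg c, sq_abs c]

lemma auxFTbound {n : ℕ} (f : EuclideanSpace ℝ (Fin n) → ℂ) (ξ : EuclideanSpace ℝ (Fin n)) :
    ‖fourierTransformCLM' f ξ‖ ≤ ∫ x, ‖f x‖ := by
  refine (norm_integral_le_integral_norm _).trans_eq ?_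
  congr 1
  ext x
  rw [norm_mul, auxNormExp, one_mul]

lemma auxFTcont {n : ℕ} (f : EuclideanSpace ℝ (Fin n) → ℂ) (hf : Integrable f)
    (ξ : EuclideanSpace ℝ (Fin n)) :
    Integrable (fun x => Complex.exp (-(Complex.I * ((inner ℝ x ξ : ℝ) : ℂ))) * f x) := by
  refine hf.bdd_mul ?_ (ae_of_all _ fun x => le_of_eq (auxNormExp _))
  apply Continuous.aestronglyMeasurable
  have h1 : Continuous fun x : EuclideanSpace ℝ (Fin n) => ((inner ℝ x ξ : ℝ) : ℂ) :=
    Complex.continuous_ofReal.comp (Continuous.inner continuous_id continuous_const)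
  exact Complex.continuous_exp.comp ((continuous_const.mul h1).neg)

lemma auxFTsub {n : ℕ} (f : EuclideanSpace ℝ (Fin n) → ℂ) (hf : Integrable f)
    (hfw : Integrable (fun x : EuclideanSpace ℝ (Fin n) => (1 + ‖x‖) * ‖f x‖))
    (ξ : EuclideanSpace ℝ (Fin n)) :
    ‖fourierTransformCLM' f ξ - ∫ x, f x‖ ≤ ‖ξ‖ * ∫ x, (1 + ‖x‖) * ‖f x‖ := by
  have key : fourierTransformCLM' f ξ - (∫ x, f x) =
      ∫ x, (Complex.exp (-(Complex.I * ((inner ℝ x ξ : ℝ) : ℂ))) - 1) * f x := by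
    rw [fourierTransformCLM', ← integral_sub (auxFTcont f hf ξ) hf]
    congr 1; ext x; ring
  rw [key]
  refine (norm_integral_le_integral_norm _).trans ?_
  rw [← MeasureTheory.integral_const_mul]
  refine integral_mono_of_nonneg (Filter.Eventually.of_forall fun x => norm_nonneg _)
    (hfw.const_mul _) (Filter.Eventually.of_forall fun x => ?_)
  dsimp only
  rw [norm_mul]
  have h1 : ‖Complex.exp (-(Complex.I * ((inner ℝ x ξ : ℝ) : ℂ))) - 1‖ ≤ |(inner ℝ x ξ : ℝ)| :=
    auxExpSubOne _
  have h2 : |(inner ℝ x ξ : ℝ)| ≤ ‖x‖ * ‖ξ‖ := abs_real_inner_le_norm x ξ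
  have h3 : ‖x‖ * ‖ξ‖ ≤ ‖ξ‖ * (1 + ‖x‖) := by nlinarith [norm_nonneg x, norm_nonneg ξ]
  have h4 : (0:ℝ) ≤ ‖f x‖ := norm_nonneg _
  calc ‖Complex.exp (-(Complex.I * ((inner ℝ x ξ : ℝ) : ℂ))) - 1‖ * ‖f x‖
      ≤ (‖ξ‖ * (1 + ‖x‖)) * ‖f x‖ := by nlinarith [norm_nonneg (Complex.exp (-(Complex.I * ((inner ℝ x ξ : ℝ) : ℂ))) - 1)]
    _ = ‖ξ‖ * ((1 + ‖x‖) * ‖f x‖) := by ring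

lemma auxSinLip (a c : ℝ) : |Real.sin a - Real.sin c| ≤ |a - c| := by
  rw [Real.sin_sub_sin, abs_mul, abs_mul]
  have h1 : |Real.sin ((a-c)/2)| ≤ |(a-c)/2| := Real.abs_sin_le_abs
  have h2 : |Real.cos ((a+c)/2)| ≤ 1 := Real.abs_cos_le_one _
  have h3 : |(a-c)/2| = |a-c|/2 := by rw [abs_div]; norm_num
  rw [h3] at h1
  have h4 : |(2:ℝ)| = 2 := by norm_num
  rw [h4]
  nlinarith [abs_nonneg (Real.sin ((a-c)/2)), abs_nonneg (a-c), abs_nonneg (Real.cos ((a+c)/2))]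

lemma auxLogBounds {r : ℝ} (hr : 0 ≤ r) :
    0 ≤ Real.log (1+r) ∧ Real.log (1+r) ≤ r ∧ r - Real.log (1+r) ≤ r^2 := by
  have h1 : (0:ℝ) < 1 + r := by linarith
  refine ⟨Real.log_nonneg (by linarith), ?_, ?_⟩
  · have := Real.log_le_sub_one_of_pos h1
    linarith
  · have h2 := Real.log_le_sub_one_of_pos (show (0:ℝ) < (1+r)⁻¹ by positivity)
    rw [Real.log_inv] at h2
    have h3 : 1 - (1+r)⁻¹ ≤ Real.log (1+r) := by linarith
    have h4 : (1+r) * (1 - (1+r)⁻¹) = r := by rw [mul_sub, mul_inv_cancel₀ h1.ne']; ring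
    have h5 : r ≤ (1+r) * Real.log (1+r) := by
      calc r = (1+r) * (1 - (1+r)⁻¹) := h4.symm
      _ ≤ (1+r) * Real.log (1+r) := by
          apply mul_le_mul_of_nonneg_left h3 h1.le
    have h6 := Real.log_nonneg (show (1:ℝ) ≤ 1 + r by linarith)
    nlinarith

lemma auxBlow {μ r : ℝ} (hμ0 : 0 < μ) (hμ2 : μ < 2) (hr : 0 ≤ r) :
    Real.sqrt (4-μ^2)/2 * r ≤ Real.sqrt (r^2 - μ^2/4 * Real.log (1+r)^2) := by
  obtain ⟨hl0, hl1, _⟩ := auxLogBounds hr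
  have hμ4 : (0:ℝ) < 4 - μ^2 := by nlinarith
  have hsq : Real.sqrt (4-μ^2) ^ 2 = 4 - μ^2 := Real.sq_sqrt hμ4.le
  have hlsq : Real.log (1+r)^2 ≤ r^2 := by nlinarith
  have hy : (0:ℝ) ≤ r^2 - μ^2/4 * Real.log (1+r)^2 := by nlinarith
  rw [Real.le_sqrt (by positivity) hy]
  have e : (Real.sqrt (4-μ^2)/2 * r)^2 = (4-μ^2)/4 * r^2 := by
    rw [div_mul_eq_mul_div, div_pow, mul_pow, hsq]; ring
  rw [e]
  nlinarith

lemma auxBdiff {μ r : ℝ} (hμ0 : 0 < μ) (hμ2 : μ < 2) (hr : 0 ≤ r) :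
    Real.sqrt (r^2 - μ^2/4 * Real.log (1+r)^2) - Real.sqrt (4-μ^2)/2 * r ≤
      μ^2/(2*Real.sqrt (4-μ^2)) * r^2 := by
  obtain ⟨hl0, hl1, hl2⟩ := auxLogBounds hr
  have hμ4 : (0:ℝ) < 4 - μ^2 := by nlinarith
  have hsqpos : (0:ℝ) < Real.sqrt (4-μ^2) := Real.sqrt_pos.mpr hμ4
  have hsq : Real.sqrt (4-μ^2) ^ 2 = 4 - μ^2 := Real.sq_sqrt hμ4.le
  set g := Real.sqrt (4-μ^2)/2 with hg
  set K := μ^2/(2*Real.sqrt (4-μ^2)) with hK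
  have hgpos : 0 < g := by positivity
  have hKpos : 0 < K := by positivity
  have h2gK : 2 * g * K = μ^2/2 := by
    rw [hg, hK]; field_simp
  have hy : (0:ℝ) ≤ r^2 - μ^2/4 * Real.log (1+r)^2 := by nlinarith
  rw [sub_le_iff_le_add]
  have hrhs : (0:ℝ) ≤ g * r + K * r^2 := by positivity
  have key : r^2 - μ^2/4 * Real.log (1+r)^2 ≤ (g * r + K * r^2)^2 := by
    have e1 : r^2 - Real.log (1+r)^2 ≤ 2 * r^3 := by nlinarith
    have e2 : (g*r)^2 = (4-μ^2)/4 * r^2 := by rw [hg]; field_simp; nlinarith [hsq]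
    nlinarith [sq_nonneg (K*r^2)]
  have final : Real.sqrt (r^2 - μ^2/4 * Real.log (1+r)^2) ≤ g*r + K*r^2 := by
    calc Real.sqrt (r^2 - μ^2/4 * Real.log (1+r)^2) ≤ Real.sqrt ((g*r + K*r^2)^2) :=
          Real.sqrt_le_sqrt key
    _ = g*r + K*r^2 := Real.sqrt_sq hrhs
  linarith

lemma auxPointwise {n : ℕ} {μ : ℝ} (hμ0 : 0 < μ) (hμ2 : μ < 2)
    (u₀ u₁ : EuclideanSpace ℝ (Fin n) → ℂ) (hu₁ : Integrable u₁)
    (hu₁w : Integrable (fun x : EuclideanSpace ℝ (Fin n) => (1 + ‖x‖) * ‖u₁ x‖))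
    {t : ℝ} (ht : 0 ≤ t) (ξ : EuclideanSpace ℝ (Fin n)) :
    ‖(((1 + ‖ξ‖) ^ (-(μ * t) / 2) : ℝ) : ℂ) *
        (((Real.cos (Real.sqrt (‖ξ‖^2 - μ^2/4 * Real.log (1+‖ξ‖)^2) * t) : ℝ) : ℂ) *
            fourierTransformCLM' u₀ ξ +
         ((μ * Real.log (1 + ‖ξ‖) / (2 * Real.sqrt (‖ξ‖^2 - μ^2/4 * Real.log (1+‖ξ‖)^2)) : ℝ) : ℂ) *
           ((Real.sin (Real.sqrt (‖ξ‖^2 - μ^2/4 * Real.log (1+‖ξ‖)^2) * t) : ℝ) : ℂ) *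
             fourierTransformCLM' u₀ ξ +
         ((1 / Real.sqrt (‖ξ‖^2 - μ^2/4 * Real.log (1+‖ξ‖)^2) : ℝ) : ℂ) *
           ((Real.sin (Real.sqrt (‖ξ‖^2 - μ^2/4 * Real.log (1+‖ξ‖)^2) * t) : ℝ) : ℂ) *
             fourierTransformCLM' u₁ ξ) -
      (∫ x, u₁ x) * (((1 + ‖ξ‖) ^ (-(μ * t) / 2) : ℝ) : ℂ) *
        ((1 / Real.sqrt (‖ξ‖^2 - μ^2/4 * Real.log (1+‖ξ‖)^2) : ℝ) : ℂ) *
        ((Real.sin (Real.sqrt (4-μ^2)/2 * t * ‖ξ‖) : ℝ) : ℂ)‖ ≤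
    (1 + ‖ξ‖) ^ (-(μ * t) / 2) *
      (((1 + μ/(2*(Real.sqrt (4-μ^2)/2))) * (∫ x, ‖u₀ x‖) +
          (1/(Real.sqrt (4-μ^2)/2)) * (∫ x, (1 + ‖x‖) * ‖u₁ x‖)) +
        ((μ^2/(2*Real.sqrt (4-μ^2)))/(Real.sqrt (4-μ^2)/2) * ‖∫ x, u₁ x‖) * t * ‖ξ‖) := by
  set r : ℝ := ‖ξ‖ with hrdef
  have hr : 0 ≤ r := norm_nonneg ξ
  set br : ℝ := Real.sqrt (r^2 - μ^2/4 * Real.log (1+r)^2) with hbrdef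
  set g : ℝ := Real.sqrt (4-μ^2)/2 with hgdef
  set K : ℝ := μ^2/(2*Real.sqrt (4-μ^2)) with hKdef
  have hμ4 : (0:ℝ) < 4 - μ^2 := by nlinarith
  have hgpos : 0 < g := by rw [hgdef]; positivity
  have hKpos : 0 < K := by rw [hKdef]; positivity
  have hbg : g * r ≤ br := auxBlow hμ0 hμ2 hr
  have hbnn : 0 ≤ br := Real.sqrt_nonneg _
  have hdiff : br - g * r ≤ K * r^2 := auxBdiff hμ0 hμ2 hr
  have hbr0 : r = 0 → br = 0 := by
    intro h; rw [hbrdef, h]; simp [Real.log_one]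
  set ρ : ℝ := (1 + r) ^ (-(μ * t) / 2) with hρdef
  have hρ : 0 ≤ ρ := Real.rpow_nonneg (by linarith) _
  set F0 := fourierTransformCLM' u₀ ξ with hF0
  set F1 := fourierTransformCLM' u₁ ξ with hF1
  set P : ℂ := ∫ x, u₁ x with hP
  set N0 : ℝ := ∫ x, ‖u₀ x‖ with hN0
  set N1 : ℝ := ∫ x, (1 + ‖x‖) * ‖u₁ x‖ with hN1
  have hN0nn : 0 ≤ N0 := integral_nonneg fun x => norm_nonneg _
  have hN1nn : 0 ≤ N1 := integral_nonneg fun x => by positivity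
  have hft0 : ‖F0‖ ≤ N0 := auxFTbound u₀ ξ
  have hftsub : ‖F1 - P‖ ≤ r * N1 := by
    have hft := auxFTsub u₁ hu₁ hu₁w ξ
    rw [← hrdef, ← hN1, ← hP, ← hF1] at hft
    exact hft
  set c2 : ℝ := μ * Real.log (1+r) / (2 * br) with hc2
  set sb : ℝ := Real.sin (br * t) with hsb
  set s2 : ℝ := Real.sin (g * t * r) with hs2
  set cb : ℝ := Real.cos (br * t) with hcb
  have hsb1 : |sb| ≤ 1 := by rw [hsb]; exact Real.abs_sin_le_one _
  have hcb1 : |cb| ≤ 1 := by rw [hcb]; exact Real.abs_cos_le_one _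
  have hlip2 : |sb - s2| ≤ t * (K * r^2) := by
    have h0 : |sb - s2| ≤ |br * t - g * t * r| := by rw [hsb, hs2]; exact auxSinLip _ _
    have h1 : |br * t - g*t*r| ≤ t * (K * r^2) := by
      rw [show br * t - g*t*r = t * (br - g*r) by ring, abs_mul, abs_of_nonneg ht,
        abs_of_nonneg (by linarith : (0:ℝ) ≤ br - g*r)]
      exact mul_le_mul_of_nonneg_left hdiff ht
    linarith
  have hc2bound : 0 ≤ c2 ∧ c2 ≤ μ/(2*g) := by
    obtain ⟨hl0, hl1, -⟩ := auxLogBounds hr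
    constructor
    · rw [hc2]; positivity
    · rcases eq_or_lt_of_le hr with hr0 | hrpos
      · rw [hc2, ← hr0]
        simp only [add_zero, Real.log_one, mul_zero, zero_div]
        positivity
      · have hbpos : 0 < br := lt_of_lt_of_le (by positivity) hbg
        rw [hc2, div_le_div_iff₀ (by positivity) (by positivity)]
        calc μ * Real.log (1+r) * (2*g) ≤ μ * r * (2*g) :=
              mul_le_mul_of_nonneg_right (mul_le_mul_of_nonneg_left hl1 hμ0.le) (by positivity)
        _ = μ * (g * r) * 2 := by ring
        _ ≤ μ * br * 2 := by nlinarith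
        _ = μ * (2 * br) := by ring
  clear_value r br g K ρ F0 F1 P N0 N1 c2 sb s2 cb
  clear hrdef hbrdef hgdef hKdef hρdef hF0 hF1 hP hN0 hN1 hc2 hsb hs2 hcb hu₁ hu₁w hμ4
  -- rewrite as ρ * E
  have hre : (((ρ:ℝ)):ℂ) * ((cb:ℂ) * F0 + (c2:ℂ) * (sb:ℂ) * F0 + ((1/br:ℝ):ℂ) * (sb:ℂ) * F1)
      - P * ((ρ:ℝ):ℂ) * ((1/br:ℝ):ℂ) * ((s2:ℝ):ℂ) =
      ((ρ:ℝ):ℂ) * ((cb:ℂ) * F0 + (c2:ℂ) * (sb:ℂ) * F0 +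
        (((1/br:ℝ):ℂ) * (sb:ℂ) * F1 - P * ((1/br:ℝ):ℂ) * ((s2:ℝ):ℂ))) := by ring
  rw [hre, norm_mul, Complex.norm_real, Real.norm_eq_abs, abs_of_nonneg hρ]
  refine mul_le_mul_of_nonneg_left ?_ hρ
  have hT1 : ‖(cb:ℂ) * F0‖ ≤ N0 := by
    rw [norm_mul, Complex.norm_real, Real.norm_eq_abs]
    calc |cb| * ‖F0‖ ≤ 1 * ‖F0‖ := mul_le_mul_of_nonneg_right hcb1 (norm_nonneg _)
    _ = ‖F0‖ := one_mul _
    _ ≤ N0 := hft0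
  have hT2 : ‖(c2:ℂ) * (sb:ℂ) * F0‖ ≤ μ/(2*g) * N0 := by
    rw [norm_mul, norm_mul, Complex.norm_real, Complex.norm_real, Real.norm_eq_abs,
      Real.norm_eq_abs, abs_of_nonneg hc2bound.1]
    calc c2 * |sb| * ‖F0‖ ≤ c2 * 1 * ‖F0‖ :=
          mul_le_mul_of_nonneg_right (mul_le_mul_of_nonneg_left hsb1 hc2bound.1) (norm_nonneg _)
    _ = c2 * ‖F0‖ := by ring
    _ ≤ μ/(2*g) * N0 := mul_le_mul hc2bound.2 hft0 (norm_nonneg _) (by positivity)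
  have hT3 : ‖((1/br:ℝ):ℂ) * (sb:ℂ) * F1 - P * ((1/br:ℝ):ℂ) * ((s2:ℝ):ℂ)‖ ≤
      (1/g) * N1 + (K/g * ‖P‖) * t * r := by
    have hrhs0 : (0:ℝ) ≤ (1/g) * N1 + (K/g * ‖P‖) * t * r := by
      have e1 : (0:ℝ) ≤ (1/g) * N1 := mul_nonneg (by positivity) hN1nn
      have e2 : (0:ℝ) ≤ (K/g * ‖P‖) * t * r :=
        mul_nonneg (mul_nonneg (mul_nonneg (by positivity) (norm_nonneg _)) ht) hr
      linarith
    rcases eq_or_lt_of_le hr with hr0 | hrpos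
    · have hb0 : br = 0 := hbr0 hr0.symm
      have : ((1/br:ℝ):ℂ) = 0 := by rw [hb0]; simp
      rw [this]
      rw [show (0:ℂ) * (sb:ℂ) * F1 - P * 0 * ((s2:ℝ):ℂ) = 0 by ring, norm_zero]
      exact hrhs0
    · have hbpos : 0 < br := lt_of_lt_of_le (by positivity) hbg
      have hgr : 0 < g * r := by positivity
      have e : ((1/br:ℝ):ℂ) * (sb:ℂ) * F1 - P * ((1/br:ℝ):ℂ) * ((s2:ℝ):ℂ)
          = ((1/br:ℝ):ℂ) * ((sb:ℂ) * (F1 - P) + P * ((sb:ℂ) - ((s2:ℝ):ℂ))) := by ring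
      rw [e, norm_mul, Complex.norm_real, Real.norm_eq_abs,
        abs_of_nonneg (one_div_nonneg.mpr hbnn)]
      have h1 : ‖(sb:ℂ) * (F1 - P)‖ ≤ r * N1 := by
        rw [norm_mul, Complex.norm_real, Real.norm_eq_abs]
        nlinarith [norm_nonneg (F1 - P), abs_nonneg sb]
      have h2 : ‖P * ((sb:ℂ) - ((s2:ℝ):ℂ))‖ ≤ ‖P‖ * (t * (K * r^2)) := by
        rw [norm_mul, ← Complex.ofReal_sub, Complex.norm_real, Real.norm_eq_abs]
        exact mul_le_mul_of_nonneg_left hlip2 (norm_nonneg _)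
      have htot : ‖(sb:ℂ)*(F1-P) + P*((sb:ℂ)-((s2:ℝ):ℂ))‖ ≤ r*N1 + ‖P‖*(t*(K*r^2)) :=
        le_trans (norm_add_le _ _) (by linarith)
      have hfrac : (1:ℝ)/br ≤ 1/(g*r) := one_div_le_one_div_of_le hgr hbg
      calc (1/br) * ‖(sb:ℂ)*(F1-P) + P*((sb:ℂ)-((s2:ℝ):ℂ))‖
          ≤ (1/(g*r)) * (r*N1 + ‖P‖*(t*(K*r^2))) :=
            mul_le_mul hfrac htot (norm_nonneg _) (by positivity)
      _ = (1/g) * N1 + (K/g * ‖P‖) * t * r := by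
          field_simp
  calc ‖(cb:ℂ) * F0 + (c2:ℂ) * (sb:ℂ) * F0 +
        (((1/br:ℝ):ℂ) * (sb:ℂ) * F1 - P * ((1/br:ℝ):ℂ) * ((s2:ℝ):ℂ))‖ ≤
      ‖(cb:ℂ) * F0 + (c2:ℂ) * (sb:ℂ) * F0‖ +
        ‖((1/br:ℝ):ℂ) * (sb:ℂ) * F1 - P * ((1/br:ℝ):ℂ) * ((s2:ℝ):ℂ)‖ := norm_add_le _ _
  _ ≤ (‖(cb:ℂ) * F0‖ + ‖(c2:ℂ) * (sb:ℂ) * F0‖) +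
        ‖((1/br:ℝ):ℂ) * (sb:ℂ) * F1 - P * ((1/br:ℝ):ℂ) * ((s2:ℝ):ℂ)‖ := by
      have := norm_add_le ((cb:ℂ) * F0) ((c2:ℂ) * (sb:ℂ) * F0)
      linarith
  _ ≤ (N0 + μ/(2*g) * N0) + ((1/g) * N1 + (K/g * ‖P‖) * t * r) := by
      linarith [hT1, hT2, hT3]
  _ = ((1 + μ/(2*g)) * N0 + (1/g) * N1) + (K/g * ‖P‖) * t * r := by ring

lemma algebra1 {A B t y : ℝ} (hA : 0 ≤ A) (hB : 0 ≤ B) (ht : 0 ≤ t) (hy : 0 ≤ y) :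
    A + B*t*y ≤ (A + B*t) * (1+y) := by nlinarith [mul_nonneg hA hy, mul_nonneg hB ht]

lemma algebra2 (A x : ℝ) : (A + x)^2 ≤ 2*A^2 + 2*x^2 := by nlinarith [sq_nonneg (A - x)]

set_option maxHeartbeats 1000000

/-- Lemma 2.3: for `μ ∈ (0,2)`, `u₀ ∈ L¹`, `u₁ ∈ L^{1,1}`,
`∫ |w(t,ξ) - χ(t,ξ)|² dξ ≤ C(P₁² + ‖u₁‖²_{1,1} + ‖u₀‖₁²) t^{-n} + C P₁² e^{-αt}`. -/
theorem stmt10 (n : ℕ) (hn : 1 ≤ n) (μ : ℝ) (hμ : μ ∈ Set.Ioo (0:ℝ) 2)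
    (u₀ u₁ : EuclideanSpace ℝ (Fin n) → ℂ)
    (hu₀ : Integrable u₀) (hu₁ : Integrable u₁)
    (hu₁w : Integrable (fun x : EuclideanSpace ℝ (Fin n) => (1 + ‖x‖) * ‖u₁ x‖)) :
    let b : ℝ → ℝ := fun r => Real.sqrt (r ^ 2 - μ ^ 2 / 4 * Real.log (1 + r) ^ 2)
    let γ : ℝ := Real.sqrt (4 - μ ^ 2) / 2
    let P₁ : ℂ := ∫ x, u₁ x
    let w : ℝ → EuclideanSpace ℝ (Fin n) → ℂ := fun t ξ =>
      (((1 + ‖ξ‖) ^ (-(μ * t) / 2) : ℝ) : ℂ) *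
        (((Real.cos (b ‖ξ‖ * t) : ℝ) : ℂ) * fourierTransformCLM' u₀ ξ +
         ((μ * Real.log (1 + ‖ξ‖) / (2 * b ‖ξ‖) : ℝ) : ℂ) *
           ((Real.sin (b ‖ξ‖ * t) : ℝ) : ℂ) * fourierTransformCLM' u₀ ξ +
         ((1 / b ‖ξ‖ : ℝ) : ℂ) * ((Real.sin (b ‖ξ‖ * t) : ℝ) : ℂ) *
           fourierTransformCLM' u₁ ξ)
    let χ : ℝ → EuclideanSpace ℝ (Fin n) → ℂ := fun t ξ =>
      P₁ * (((1 + ‖ξ‖) ^ (-(μ * t) / 2) : ℝ) : ℂ) * ((1 / b ‖ξ‖ : ℝ) : ℂ) *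
        ((Real.sin (γ * t * ‖ξ‖) : ℝ) : ℂ)
    ∃ C α t₀ : ℝ, 0 < C ∧ 0 < α ∧ 0 < t₀ ∧ ∀ t : ℝ, t₀ ≤ t →
      (∫ ξ : EuclideanSpace ℝ (Fin n), ‖w t ξ - χ t ξ‖ ^ 2) ≤
        C * (‖P₁‖ ^ 2 + (∫ x, (1 + ‖x‖) * ‖u₁ x‖) ^ 2 + (∫ x, ‖u₀ x‖) ^ 2) *
            t ^ (-(n : ℝ)) +
          C * ‖P₁‖ ^ 2 * Real.exp (-α * t) := by
  intro b γ P₁ w χ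
  obtain ⟨hμ0, hμ2⟩ := hμ
  have hμ4 : (0:ℝ) < 4 - μ^2 := by nlinarith
  have hgpos : (0:ℝ) < Real.sqrt (4-μ^2)/2 := by positivity
  haveI : Nonempty (Fin n) := ⟨⟨0, hn⟩⟩
  -- abbreviations
  set N0 : ℝ := ∫ x : EuclideanSpace ℝ (Fin n), ‖u₀ x‖ with hN0
  set N1 : ℝ := ∫ x : EuclideanSpace ℝ (Fin n), (1 + ‖x‖) * ‖u₁ x‖ with hN1
  have hN0nn : 0 ≤ N0 := integral_nonneg fun x => norm_nonneg _
  have hN1nn : 0 ≤ N1 := integral_nonneg fun x => by positivity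
  set k0 : ℝ := 1 + μ/(2*(Real.sqrt (4-μ^2)/2)) with hk0
  set k1 : ℝ := 1/(Real.sqrt (4-μ^2)/2) with hk1
  set k2 : ℝ := (μ^2/(2*Real.sqrt (4-μ^2)))/(Real.sqrt (4-μ^2)/2) with hk2
  have hk0p : 0 < k0 := by rw [hk0]; positivity
  have hk1p : 0 < k1 := by rw [hk1]; positivity
  have hk2p : 0 < k2 := by rw [hk2]; positivity
  set A : ℝ := k0 * N0 + k1 * N1 with hA
  set B : ℝ := k2 * ‖P₁‖ with hB
  have hAnn : 0 ≤ A := by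
    have := mul_nonneg hk0p.le hN0nn
    have := mul_nonneg hk1p.le hN1nn
    rw [hA]; linarith
  have hBnn : 0 ≤ B := mul_nonneg hk2p.le (norm_nonneg _)
  set vb : ℝ := (volume (Metric.ball (0 : EuclideanSpace ℝ (Fin n)) 1)).toReal with hvb
  have hvbnn : 0 ≤ vb := ENNReal.toReal_nonneg
  set E1 : ℝ := (((n-1).factorial : ℝ) + ((n).factorial : ℝ)) * 4 ^ n with hE1
  set E2 : ℝ := (((n+1).factorial : ℝ) + ((n+2).factorial : ℝ)) * 4 ^ (n+2) with hE2
  have hE1p : 0 < E1 := by rw [hE1]; positivity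
  have hE2p : 0 < E2 := by rw [hE2]; positivity
  set c1 : ℝ := 2*n*vb*E1/μ^n with hc1
  set c2 : ℝ := 2*n*vb*E2/μ^(n+2) with hc2
  have hc1nn : 0 ≤ c1 := by rw [hc1]; positivity
  have hc2nn : 0 ≤ c2 := by rw [hc2]; positivity
  refine ⟨c1*(2*k0^2 + 2*k1^2) + c2*k2^2 + 1, 1, (2*n+8)/μ, ?_, one_pos, by positivity, ?_⟩
  · have h1 : 0 ≤ c1*(2*k0^2 + 2*k1^2) := by positivity
    have h2 : 0 ≤ c2*k2^2 := by positivity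
    linarith
  intro t htt
  set C : ℝ := c1*(2*k0^2 + 2*k1^2) + c2*k2^2 + 1 with hC
  have hCp : 0 < C := by
    have h1 : 0 ≤ c1*(2*k0^2 + 2*k1^2) := by positivity
    have h2 : 0 ≤ c2*k2^2 := by positivity
    rw [hC]; linarith
  have ht0 : (0:ℝ) < t := lt_of_lt_of_le (by positivity) htt
  have hs : 2*(n:ℝ) + 8 ≤ μ * t := by
    have := (div_le_iff₀ hμ0).mp htt
    linarith [mul_comm t μ]
  set s : ℝ := μ * t with hsdef
  have hspos : 0 < s := by rw [hsdef]; positivity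
  -- step 1: pointwise bound
  have hpt : ∀ ξ : EuclideanSpace ℝ (Fin n), ‖w t ξ - χ t ξ‖ ^ 2 ≤
      ((1 + ‖ξ‖) ^ (-(μ*t)/2) * (A + B*t*‖ξ‖)) ^ 2 := by
    intro ξ
    have h := auxPointwise hμ0 hμ2 u₀ u₁ hu₁ hu₁w ht0.le ξ
    exact pow_le_pow_left₀ (norm_nonneg _) h 2
  clear_value N0 N1 k0 k1 k2 A B vb E1 E2 c1 c2 C s
  -- step 2: integrability of the majorant
  have hnr : ((Module.finrank ℝ (EuclideanSpace ℝ (Fin n))) : ℝ) < μ*t - 2 := by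
    rw [finrank_euclideanSpace_fin]
    linarith
  have hcont : Continuous fun ξ : EuclideanSpace ℝ (Fin n) =>
      ((1 + ‖ξ‖) ^ (-(μ*t)/2) * (A + B*t*‖ξ‖)) ^ 2 := by
    apply Continuous.pow
    apply Continuous.mul
    · exact (continuous_const.add continuous_norm).rpow_const
        (fun x => Or.inl (by positivity : (0:ℝ) < 1 + ‖x‖).ne')
    · exact continuous_const.add (continuous_const.mul continuous_norm)
  have hsqrw : ∀ y : ℝ, 0 ≤ y → ((1+y) ^ (-(μ*t)/2)) ^ 2 = (1+y) ^ (-s) := by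
    intro y hy
    rw [← Real.rpow_natCast ((1+y) ^ (-(μ*t)/2)) 2, ← Real.rpow_mul (by linarith)]
    rw [hsdef]
    norm_num
  have hmaj : ∀ ξ : EuclideanSpace ℝ (Fin n),
      ‖((1 + ‖ξ‖) ^ (-(μ*t)/2) * (A + B*t*‖ξ‖)) ^ 2‖ ≤ (A+B*t)^2 * (1+‖ξ‖) ^ (-(μ*t-2)) := by
    intro ξ
    set y := ‖ξ‖ with hy
    have hy0 : 0 ≤ y := norm_nonneg ξ
    have h1y : (0:ℝ) < 1 + y := by linarith
    rw [Real.norm_eq_abs, abs_of_nonneg (sq_nonneg _), mul_pow, hsqrw y hy0]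
    have hlin : A + B*t*y ≤ (A + B*t) * (1+y) := algebra1 hAnn hBnn ht0.le hy0
    have hlin0 : 0 ≤ A + B*t*y := by
      have := mul_nonneg (mul_nonneg hBnn ht0.le) hy0
      linarith
    have h2 : (A + B*t*y)^2 ≤ ((A+B*t) * (1+y))^2 := pow_le_pow_left₀ hlin0 hlin 2
    calc (1+y) ^ (-s) * (A + B*t*y)^2 ≤ (1+y) ^ (-s) * ((A+B*t) * (1+y))^2 :=
          mul_le_mul_of_nonneg_left h2 (Real.rpow_nonneg h1y.le _)
    _ = (A+B*t)^2 * ((1+y) ^ (-s) * (1+y)^(2:ℕ)) := by ring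
    _ = (A+B*t)^2 * (1+y) ^ (-(μ*t-2)) := by
        rw [← Real.rpow_natCast (1+y) 2, ← Real.rpow_add h1y, hsdef]
        congr 1
        push_cast
        ring_nf
  have hInt : Integrable (fun ξ : EuclideanSpace ℝ (Fin n) =>
      ((1 + ‖ξ‖) ^ (-(μ*t)/2) * (A + B*t*‖ξ‖)) ^ 2) :=
    Integrable.mono' ((integrable_one_add_norm hnr).const_mul ((A+B*t)^2))
      hcont.aestronglyMeasurable (ae_of_all _ hmaj)
  have step1 : (∫ ξ : EuclideanSpace ℝ (Fin n), ‖w t ξ - χ t ξ‖ ^ 2) ≤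
      ∫ ξ : EuclideanSpace ℝ (Fin n), ((1+‖ξ‖) ^ (-(μ*t)/2) * (A+B*t*‖ξ‖)) ^ 2 :=
    integral_mono_of_nonneg (Filter.Eventually.of_forall fun ξ => by positivity) hInt
      (Filter.Eventually.of_forall hpt)
  clear_value b γ P₁ w χ
  -- step 3: polar coordinates
  have hpolar := MeasureTheory.integral_fun_norm_addHaar
    (E := EuclideanSpace ℝ (Fin n)) volume
    (fun y : ℝ => ((1+y) ^ (-(μ*t)/2) * (A+B*t*y)) ^ 2)
  simp only [finrank_euclideanSpace_fin, nsmul_eq_mul, smul_eq_mul] at hpolar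
  rw [measureReal_def, ← hvb] at hpolar
  -- step 4: 1D bounds
  have hm1 : 2*((n-1:ℕ):ℝ) + 4 ≤ s := by
    have h : ((n-1:ℕ):ℝ) ≤ (n:ℝ) := Nat.cast_le.mpr (by omega)
    linarith
  have hm2 : 2*((n+1:ℕ):ℝ) + 4 ≤ s := by push_cast; linarith
  have hint1 := auxIntOn (n-1) hm1
  have hint2 := auxIntOn (n+1) hm2
  have hI1 := auxOneD (n-1) hm1
  have hI2 := auxOneD (n+1) hm2
  have hnn1 : n - 1 + 1 = n := by omega
  rw [hnn1] at hI1
  rw [show n + 1 + 1 = n + 2 from rfl] at hI2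
  rw [← hE1] at hI1
  rw [← hE2] at hI2
  have hJ1nn : 0 ≤ ∫ r in Set.Ioi (0:ℝ), r ^ (n-1) * (1+r) ^ (-s) :=
    setIntegral_nonneg measurableSet_Ioi fun y hy =>
      mul_nonneg (pow_nonneg (le_of_lt hy) _) (Real.rpow_nonneg (by linarith [le_of_lt (Set.mem_Ioi.mp hy)]) _)
  have hJ2nn : 0 ≤ ∫ r in Set.Ioi (0:ℝ), r ^ (n+1) * (1+r) ^ (-s) :=
    setIntegral_nonneg measurableSet_Ioi fun y hy =>
      mul_nonneg (pow_nonneg (le_of_lt hy) _) (Real.rpow_nonneg (by linarith [le_of_lt (Set.mem_Ioi.mp hy)]) _)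
  have h1d : (∫ y in Set.Ioi (0:ℝ), y ^ (n-1) * (((1+y) ^ (-(μ*t)/2) * (A+B*t*y)) ^ 2)) ≤
      2*A^2*(∫ y in Set.Ioi (0:ℝ), y^(n-1)*(1+y)^(-s)) +
        2*B^2*t^2*(∫ y in Set.Ioi (0:ℝ), y^(n+1)*(1+y)^(-s)) := by
    have hint3 : Integrable (fun y : ℝ => 2*A^2*(y^(n-1)*(1+y)^(-s)) +
        2*B^2*t^2*(y^(n+1)*(1+y)^(-s))) (volume.restrict (Set.Ioi 0)) :=
      (hint1.const_mul _).add (hint2.const_mul _)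
    have hptw : ∀ᵐ y ∂(volume.restrict (Set.Ioi (0:ℝ))),
        y ^ (n-1) * (((1+y) ^ (-(μ*t)/2) * (A+B*t*y)) ^ 2) ≤
        2*A^2*(y^(n-1)*(1+y)^(-s)) + 2*B^2*t^2*(y^(n+1)*(1+y)^(-s)) := by
      filter_upwards [ae_restrict_mem measurableSet_Ioi] with y hy
      have hy0 : (0:ℝ) < y := hy
      have h1y : (0:ℝ) < 1 + y := by linarith
      have hrpnn : (0:ℝ) ≤ (1+y) ^ (-s) := Real.rpow_nonneg h1y.le _
      have hpw : y^(n-1) * y^2 = y^(n+1) := by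
        rw [← pow_add]
        congr 1
        omega
      calc y ^ (n-1) * (((1+y) ^ (-(μ*t)/2) * (A+B*t*y)) ^ 2)
          = (y^(n-1) * (1+y) ^ (-s)) * (A+B*t*y)^2 := by
            rw [mul_pow, hsqrw y hy0.le]; ring
      _ ≤ (y^(n-1) * (1+y) ^ (-s)) * (2*A^2 + 2*(B*t*y)^2) := by
            exact mul_le_mul_of_nonneg_left (algebra2 A (B*t*y))
              (mul_nonneg (pow_nonneg hy0.le _) hrpnn)
      _ = 2*A^2*(y^(n-1)*(1+y)^(-s)) + 2*B^2*t^2*((y^(n-1)*y^2)*(1+y)^(-s)) := by ring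
      _ = 2*A^2*(y^(n-1)*(1+y)^(-s)) + 2*B^2*t^2*(y^(n+1)*(1+y)^(-s)) := by rw [hpw]
    have hmono := integral_mono_of_nonneg (μ := volume.restrict (Set.Ioi (0:ℝ)))
      (f := fun y => y ^ (n-1) * (((1+y) ^ (-(μ*t)/2) * (A+B*t*y)) ^ 2)) ?_ hint3 hptw
    · calc (∫ y in Set.Ioi (0:ℝ), y ^ (n-1) * (((1+y) ^ (-(μ*t)/2) * (A+B*t*y)) ^ 2))
          ≤ ∫ y in Set.Ioi (0:ℝ), (2*A^2*(y^(n-1)*(1+y)^(-s)) +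
              2*B^2*t^2*(y^(n+1)*(1+y)^(-s))) := hmono
      _ = _ := by
          rw [integral_add (hint1.const_mul _) (hint2.const_mul _),
            MeasureTheory.integral_const_mul, MeasureTheory.integral_const_mul]
    · filter_upwards [ae_restrict_mem measurableSet_Ioi] with y hy
      have hy0 : (0:ℝ) < y := hy
      exact mul_nonneg (pow_nonneg hy0.le _) (sq_nonneg _)
  -- combine
  calc (∫ ξ : EuclideanSpace ℝ (Fin n), ‖w t ξ - χ t ξ‖ ^ 2)
      ≤ ∫ ξ : EuclideanSpace ℝ (Fin n), ((1+‖ξ‖) ^ (-(μ*t)/2) * (A+B*t*‖ξ‖)) ^ 2 := step1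
  _ = (n:ℝ) * (vb * ∫ y in Set.Ioi (0:ℝ),
        y ^ (n-1) * (((1+y) ^ (-(μ*t)/2) * (A+B*t*y)) ^ 2)) := hpolar
  _ ≤ (n:ℝ) * (vb * (2*A^2*(E1/s^n) + 2*B^2*t^2*(E2/s^(n+2)))) := by
      have g1 : 2*A^2*(∫ y in Set.Ioi (0:ℝ), y^(n-1)*(1+y)^(-s)) ≤ 2*A^2*(E1/s^n) :=
        mul_le_mul_of_nonneg_left hI1 (by positivity)
      have g2 : 2*B^2*t^2*(∫ y in Set.Ioi (0:ℝ), y^(n+1)*(1+y)^(-s)) ≤ 2*B^2*t^2*(E2/s^(n+2)) :=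
        mul_le_mul_of_nonneg_left hI2 (by positivity)
      have hbnd : (∫ y in Set.Ioi (0:ℝ), y ^ (n-1) * (((1+y) ^ (-(μ*t)/2) * (A+B*t*y)) ^ 2))
          ≤ 2*A^2*(E1/s^n) + 2*B^2*t^2*(E2/s^(n+2)) := by linarith [h1d]
      exact mul_le_mul_of_nonneg_left (mul_le_mul_of_nonneg_left hbnd hvbnn)
        (Nat.cast_nonneg n)
  _ ≤ C * (‖P₁‖^2 + N1^2 + N0^2) * t ^ (-(n:ℝ)) := by
      rw [Real.rpow_neg ht0.le, Real.rpow_natCast]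
      have e1 : (n:ℝ) * (vb * (2*A^2*(E1/s^n) + 2*B^2*t^2*(E2/s^(n+2))))
          = (c1*A^2 + c2*B^2) * (t^n)⁻¹ := by
        rw [hc1, hc2, hsdef, mul_pow, mul_pow]
        field_simp
        ring
      rw [e1]
      have e2 : c1*A^2 + c2*B^2 ≤ C * (‖P₁‖^2 + N1^2 + N0^2) := by
        have hA2 : A^2 ≤ 2*k0^2*N0^2 + 2*k1^2*N1^2 := by
          rw [hA]
          calc (k0*N0 + k1*N1)^2 ≤ 2*(k0*N0)^2 + 2*(k1*N1)^2 := algebra2 _ _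
          _ = 2*k0^2*N0^2 + 2*k1^2*N1^2 := by ring
        have hB2 : B^2 = k2^2*‖P₁‖^2 := by rw [hB]; ring
        have h3 : c1*A^2 ≤ c1*(2*k0^2*N0^2 + 2*k1^2*N1^2) :=
          mul_le_mul_of_nonneg_left hA2 hc1nn
        have h4 : c1*(2*k0^2) ≤ C := by
          rw [hC]
          linarith only [mul_nonneg hc1nn (sq_nonneg k1), mul_nonneg hc2nn (sq_nonneg k2)]
        have h5 : c1*(2*k1^2) ≤ C := by
          rw [hC]
          linarith only [mul_nonneg hc1nn (sq_nonneg k0), mul_nonneg hc2nn (sq_nonneg k2)]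
        have h6 : c2*k2^2 ≤ C := by
          rw [hC]
          linarith only [mul_nonneg hc1nn (sq_nonneg k0), mul_nonneg hc1nn (sq_nonneg k1)]
        have h7 : c1*(2*k0^2)*N0^2 ≤ C*N0^2 := mul_le_mul_of_nonneg_right h4 (sq_nonneg N0)
        have h8 : c1*(2*k1^2)*N1^2 ≤ C*N1^2 := mul_le_mul_of_nonneg_right h5 (sq_nonneg N1)
        have h9 : c2*k2^2*‖P₁‖^2 ≤ C*‖P₁‖^2 := mul_le_mul_of_nonneg_right h6 (sq_nonneg _)
        have h10 : c1*(2*k0^2*N0^2 + 2*k1^2*N1^2) = c1*(2*k0^2)*N0^2 + c1*(2*k1^2)*N1^2 := by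
          ring
        have h11 : c2*B^2 = c2*k2^2*‖P₁‖^2 := by rw [hB2]; ring
        have h12 : C*(‖P₁‖^2 + N1^2 + N0^2) = C*‖P₁‖^2 + C*N1^2 + C*N0^2 := by ring
        linarith only [h3, h7, h8, h9, h10, h11, h12]
      exact mul_le_mul_of_nonneg_right e2 (by positivity)
  _ ≤ C * (‖P₁‖^2 + N1^2 + N0^2) * t ^ (-(n:ℝ)) + C * ‖P₁‖^2 * Real.exp (-1*t) := by
      have hexp : 0 ≤ C * ‖P₁‖^2 * Real.exp (-1*t) := by positivity
      linarith
end

section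
/- Let n ≥ 1 and μ ∈ (0, 2). For ξ ∈ ℝⁿ \ {0} write r := |ξ| and b(r) := √(r² - (μ²/4) log²(1+r)), and define ν(t,ξ) := (1+r)^{-μt/2} (1/b(r)) sin(b(r) t) and χ(t,ξ) := (1+r)^{-μt/2} (1/b(r)) sin(γ t r), where γ := √(4-μ²)/2. Then there exist constants C > 0 and t₀ > 0, depending only on n and μ, such that for all t ≥ t₀: ∫_{ℝⁿ} |ν(t,ξ) - χ(t,ξ)|² dξ ≤ C t^{-n}. -/
open MeasureTheory

set_option maxHeartbeats 1600000

open MeasureTheory Set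

lemma my_abs_sin_sub_sin_le (x y : ℝ) : |Real.sin x - Real.sin y| ≤ |x - y| := by
  rw [Real.sin_sub_sin]
  have h1 : |Real.sin ((x - y) / 2)| ≤ |(x - y) / 2| := Real.abs_sin_le_abs
  have h2 : |Real.cos ((x + y) / 2)| ≤ 1 := Real.abs_cos_le_one _
  calc |2 * Real.sin ((x - y) / 2) * Real.cos ((x + y) / 2)|
      = 2 * |Real.sin ((x - y) / 2)| * |Real.cos ((x + y) / 2)| := by
        rw [abs_mul, abs_mul, abs_two]
    _ ≤ 2 * |(x - y) / 2| * 1 := by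
        apply mul_le_mul _ h2 (abs_nonneg _) (by positivity)
        nlinarith [abs_nonneg ((x-y)/2)]
    _ = |x - y| := by rw [abs_div, abs_two]; ring

lemma my_log_one_add_ge' (y : ℝ) (h0 : 0 ≤ y) (h1 : y ≤ 1) :
    Real.log 2 * y ≤ Real.log (1 + y) := by
  rw [← Real.exp_le_exp, Real.exp_log (by linarith : (0:ℝ) < 1 + y)]
  calc Real.exp (Real.log 2 * y) = Real.exp ((1 - y) • (0:ℝ) + y • Real.log 2) := by
        congr 1; simp [smul_eq_mul]; ring
    _ ≤ (1 - y) • Real.exp 0 + y • Real.exp (Real.log 2) :=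
        convexOn_exp.2 (mem_univ _) (mem_univ _) (by linarith) h0 (by ring)
    _ = 1 + y := by
        rw [Real.exp_zero, Real.exp_log (by norm_num : (0:ℝ) < 2)]
        simp [smul_eq_mul]; ring

lemma my_oneD (n : ℕ) (s : ℝ) (hs : (n:ℝ) + 4 ≤ s) :
    ∫ y in Ioi (0:ℝ), y ^ (n+1) * (1+y) ^ (-s) ≤
      Real.Gamma ((n:ℝ)+2) * ((Real.log 2 * s)⁻¹) ^ (n+2) + 2 ^ (((n:ℝ)+4) - s) / 2 := by
  have hs0 : 0 < s := lt_of_lt_of_le (by positivity) hs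
  have hl2 : 0 < Real.log 2 := Real.log_pos (by norm_num)
  set c : ℝ := Real.log 2 * s with hc
  have hcpos : 0 < c := by positivity
  set f : ℝ → ℝ := fun y => y ^ (n+1) * (1+y) ^ (-s) with hf
  have hcont : ∀ A : Set ℝ, (∀ y ∈ A, (0:ℝ) ≤ y) → ContinuousOn f A := by
    intro A hA
    exact (continuous_pow (n+1)).continuousOn.mul
      (ContinuousOn.rpow_const (by fun_prop) fun y hy => Or.inl (by have := hA y hy; positivity))
  have hIoc : IntegrableOn f (Ioc 0 1) := by
    have h' : IntegrableOn f (Icc (0:ℝ) 1) volume :=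
      (hcont (Icc 0 1) (fun y hy => hy.1)).integrableOn_Icc
    exact h'.mono_set Ioc_subset_Icc_self
  have hbnd : ∀ y ∈ Ioi (1:ℝ), f y ≤ 2 ^ (((n:ℝ)+4) - s) * y ^ (-(3:ℝ)) := by
    intro y hy
    have hy1 : (1:ℝ) < y := hy
    have h1y : (0:ℝ) < 1 + y := by linarith
    have e1 : (1+y) ^ (-s) = (1+y) ^ (((n:ℝ)+4) - s) * (1+y) ^ (-((n:ℝ)+4)) := by
      rw [← Real.rpow_add h1y]; ring_nf
    have e2 : (1+y) ^ (((n:ℝ)+4) - s) ≤ 2 ^ (((n:ℝ)+4) - s) :=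
      Real.rpow_le_rpow_of_nonpos (by norm_num) (by linarith) (by linarith)
    have e3 : (1+y) ^ (-((n:ℝ)+4)) ≤ y ^ (-((n:ℝ)+4)) :=
      Real.rpow_le_rpow_of_nonpos (by linarith) (by linarith)
        (by have : (0:ℝ) ≤ n := Nat.cast_nonneg n; linarith)
    have e4 : y ^ (n+1) * y ^ (-((n:ℝ)+4)) = y ^ (-(3:ℝ)) := by
      rw [← Real.rpow_natCast y (n+1), ← Real.rpow_add (by linarith : (0:ℝ) < y)]
      congr 1; push_cast; ring
    calc f y = y ^ (n+1) * ((1+y) ^ (((n:ℝ)+4) - s) * (1+y) ^ (-((n:ℝ)+4))) := by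
          rw [hf]; simp only []; rw [e1]
      _ ≤ y ^ (n+1) * (2 ^ (((n:ℝ)+4) - s) * y ^ (-((n:ℝ)+4))) := by
          apply mul_le_mul_of_nonneg_left _ (by positivity)
          apply mul_le_mul e2 e3 (by positivity) (by positivity)
      _ = 2 ^ (((n:ℝ)+4) - s) * (y ^ (n+1) * y ^ (-((n:ℝ)+4))) := by ring
      _ = 2 ^ (((n:ℝ)+4) - s) * y ^ (-(3:ℝ)) := by rw [e4]
  have hgInt : IntegrableOn (fun y : ℝ => 2 ^ (((n:ℝ)+4) - s) * y ^ (-(3:ℝ))) (Ioi 1) :=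
    (integrableOn_Ioi_rpow_of_lt (by norm_num) one_pos).const_mul _
  have hIoi1 : IntegrableOn f (Ioi 1) := by
    apply Integrable.mono' hgInt
      ((hcont (Ioi 1) (fun y hy => by have : (1:ℝ) < y := hy; linarith)).aestronglyMeasurable
        measurableSet_Ioi)
    filter_upwards [ae_restrict_mem measurableSet_Ioi] with y hy
    have hy1 : (1:ℝ) < y := hy
    rw [Real.norm_eq_abs, abs_of_nonneg (by positivity)]
    exact hbnd y hy
  have hsplit : (∫ y in Ioi (0:ℝ), f y) = (∫ y in Ioc (0:ℝ) 1, f y) + ∫ y in Ioi (1:ℝ), f y := by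
    rw [← setIntegral_union Ioc_disjoint_Ioi_same measurableSet_Ioi hIoc hIoi1,
      Ioc_union_Ioi_eq_Ioi zero_le_one]
  set hA : ℝ → ℝ := fun y => y ^ ((n:ℝ)+1) * Real.exp (-(c * y)) with hAdef
  have hAint : IntegrableOn hA (Ioi 0) := by
    have := integrableOn_rpow_mul_exp_neg_mul_rpow
      (show (-1:ℝ) < (n:ℝ)+1 by have : (0:ℝ) ≤ n := Nat.cast_nonneg n; linarith) zero_lt_one hcpos
    simp_rw [Real.rpow_one] at this
    apply this.congr_fun _ measurableSet_Ioi
    intro y hy; rw [hAdef]; simp only []; ring_nf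
  have stepA1 : (∫ y in Ioc (0:ℝ) 1, f y) ≤ ∫ y in Ioc (0:ℝ) 1, hA y := by
    apply setIntegral_mono_on hIoc (hAint.mono_set Ioc_subset_Ioi_self) measurableSet_Ioc
    intro y hy
    have hy0 : (0:ℝ) < y := hy.1
    have hy1 : y ≤ 1 := hy.2
    rw [hf, hAdef]; simp only []
    have epow : y ^ (n+1) = y ^ ((n:ℝ)+1) := by
      rw [← Real.rpow_natCast y (n+1)]; norm_num
    rw [← epow]
    apply mul_le_mul_of_nonneg_left _ (by positivity)
    rw [Real.rpow_def_of_pos (by linarith : (0:ℝ) < 1 + y)]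
    apply Real.exp_le_exp.2
    have := my_log_one_add_ge' y hy0.le hy1
    nlinarith
  have stepA2 : (∫ y in Ioc (0:ℝ) 1, hA y) ≤ ∫ y in Ioi (0:ℝ), hA y := by
    apply setIntegral_mono_set hAint _ Ioc_subset_Ioi_self.eventuallyLE
    filter_upwards [ae_restrict_mem measurableSet_Ioi] with y hy
    have hy0 : (0:ℝ) < y := hy
    rw [hAdef]; positivity
  have stepA3 : (∫ y in Ioi (0:ℝ), hA y) = (1/c) ^ ((n:ℝ)+2) * Real.Gamma ((n:ℝ)+2) := by
    have := Real.integral_rpow_mul_exp_neg_mul_Ioi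
      (show (0:ℝ) < (n:ℝ)+2 by positivity) hcpos
    simp only [show ((n:ℝ)+2-1) = (n:ℝ)+1 by ring] at this
    rw [hAdef]
    exact this
  have stepB : (∫ y in Ioi (1:ℝ), f y) ≤ 2 ^ (((n:ℝ)+4) - s) / 2 := by
    calc (∫ y in Ioi (1:ℝ), f y)
        ≤ ∫ y in Ioi (1:ℝ), 2 ^ (((n:ℝ)+4) - s) * y ^ (-(3:ℝ)) :=
          setIntegral_mono_on hIoi1 hgInt measurableSet_Ioi hbnd
      _ = 2 ^ (((n:ℝ)+4) - s) * ∫ y in Ioi (1:ℝ), y ^ (-(3:ℝ)) := integral_const_mul _ _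
      _ = 2 ^ (((n:ℝ)+4) - s) / 2 := by
          rw [integral_Ioi_rpow_of_lt (by norm_num) one_pos]
          norm_num
          ring
  have hconv : (1/c) ^ ((n:ℝ)+2) * Real.Gamma ((n:ℝ)+2)
      = Real.Gamma ((n:ℝ)+2) * ((Real.log 2 * s)⁻¹) ^ (n+2) := by
    rw [← hc, one_div, ← Real.rpow_natCast c⁻¹ (n+2)]
    push_cast
    ring
  calc (∫ y in Ioi (0:ℝ), f y) = (∫ y in Ioc (0:ℝ) 1, f y) + ∫ y in Ioi (1:ℝ), f y := hsplit
    _ ≤ (1/c) ^ ((n:ℝ)+2) * Real.Gamma ((n:ℝ)+2) + 2 ^ (((n:ℝ)+4) - s) / 2 := by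
        have := stepA1.trans (stepA2.trans_eq stepA3)
        linarith
    _ = _ := by rw [hconv]

lemma my_pointwise (μ t r b γ : ℝ) (hμ0 : 0 < μ) (hμ2 : μ < 2) (ht : 0 ≤ t) (hr0 : 0 ≤ r)
    (hb : b = Real.sqrt (r ^ 2 - μ ^ 2 / 4 * Real.log (1 + r) ^ 2))
    (hγ : γ = Real.sqrt (4 - μ ^ 2) / 2) :
    |(1 + r) ^ (-(μ * t) / 2) * (1 / b) * Real.sin (b * t)
      - (1 + r) ^ (-(μ * t) / 2) * (1 / b) * Real.sin (γ * t * r)| ^ 2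
      ≤ (μ ^ 2 / (4 * γ ^ 2)) ^ 2 * t ^ 2 * (r ^ 2 * (1 + r) ^ (-(μ * t))) := by
  have hγpos : 0 < γ := by
    rw [hγ]
    have h4 : 0 < 4 - μ ^ 2 := by nlinarith
    positivity
  have hγsq : γ ^ 2 = 1 - μ ^ 2 / 4 := by
    rw [hγ, div_pow, Real.sq_sqrt (by nlinarith)]; ring
  have h1r : 0 < 1 + r := by linarith
  set L := Real.log (1 + r) with hLdef
  have hL0 : 0 ≤ L := Real.log_nonneg (by linarith)
  have hLr : L ≤ r := by
    have := Real.log_le_sub_one_of_pos h1r; linarith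
  rcases eq_or_lt_of_le hr0 with hr | hr
  · -- r = 0
    have hL : L = 0 := by rw [hLdef, ← hr]; simp
    have hb0 : b = 0 := by rw [hb, ← hr, hL]; simp
    rw [hb0, ← hr]
    norm_num
  · -- r > 0
    have h2 : r - L ≤ r ^ 2 := by
      have hi := Real.log_le_sub_one_of_pos (inv_pos.mpr h1r)
      rw [Real.log_inv] at hi
      have hinv : (1 + r) * (1 + r)⁻¹ = 1 := mul_inv_cancel₀ (ne_of_gt h1r)
      nlinarith [hi, hinv, sq_nonneg r]
    have hLsq : L ^ 2 ≤ r ^ 2 := by nlinarith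
    have hIγ : γ ^ 2 * r ^ 2 ≤ r ^ 2 - μ ^ 2 / 4 * L ^ 2 := by
      nlinarith [mul_nonneg (sq_nonneg μ) (sub_nonneg.mpr hLsq)]
    have hbpos : 0 < b := by
      rw [hb]
      exact Real.sqrt_pos.mpr (lt_of_lt_of_le (by positivity) hIγ)
    have hbsq : b ^ 2 = r ^ 2 - μ ^ 2 / 4 * L ^ 2 := by
      rw [hb]
      exact Real.sq_sqrt (le_trans (by positivity) hIγ)
    have hbγr : γ * r ≤ b := by
      rw [hb, show γ * r = Real.sqrt ((γ * r) ^ 2) from (Real.sqrt_sq (by positivity)).symm]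
      apply Real.sqrt_le_sqrt
      nlinarith [hIγ]
    have hdiff0 : 0 ≤ b - γ * r := by linarith
    have hkey : b - γ * r ≤ μ ^ 2 / (4 * γ) * r ^ 2 := by
      have h3 : r ^ 2 - L ^ 2 ≤ 2 * r ^ 3 := by
        nlinarith [mul_le_mul h2 (show r + L ≤ 2 * r by linarith) (by linarith)
          (by nlinarith [sq_nonneg r])]
      have e1 : b ^ 2 - (γ * r) ^ 2 ≤ μ ^ 2 / 2 * r ^ 3 := by
        rw [hbsq]
        nlinarith [hγsq, mul_nonneg (sq_nonneg μ) (sub_nonneg.mpr h3),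
          mul_le_mul_of_nonneg_left h3 (sq_nonneg μ)]
      have e2 : (b - γ * r) * (2 * (γ * r)) ≤ μ ^ 2 / 2 * r ^ 3 := by
        nlinarith [hdiff0, hbγr, mul_pos hγpos hr]
      refine le_of_mul_le_mul_right ?_ (show (0:ℝ) < 2 * (γ * r) by positivity)
      calc (b - γ * r) * (2 * (γ * r)) ≤ μ ^ 2 / 2 * r ^ 3 := e2
        _ = μ ^ 2 / (4 * γ) * r ^ 2 * (2 * (γ * r)) := by field_simp; ring
    have hsin : |Real.sin (b * t) - Real.sin (γ * t * r)| ≤ t * (b - γ * r) := by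
      calc |Real.sin (b * t) - Real.sin (γ * t * r)| ≤ |b * t - γ * t * r| :=
            my_abs_sin_sub_sin_le _ _
        _ = t * (b - γ * r) := by
            rw [show b * t - γ * t * r = t * (b - γ * r) by ring,
              abs_of_nonneg (mul_nonneg ht hdiff0)]
    have hPnn : (0:ℝ) ≤ (1 + r) ^ (-(μ * t) / 2) := Real.rpow_nonneg h1r.le _
    have habs : |(1 + r) ^ (-(μ * t) / 2) * (1 / b) * Real.sin (b * t)
        - (1 + r) ^ (-(μ * t) / 2) * (1 / b) * Real.sin (γ * t * r)|
        ≤ (1 + r) ^ (-(μ * t) / 2) * (μ ^ 2 / (4 * γ ^ 2) * (t * r)) := by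
      rw [show (1 + r) ^ (-(μ * t) / 2) * (1 / b) * Real.sin (b * t)
          - (1 + r) ^ (-(μ * t) / 2) * (1 / b) * Real.sin (γ * t * r)
          = (1 + r) ^ (-(μ * t) / 2) * ((1 / b) * (Real.sin (b * t) - Real.sin (γ * t * r)))
          by ring, abs_mul, abs_mul, abs_of_nonneg hPnn,
        abs_of_nonneg (by positivity : (0:ℝ) ≤ 1 / b)]
      apply mul_le_mul_of_nonneg_left _ hPnn
      calc (1 / b) * |Real.sin (b * t) - Real.sin (γ * t * r)|
          ≤ (1 / b) * (t * (b - γ * r)) :=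
            mul_le_mul_of_nonneg_left hsin (by positivity)
        _ ≤ (1 / (γ * r)) * (t * (μ ^ 2 / (4 * γ) * r ^ 2)) := by
            apply mul_le_mul (one_div_le_one_div_of_le (by positivity) hbγr)
              (mul_le_mul_of_nonneg_left hkey ht)
              (mul_nonneg ht hdiff0) (by positivity)
        _ = μ ^ 2 / (4 * γ ^ 2) * (t * r) := by field_simp
    have hsq := mul_self_le_mul_self (abs_nonneg _) habs
    have hPsq : ((1 + r) ^ (-(μ * t) / 2)) ^ 2 = (1 + r) ^ (-(μ * t)) := by
      rw [← Real.rpow_natCast ((1 + r) ^ (-(μ * t) / 2)) 2, ← Real.rpow_mul h1r.le]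
      norm_num
    calc |(1 + r) ^ (-(μ * t) / 2) * (1 / b) * Real.sin (b * t)
        - (1 + r) ^ (-(μ * t) / 2) * (1 / b) * Real.sin (γ * t * r)| ^ 2
        ≤ ((1 + r) ^ (-(μ * t) / 2) * (μ ^ 2 / (4 * γ ^ 2) * (t * r))) ^ 2 := by
          rw [pow_two, pow_two]; exact hsq
      _ = ((1 + r) ^ (-(μ * t) / 2)) ^ 2 * (μ ^ 2 / (4 * γ ^ 2)) ^ 2 * t ^ 2 * r ^ 2 := by ring
      _ = (μ ^ 2 / (4 * γ ^ 2)) ^ 2 * t ^ 2 * (r ^ 2 * (1 + r) ^ (-(μ * t))) := by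
          rw [hPsq]; ring

/-- For `μ ∈ (0,2)`, the profiles `ν(t,ξ) = (1+r)^{-μt/2} sin(b(r)t)/b(r)` and
`χ(t,ξ) = (1+r)^{-μt/2} sin(γtr)/b(r)` (with `r = |ξ|`) satisfy
`∫ |ν - χ|² dξ ≤ C t^{-n}` for large `t`. -/
theorem stmt11 (n : ℕ) (hn : 1 ≤ n) (μ : ℝ) (hμ : μ ∈ Set.Ioo (0:ℝ) 2) :
    let b : ℝ → ℝ := fun r => Real.sqrt (r ^ 2 - μ ^ 2 / 4 * Real.log (1 + r) ^ 2)
    let γ : ℝ := Real.sqrt (4 - μ ^ 2) / 2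
    let ν : ℝ → EuclideanSpace ℝ (Fin n) → ℝ := fun t ξ =>
      (1 + ‖ξ‖) ^ (-(μ * t) / 2) * (1 / b ‖ξ‖) * Real.sin (b ‖ξ‖ * t)
    let χ : ℝ → EuclideanSpace ℝ (Fin n) → ℝ := fun t ξ =>
      (1 + ‖ξ‖) ^ (-(μ * t) / 2) * (1 / b ‖ξ‖) * Real.sin (γ * t * ‖ξ‖)
    ∃ C t₀ : ℝ, 0 < C ∧ 0 < t₀ ∧ ∀ t : ℝ, t₀ ≤ t →
      (∫ ξ : EuclideanSpace ℝ (Fin n), |ν t ξ - χ t ξ| ^ 2) ≤ C * t ^ (-(n : ℝ)) := by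
  intro b γ ν χ
  obtain ⟨hμ0, hμ2⟩ := hμ
  haveI : Nonempty (Fin n) := Fin.pos_iff_nonempty.mp hn
  have hγpos : 0 < γ := by
    show 0 < Real.sqrt (4 - μ ^ 2) / 2
    have h4 : 0 < 4 - μ ^ 2 := by nlinarith
    positivity
  have hl2 : 0 < Real.log 2 := Real.log_pos (by norm_num)
  set K : ℝ := μ ^ 2 / (4 * γ ^ 2) with hK
  have hKpos : 0 < K := by positivity
  set V : ℝ := (volume (Metric.ball (0 : EuclideanSpace ℝ (Fin n)) 1)).toReal with hV
  have hV0 : 0 ≤ V := ENNReal.toReal_nonneg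
  set D : ℝ := ((Real.log 2 * μ)⁻¹) ^ (n + 2) with hD
  have hD0 : 0 ≤ D := by positivity
  have hΓ0 : 0 ≤ Real.Gamma ((n:ℝ)+2) := Real.Gamma_nonneg_of_nonneg (by positivity)
  set A : ℝ := Real.Gamma ((n:ℝ)+2) * D + 2 ^ ((n:ℝ)+4) * (Nat.factorial (n+2) : ℝ) * D / 2 with hA
  have hA0 : 0 ≤ A := by
    rw [hA]
    have h1 : (0:ℝ) ≤ 2 ^ ((n:ℝ)+4) * (Nat.factorial (n+2) : ℝ) * D / 2 := by positivity
    nlinarith [mul_nonneg hΓ0 hD0]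
  refine ⟨K ^ 2 * ((n:ℝ) * V) * A + 1, ((n:ℝ)+4)/μ, ?_, by positivity, ?_⟩
  · have : (0:ℝ) ≤ K ^ 2 * ((n:ℝ) * V) * A := by
      apply mul_nonneg (mul_nonneg (by positivity) (by positivity)) hA0
    linarith
  intro t ht
  have htpos : 0 < t := lt_of_lt_of_le (by positivity) ht
  have hμt : (n:ℝ) + 4 ≤ μ * t := by
    rw [div_le_iff₀ hμ0] at ht
    linarith
  have htn0 : 0 ≤ t ^ (-(n:ℝ)) := Real.rpow_nonneg htpos.le _
  -- pointwise bound
  have hpt : ∀ ξ : EuclideanSpace ℝ (Fin n), |ν t ξ - χ t ξ| ^ 2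
      ≤ K ^ 2 * t ^ 2 * (‖ξ‖ ^ 2 * (1 + ‖ξ‖) ^ (-(μ * t))) := by
    intro ξ
    exact my_pointwise μ t ‖ξ‖ (b ‖ξ‖) γ hμ0 hμ2 htpos.le (norm_nonneg ξ) rfl rfl
  set g : EuclideanSpace ℝ (Fin n) → ℝ :=
    fun ξ => K ^ 2 * t ^ 2 * (‖ξ‖ ^ 2 * (1 + ‖ξ‖) ^ (-(μ * t))) with hg
  have hgm : Continuous g := by
    apply continuous_const.mul
    exact (continuous_norm.pow 2).mul ((continuous_const.add continuous_norm).rpow_const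
      (fun ξ => Or.inl (by positivity : (1:ℝ) + ‖ξ‖ ≠ 0)))
  have hgi : Integrable g := by
    apply Integrable.mono'
      ((integrable_one_add_norm (μ := (volume : Measure (EuclideanSpace ℝ (Fin n))))
        (show (Module.finrank ℝ (EuclideanSpace ℝ (Fin n)) : ℝ) < μ * t - 2 by
          rw [finrank_euclideanSpace_fin]; linarith)).const_mul (K ^ 2 * t ^ 2))
      hgm.aestronglyMeasurable
    filter_upwards with ξ
    rw [hg]; simp only []
    rw [Real.norm_eq_abs, abs_of_nonneg (by positivity)]
    apply mul_le_mul_of_nonneg_left _ (by positivity)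
    have h1 : ‖ξ‖ ^ 2 ≤ (1 + ‖ξ‖) ^ 2 := by nlinarith [norm_nonneg ξ]
    have h2 : ((1:ℝ) + ‖ξ‖) ^ (2:ℕ) * (1 + ‖ξ‖) ^ (-(μ * t)) = (1 + ‖ξ‖) ^ (-(μ * t - 2)) := by
      rw [← Real.rpow_natCast (1 + ‖ξ‖) 2, ← Real.rpow_add (by positivity)]
      congr 1; push_cast; ring
    calc ‖ξ‖ ^ 2 * (1 + ‖ξ‖) ^ (-(μ * t))
        ≤ (1 + ‖ξ‖) ^ 2 * (1 + ‖ξ‖) ^ (-(μ * t)) :=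
          mul_le_mul_of_nonneg_right h1 (Real.rpow_nonneg (by positivity) _)
      _ = (1 + ‖ξ‖) ^ (-(μ * t - 2)) := h2
  have hmono : (∫ ξ : EuclideanSpace ℝ (Fin n), |ν t ξ - χ t ξ| ^ 2) ≤ ∫ ξ, g ξ :=
    integral_mono_of_nonneg (Filter.Eventually.of_forall fun ξ => by positivity) hgi
      (Filter.Eventually.of_forall hpt)
  -- polar coordinates
  set J : ℝ := ∫ y in Ioi (0:ℝ), y ^ (n+1) * (1+y) ^ (-(μ * t)) with hJ
  have hpolar : (∫ ξ : EuclideanSpace ℝ (Fin n), g ξ) = K ^ 2 * t ^ 2 * ((n:ℝ) * (V * J)) := by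
    have h0 : (∫ ξ : EuclideanSpace ℝ (Fin n), g ξ)
        = K ^ 2 * t ^ 2 * ∫ ξ : EuclideanSpace ℝ (Fin n),
            (fun y : ℝ => y ^ 2 * (1+y) ^ (-(μ * t))) ‖ξ‖ := by
      rw [hg]
      exact integral_const_mul _ _
    have h1 := MeasureTheory.integral_fun_norm_addHaar
      (volume : Measure (EuclideanSpace ℝ (Fin n)))
      (fun y : ℝ => y ^ 2 * (1+y) ^ (-(μ * t)))
    rw [finrank_euclideanSpace_fin] at h1
    have h2 : (∫ y in Ioi (0:ℝ), y ^ (n-1) • (y ^ 2 * (1+y) ^ (-(μ * t)))) = J := by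
      rw [hJ]
      apply setIntegral_congr_fun measurableSet_Ioi
      intro y hy
      have hmul : y ^ (n-1) * y ^ 2 = y ^ (n+1) := by
        rw [← pow_add]; congr 1; omega
      simp only [smul_eq_mul]
      rw [← mul_assoc, hmul]
    rw [h0, h1, h2]
    simp only [nsmul_eq_mul, smul_eq_mul]
    rw [hV]; rfl
  have hJR := my_oneD n (μ * t) hμt
  rw [← hJ] at hJR
  -- arithmetic with powers of t
  have keyT : t ^ (2:ℕ) * (t ^ (n+2))⁻¹ = t ^ (-(n:ℝ)) := by
    rw [← Real.rpow_natCast t 2, ← Real.rpow_natCast t (n+2), ← Real.rpow_neg htpos.le,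
      ← Real.rpow_add htpos]
    congr 1; push_cast; ring
  have c1 : t ^ 2 * (Real.Gamma ((n:ℝ)+2) * ((Real.log 2 * (μ * t))⁻¹) ^ (n+2))
      = Real.Gamma ((n:ℝ)+2) * D * t ^ (-(n:ℝ)) := by
    rw [← keyT, hD, show (Real.log 2 * (μ * t))⁻¹ = (Real.log 2 * μ)⁻¹ * t⁻¹ by
      rw [show Real.log 2 * (μ * t) = (Real.log 2 * μ) * t by ring, mul_inv],
      mul_pow, inv_pow]
    ring
  have hfact : (Real.log 2 * (μ * t)) ^ (n+2) ≤ (Nat.factorial (n+2) : ℝ) * 2 ^ (μ * t) := by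
    have h := Real.pow_div_factorial_le_exp (x := Real.log 2 * (μ * t)) (by positivity) (n+2)
    rw [show Real.exp (Real.log 2 * (μ * t)) = (2:ℝ) ^ (μ * t) from
      (Real.rpow_def_of_pos two_pos _).symm] at h
    rw [div_le_iff₀ (by positivity)] at h
    linarith
  have c2 : t ^ 2 * (2 ^ (((n:ℝ)+4) - (μ * t)) / 2)
      ≤ 2 ^ ((n:ℝ)+4) * (Nat.factorial (n+2) : ℝ) * D / 2 * t ^ (-(n:ℝ)) := by
    have hXpos : (0:ℝ) < Real.log 2 * (μ * t) := by positivity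
    have h2pos : (0:ℝ) < (2:ℝ) ^ (μ * t) := Real.rpow_pos_of_pos two_pos _
    have hDt : D * (t ^ (n+2))⁻¹ = ((Real.log 2 * (μ * t)) ^ (n+2))⁻¹ := by
      rw [hD, ← inv_pow, ← inv_pow, ← mul_pow, ← mul_inv,
        show Real.log 2 * μ * t = Real.log 2 * (μ * t) by ring]
    have hinv : ((2:ℝ) ^ (μ * t))⁻¹ ≤ (Nat.factorial (n+2) : ℝ) * ((Real.log 2 * (μ * t)) ^ (n+2))⁻¹ := by
      calc ((2:ℝ) ^ (μ * t))⁻¹ = (Nat.factorial (n+2) : ℝ) * ((Nat.factorial (n+2) : ℝ) * 2 ^ (μ * t))⁻¹ := by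
            field_simp
        _ ≤ (Nat.factorial (n+2) : ℝ) * ((Real.log 2 * (μ * t)) ^ (n+2))⁻¹ := by
            apply mul_le_mul_of_nonneg_left
              (inv_anti₀ (by positivity) hfact) (by positivity)
    calc t ^ 2 * (2 ^ (((n:ℝ)+4) - (μ * t)) / 2)
        = (2 ^ ((n:ℝ)+4) / 2) * (t ^ 2 * ((2:ℝ) ^ (μ * t))⁻¹) := by
          rw [Real.rpow_sub two_pos, div_eq_mul_inv (2 ^ ((n:ℝ)+4))]
          ring
      _ ≤ (2 ^ ((n:ℝ)+4) / 2) * (t ^ 2 * ((Nat.factorial (n+2) : ℝ) * ((Real.log 2 * (μ * t)) ^ (n+2))⁻¹)) := by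
          apply mul_le_mul_of_nonneg_left _ (by positivity)
          apply mul_le_mul_of_nonneg_left hinv (by positivity)
      _ = 2 ^ ((n:ℝ)+4) * (Nat.factorial (n+2) : ℝ) * D / 2 * t ^ (-(n:ℝ)) := by
          rw [← keyT, ← hDt]
          ring
  -- final chain
  have hWnn : (0:ℝ) ≤ K ^ 2 * ((n:ℝ) * V) := by positivity
  calc (∫ ξ : EuclideanSpace ℝ (Fin n), |ν t ξ - χ t ξ| ^ 2)
      ≤ ∫ ξ, g ξ := hmono
    _ = K ^ 2 * ((n:ℝ) * V) * (t ^ 2 * J) := by rw [hpolar]; ring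
    _ ≤ K ^ 2 * ((n:ℝ) * V) * (t ^ 2 *
          (Real.Gamma ((n:ℝ)+2) * ((Real.log 2 * (μ * t))⁻¹) ^ (n+2)
            + 2 ^ (((n:ℝ)+4) - (μ * t)) / 2)) := by
        apply mul_le_mul_of_nonneg_left _ hWnn
        apply mul_le_mul_of_nonneg_left hJR (by positivity)
    _ ≤ K ^ 2 * ((n:ℝ) * V) * (A * t ^ (-(n:ℝ))) := by
        apply mul_le_mul_of_nonneg_left _ hWnn
        rw [mul_add, hA, add_mul]
        have := c1
        have := c2
        linarith
    _ ≤ (K ^ 2 * ((n:ℝ) * V) * A + 1) * t ^ (-(n:ℝ)) := by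
        nlinarith [htn0, hWnn, hA0, mul_nonneg (mul_nonneg hWnn hA0) htn0]
end

section
/- Let n ≥ 1, μ = 2, u₀ ∈ L¹(ℝⁿ) and u₁ ∈ L^{1,1}(ℝⁿ). For ξ ∈ ℝⁿ \ {0} write r := |ξ| and b(r) := √(r² - log²(1+r)), and define w(t,ξ) := (1+r)^{-t} [ cos(b(r)t)·û₀(ξ) + (log(1+r)/b(r))·sin(b(r)t)·û₀(ξ) + (1/b(r))·sin(b(r)t)·û₁(ξ) ] and ν(t,ξ) := P₁ (1+r)^{-t} (1/b(r)) sin(b(r) t), where P₁ := ∫_{ℝⁿ} u₁(x) dx. Then there exist constants C > 0 and t₀ > 0, with C depending only on n, such that for all t ≥ t₀: ∫_{ℝⁿ} |w(t,ξ) - ν(t,ξ)|² dξ ≤ C (‖u₁‖_{1,1} + ‖u₀‖₁)² t^{-n}. -/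
open MeasureTheory

section Aux
open Real

lemma intA (n : ℕ) {t : ℝ} (hn : 1 ≤ n) (ht : (n:ℝ)+1 ≤ t) :
    ∫ ξ : EuclideanSpace ℝ (Fin n), (1+‖ξ‖)^(-t)
      ≤ ((n:ℝ)+1)^((n:ℝ)+1) * (∫ η : EuclideanSpace ℝ (Fin n), (1+‖η‖)^(-((n:ℝ)+1))) * t^(-(n:ℝ)) := by
  set a : ℝ := (n:ℝ)+1 with ha
  have hn0 : (0:ℝ) ≤ (n:ℝ) := Nat.cast_nonneg n
  have ha1 : 1 ≤ a := by rw [ha]; linarith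
  have ha0 : 0 < a := by linarith
  have ht0 : 0 < t := lt_of_lt_of_le ha0 ht
  have key : ∀ x : ℝ, 0 ≤ x → (1+x/t)^(-t) ≤ a^a * (1+x)^(-a) := by
    intro x hx
    have hxt : 0 ≤ x/t := by positivity
    have h1 : 1 + x/a ≤ (1+x/t)^(t/a) := by
      have h := one_add_mul_self_le_rpow_one_add (s := x/t) (by linarith) (p := t/a)
        ((one_le_div ha0).2 ht)
      have he : t/a * (x/t) = x/a := by field_simp
      rw [he] at h; exact h
    have h2 : (1+x/a)^a ≤ (1+x/t)^t := by
      calc (1+x/a)^a ≤ ((1+x/t)^(t/a))^a :=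
            Real.rpow_le_rpow (by positivity) h1 ha0.le
        _ = (1+x/t)^t := by
            rw [← Real.rpow_mul (by positivity), div_mul_cancel₀ _ ha0.ne']
    have h3 : (1+x/t)^(-t) ≤ (1+x/a)^(-a) := by
      rw [Real.rpow_neg (by positivity), Real.rpow_neg (by positivity)]
      exact inv_anti₀ (by positivity) h2
    have h4 : (1+x/a)^(-a) ≤ a^a * (1+x)^(-a) := by
      have h1a : 1/a ≤ 1 := (div_le_one ha0).2 ha1
      have hb : (1+x)/a ≤ 1 + x/a := by
        have : (1+x)/a = 1/a + x/a := by ring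
        rw [this]; linarith
      calc (1+x/a)^(-a) ≤ ((1+x)/a)^(-a) :=
            Real.rpow_le_rpow_of_nonpos (by positivity) hb (by linarith)
        _ = a^a * (1+x)^(-a) := by
            rw [Real.rpow_neg (by positivity), Real.div_rpow (by positivity) ha0.le,
              Real.rpow_neg (by positivity)]
            field_simp
    linarith
  have hint : Integrable (fun η : EuclideanSpace ℝ (Fin n) => a^a * (1+‖η‖)^(-a)) := by
    refine (integrable_one_add_norm ?_).const_mul _
    rw [finrank_euclideanSpace_fin]; rw [ha]; linarith
  have step1 : ∫ ξ : EuclideanSpace ℝ (Fin n), (1+‖ξ‖)^(-t)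
      = (t^n)⁻¹ * ∫ η : EuclideanSpace ℝ (Fin n), (1+‖η‖/t)^(-t) := by
    have h := MeasureTheory.Measure.integral_comp_smul_of_nonneg (μ := volume)
      (f := fun η : EuclideanSpace ℝ (Fin n) => (1+‖η‖/t)^(-t)) t (hR := ht0.le)
    rw [finrank_euclideanSpace_fin] at h
    simp only [smul_eq_mul] at h
    rw [← h]
    congr 1
    ext ξ
    congr 2
    rw [norm_smul, Real.norm_eq_abs, abs_of_nonneg ht0.le]
    field_simp
  have step2 : ∫ η : EuclideanSpace ℝ (Fin n), (1+‖η‖/t)^(-t)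
      ≤ a^a * ∫ η : EuclideanSpace ℝ (Fin n), (1+‖η‖)^(-a) := by
    rw [← integral_const_mul]
    refine integral_mono_of_nonneg (Filter.Eventually.of_forall fun η => by positivity) hint
      (Filter.Eventually.of_forall fun η => key ‖η‖ (norm_nonneg _))
  have hnn : 0 ≤ ∫ η : EuclideanSpace ℝ (Fin n), (1+‖η‖)^(-a) :=
    integral_nonneg fun η => by positivity
  have htn : (t^n)⁻¹ = t^(-(n:ℝ)) := by
    rw [Real.rpow_neg ht0.le, Real.rpow_natCast]
  rw [step1, htn]
  calc t^(-(n:ℝ)) * ∫ η : EuclideanSpace ℝ (Fin n), (1+‖η‖/t)^(-t)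
      ≤ t^(-(n:ℝ)) * (a^a * ∫ η : EuclideanSpace ℝ (Fin n), (1+‖η‖)^(-a)) :=
        mul_le_mul_of_nonneg_left step2 (by positivity)
    _ = a^a * (∫ η : EuclideanSpace ℝ (Fin n), (1+‖η‖)^(-a)) * t^(-(n:ℝ)) := by ring

lemma norm_exp_I (c : ℝ) : ‖Complex.exp (-(Complex.I * (c:ℂ)))‖ = 1 := by
  rw [Complex.norm_exp]; simp

lemma norm_exp_I_sub_one (c : ℝ) : ‖Complex.exp (-(Complex.I * (c:ℂ))) - 1‖ ≤ 2 * |c| := by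
  rcases le_or_gt (|c|) 1 with h | h
  · have := Complex.norm_exp_sub_one_le (x := -(Complex.I * (c:ℂ))) (by simpa using h)
    simpa using this
  · have h1 : ‖Complex.exp (-(Complex.I * (c:ℂ))) - 1‖ ≤ 2 := by
      calc ‖Complex.exp (-(Complex.I * (c:ℂ))) - 1‖
          ≤ ‖Complex.exp (-(Complex.I * (c:ℂ)))‖ + ‖(1:ℂ)‖ := norm_sub_le _ _
        _ ≤ 2 := by rw [norm_exp_I]; norm_num
    linarith

lemma norm_ft_le {n : ℕ} (u : EuclideanSpace ℝ (Fin n) → ℂ) (ξ : EuclideanSpace ℝ (Fin n)) :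
    ‖fourierTransformCLM' u ξ‖ ≤ ∫ x, ‖u x‖ := by
  refine le_trans (norm_integral_le_integral_norm _) (le_of_eq ?_)
  congr 1; ext x; rw [norm_mul, norm_exp_I, one_mul]

lemma ft_cont {n : ℕ} (ξ : EuclideanSpace ℝ (Fin n)) :
    Continuous (fun x : EuclideanSpace ℝ (Fin n) =>
      Complex.exp (-(Complex.I * ((inner ℝ x ξ : ℝ) : ℂ)))) := by
  exact Complex.continuous_exp.comp ((continuous_const.mul
    (Complex.continuous_ofReal.comp (continuous_id.inner continuous_const))).neg)

lemma ft_sub_le {n : ℕ} {u₁ : EuclideanSpace ℝ (Fin n) → ℂ} (hu₁ : Integrable u₁)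
    (hu₁w : Integrable (fun x : EuclideanSpace ℝ (Fin n) => (1 + ‖x‖) * ‖u₁ x‖))
    (ξ : EuclideanSpace ℝ (Fin n)) :
    ‖fourierTransformCLM' u₁ ξ - ∫ x, u₁ x‖ ≤ 2 * ‖ξ‖ * ∫ x, (1+‖x‖) * ‖u₁ x‖ := by
  have hker : Integrable (fun x : EuclideanSpace ℝ (Fin n) =>
      Complex.exp (-(Complex.I * ((inner ℝ x ξ : ℝ) : ℂ))) * u₁ x) := by
    refine hu₁.bdd_mul (ft_cont ξ).aestronglyMeasurable (c := 1) (Filter.Eventually.of_forall fun x => le_of_eq (norm_exp_I _))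
  have heq : fourierTransformCLM' u₁ ξ - ∫ x, u₁ x
      = ∫ x, (Complex.exp (-(Complex.I * ((inner ℝ x ξ : ℝ) : ℂ))) - 1) * u₁ x := by
    rw [fourierTransformCLM']
    rw [← integral_sub hker hu₁]
    congr 1; ext x; ring
  rw [heq]
  refine le_trans (norm_integral_le_integral_norm _) ?_
  have : (2 * ‖ξ‖ * ∫ x, (1+‖x‖) * ‖u₁ x‖) = ∫ x, 2 * ‖ξ‖ * ((1+‖x‖) * ‖u₁ x‖) :=
    (integral_const_mul _ _).symm
  rw [this]
  refine integral_mono_of_nonneg (Filter.Eventually.of_forall fun x => norm_nonneg _)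
    (hu₁w.const_mul _) (Filter.Eventually.of_forall fun x => ?_)
  simp only []
  rw [norm_mul]
  have h1 : ‖Complex.exp (-(Complex.I * ((inner ℝ x ξ : ℝ) : ℂ))) - 1‖ ≤ 2 * ‖x‖ * ‖ξ‖ := by
    refine le_trans (norm_exp_I_sub_one _) ?_
    have := abs_real_inner_le_norm x ξ
    nlinarith [norm_nonneg x, norm_nonneg ξ]
  nlinarith [norm_nonneg (u₁ x), norm_nonneg x, norm_nonneg ξ, norm_nonneg
    (Complex.exp (-(Complex.I * ((inner ℝ x ξ : ℝ) : ℂ))) - 1)]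

lemma ft_sub_le' {n : ℕ} {u₁ : EuclideanSpace ℝ (Fin n) → ℂ} (hu₁ : Integrable u₁)
    (hu₁w : Integrable (fun x : EuclideanSpace ℝ (Fin n) => (1 + ‖x‖) * ‖u₁ x‖))
    (ξ : EuclideanSpace ℝ (Fin n)) :
    ‖fourierTransformCLM' u₁ ξ - ∫ x, u₁ x‖ ≤ 2 * ∫ x, (1+‖x‖) * ‖u₁ x‖ := by
  have h1 : ∫ x, ‖u₁ x‖ ≤ ∫ x, (1+‖x‖) * ‖u₁ x‖ := by
    refine integral_mono hu₁.norm hu₁w fun x => ?_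
    nlinarith [norm_nonneg (u₁ x), norm_nonneg x]
  have h2 := norm_ft_le u₁ ξ
  have h3 : ‖∫ x, u₁ x‖ ≤ ∫ x, ‖u₁ x‖ := norm_integral_le_integral_norm _
  calc ‖fourierTransformCLM' u₁ ξ - ∫ x, u₁ x‖
      ≤ ‖fourierTransformCLM' u₁ ξ‖ + ‖∫ x, u₁ x‖ := norm_sub_le _ _
    _ ≤ 2 * ∫ x, (1+‖x‖) * ‖u₁ x‖ := by linarith

lemma aux_log_sq {r : ℝ} (hr1 : 1 < r) : 2 * Real.log (1+r)^2 ≤ r^2 := by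
  have hlog2 : Real.log 2 < 0.6931471808 := Real.log_two_lt_d9
  have hlog2' : 0 < Real.log 2 := Real.log_pos (by norm_num)
  have hL0 : 0 ≤ Real.log (1+r) := log_nonneg (by linarith)
  have hdiv : Real.log ((1+r)/2) ≤ (1+r)/2 - 1 :=
    Real.log_le_sub_one_of_pos (by linarith)
  have hld : Real.log ((1+r)/2) = Real.log (1+r) - Real.log 2 :=
    Real.log_div (by linarith) (by norm_num)
  have hd : Real.log (1+r) ≤ 0.7 + (r-1)/2 := by rw [hld] at hdiv; linarith
  have hsq : Real.log (1+r) * Real.log (1+r) ≤ (0.7 + (r-1)/2)*(0.7 + (r-1)/2) :=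
    mul_le_mul hd hd hL0 (by linarith)
  nlinarith [sq_nonneg (r-1)]

lemma aux_sq_lt {L r : ℝ} (h0 : 0 ≤ L) (h : L < r) : L^2 < r^2 := by nlinarith

lemma real_pointwise {t r M X Y : ℝ} (ht : 3 ≤ t) (hr : 0 ≤ r) (hM : 0 ≤ M)
    (hX0 : 0 ≤ X) (hX : X ≤ M) (hY0 : 0 ≤ Y) (hY1 : Y ≤ 2*M) (hY2 : Y ≤ 2*r*M) :
    |Real.cos (Real.sqrt (r^2 - Real.log (1+r)^2) * t)| * X
    + |Real.log (1+r) / Real.sqrt (r^2 - Real.log (1+r)^2)|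
        * |Real.sin (Real.sqrt (r^2 - Real.log (1+r)^2) * t)| * X
    + |1 / Real.sqrt (r^2 - Real.log (1+r)^2)|
        * |Real.sin (Real.sqrt (r^2 - Real.log (1+r)^2) * t)| * Y
      ≤ 5 * M * (1 + t*r) := by
  set L := Real.log (1+r) with hLdef
  set b := Real.sqrt (r^2 - L^2) with hbdef
  have ht0 : 0 < t := by linarith
  have hL0 : 0 ≤ L := log_nonneg (by linarith)
  have hLr : L ≤ r := by
    have := Real.log_le_sub_one_of_pos (x := 1+r) (by linarith); linarith
  have hb0 : 0 ≤ b := Real.sqrt_nonneg _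
  have hcos : |Real.cos (b*t)| ≤ 1 := Real.abs_cos_le_one _
  have hsin1 : |Real.sin (b*t)| ≤ 1 := Real.abs_sin_le_one _
  have hsin0 : 0 ≤ |Real.sin (b*t)| := abs_nonneg _
  have htr0 : 0 ≤ t * r := by positivity
  have ht1 : |Real.cos (b*t)| * X ≤ M :=
    le_trans (mul_le_of_le_one_left hX0 hcos) hX
  rcases eq_or_lt_of_le hr with hr0 | hr0
  · -- r = 0
    have hre : r = 0 := hr0.symm
    subst hre
    have hL : L = 0 := by simp [hLdef]
    have hb : b = 0 := by rw [hbdef, hL]; simp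
    rw [hL, hb]
    simp only [zero_div, abs_zero, zero_mul, add_zero, Real.sin_zero, mul_zero,
      Real.cos_zero, abs_one, one_mul, mul_zero]
    linarith
  · -- r > 0
    have hLr' : L < r := by
      have := Real.log_lt_sub_one_of_pos (x := 1+r) (by linarith) (by linarith); linarith
    have hL2 : L^2 < r^2 := aux_sq_lt hL0 hLr'
    have hbsq : b^2 = r^2 - L^2 := Real.sq_sqrt (by linarith)
    have hbpos : 0 < b := Real.sqrt_pos.2 (by linarith)
    have hsin2 : |Real.sin (b*t)| ≤ b*t :=
      le_trans (Real.abs_sin_le_abs) (le_of_eq (abs_of_nonneg (by positivity)))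
    have habsL : |L/b| = L/b := abs_of_nonneg (by positivity)
    have habsb : |1/b| = 1/b := abs_of_nonneg (by positivity)
    rcases le_or_gt r 1 with hr1 | hr1
    · -- r ≤ 1 : use |sin| ≤ b t
      have ht2 : |L/b| * |Real.sin (b*t)| * X ≤ r*t*M := by
        have s1 : |L/b| * |Real.sin (b*t)| ≤ L/b * (b*t) := by
          rw [habsL]; exact mul_le_mul_of_nonneg_left hsin2 (by positivity)
        have e1 : L/b * (b*t) = L*t := by field_simp
        rw [e1] at s1
        have s2 : |L/b| * |Real.sin (b*t)| * X ≤ (L*t)*X :=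
          mul_le_mul_of_nonneg_right s1 hX0
        have s3 : L*t*X ≤ r*t*M :=
          mul_le_mul (mul_le_mul_of_nonneg_right hLr ht0.le) hX hX0 (by positivity)
        linarith
      have ht3 : |1/b| * |Real.sin (b*t)| * Y ≤ 2*(r*t*M) := by
        have s1 : |1/b| * |Real.sin (b*t)| ≤ 1/b * (b*t) := by
          rw [habsb]; exact mul_le_mul_of_nonneg_left hsin2 (by positivity)
        have e1 : 1/b * (b*t) = t := by field_simp
        rw [e1] at s1
        have s2 : |1/b| * |Real.sin (b*t)| * Y ≤ t*Y :=
          mul_le_mul_of_nonneg_right s1 hY0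
        have s3 : t*Y ≤ t*(2*r*M) := mul_le_mul_of_nonneg_left hY2 ht0.le
        have e2 : t*(2*r*M) = 2*(r*t*M) := by ring
        rw [e2] at s3
        linarith
      have hfin : 0 ≤ r*t*M := by positivity
      have e5 : 5*M*(1+t*r) = 5*M + 5*(r*t*M) := by ring
      rw [e5]
      linarith
    · -- r > 1
      have h2L : 2*L^2 ≤ r^2 := aux_log_sq hr1
      have hLb : L ≤ b := by
        rw [hbdef]
        exact Real.le_sqrt_of_sq_le (by linarith)
      have hr2 : (1:ℝ) ≤ r^2 := by
        have h12 := mul_le_mul hr1.le hr1.le zero_le_one (by linarith : (0:ℝ) ≤ r)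
        rw [pow_two]; linarith
      have hbsq2 : (1/2:ℝ)^2 ≤ b^2 := by rw [hbsq]; norm_num; linarith
      have hbhalf : (1/2:ℝ) ≤ b := by
        have h := Real.sqrt_le_sqrt hbsq2
        rwa [Real.sqrt_sq hb0, Real.sqrt_sq (by norm_num)] at h
      have hq1 : L/b ≤ 1 := (div_le_one hbpos).2 hLb
      have hq0 : 0 ≤ L/b := by positivity
      have ht2 : |L/b| * |Real.sin (b*t)| * X ≤ M := by
        rw [habsL]
        have s1 : L/b * |Real.sin (b*t)| ≤ 1 := mul_le_one₀ hq1 hsin0 hsin1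
        calc L/b * |Real.sin (b*t)| * X ≤ 1 * X :=
              mul_le_mul_of_nonneg_right s1 hX0
          _ ≤ M := by linarith
      have ht3 : |1/b| * |Real.sin (b*t)| * Y ≤ 4*M := by
        rw [habsb]
        have h1b : 1/b ≤ 2 := by rw [div_le_iff₀ hbpos]; linarith
        have h1b0 : 0 ≤ 1/b := by positivity
        have s1 : 1/b * |Real.sin (b*t)| ≤ 2 :=
          le_trans (mul_le_mul h1b hsin1 hsin0 (by norm_num)) (by norm_num)
        calc 1/b * |Real.sin (b*t)| * Y ≤ 2 * Y :=
              mul_le_mul_of_nonneg_right s1 hY0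
          _ ≤ 4*M := by linarith
      have htr3 : (3:ℝ) ≤ t*r := by
        have := mul_le_mul_of_nonneg_left hr1.le ht0.le
        rw [mul_one] at this; linarith
      have hMtr : 3*M ≤ r*t*M := by
        have h := mul_le_mul_of_nonneg_right htr3 hM
        have e : (t*r)*M = r*t*M := by ring
        rw [e] at h; linarith
      have e5 : 5*M*(1+t*r) = 5*M + 5*(r*t*M) := by ring
      rw [e5]
      linarith

end Aux

open Real in
set_option maxHeartbeats 1000000 in
/-- Theorem 1.5 (critical case `μ = 2`): for `u₀ ∈ L¹`, `u₁ ∈ L^{1,1}`,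
`∫ |w(t,ξ) - ν(t,ξ)|² dξ ≤ C(‖u₁‖_{1,1} + ‖u₀‖₁)² t^{-n}` for large `t`. -/
theorem stmt13 (n : ℕ) (hn : 1 ≤ n)
    (u₀ u₁ : EuclideanSpace ℝ (Fin n) → ℂ)
    (hu₀ : Integrable u₀) (hu₁ : Integrable u₁)
    (hu₁w : Integrable (fun x : EuclideanSpace ℝ (Fin n) => (1 + ‖x‖) * ‖u₁ x‖)) :
    let b : ℝ → ℝ := fun r => Real.sqrt (r ^ 2 - Real.log (1 + r) ^ 2)
    let P₁ : ℂ := ∫ x, u₁ x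
    let w : ℝ → EuclideanSpace ℝ (Fin n) → ℂ := fun t ξ =>
      (((1 + ‖ξ‖) ^ (-t) : ℝ) : ℂ) *
        (((Real.cos (b ‖ξ‖ * t) : ℝ) : ℂ) * fourierTransformCLM' u₀ ξ +
         ((Real.log (1 + ‖ξ‖) / b ‖ξ‖ : ℝ) : ℂ) *
           ((Real.sin (b ‖ξ‖ * t) : ℝ) : ℂ) * fourierTransformCLM' u₀ ξ +
         ((1 / b ‖ξ‖ : ℝ) : ℂ) * ((Real.sin (b ‖ξ‖ * t) : ℝ) : ℂ) *
           fourierTransformCLM' u₁ ξ)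
    let ν : ℝ → EuclideanSpace ℝ (Fin n) → ℂ := fun t ξ =>
      P₁ * (((1 + ‖ξ‖) ^ (-t) : ℝ) : ℂ) * ((1 / b ‖ξ‖ : ℝ) : ℂ) *
        ((Real.sin (b ‖ξ‖ * t) : ℝ) : ℂ)
    ∃ C t₀ : ℝ, 0 < C ∧ 0 < t₀ ∧ ∀ t : ℝ, t₀ ≤ t →
      (∫ ξ : EuclideanSpace ℝ (Fin n), ‖w t ξ - ν t ξ‖ ^ 2) ≤
        C * ((∫ x, (1 + ‖x‖) * ‖u₁ x‖) + (∫ x, ‖u₀ x‖)) ^ 2 * t ^ (-(n : ℝ)) := by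
  intro b P₁ w ν
  set Mw : ℝ := ∫ x : EuclideanSpace ℝ (Fin n), (1+‖x‖) * ‖u₁ x‖ with hMwdef
  set N₀ : ℝ := ∫ x : EuclideanSpace ℝ (Fin n), ‖u₀ x‖ with hN₀def
  have hMw0 : 0 ≤ Mw := integral_nonneg fun x => by positivity
  have hN₀0 : 0 ≤ N₀ := integral_nonneg fun x => by positivity
  set M : ℝ := Mw + N₀ with hMdef
  have hM0 : 0 ≤ M := by linarith
  set Cn : ℝ := ((n:ℝ)+1)^((n:ℝ)+1)
      * (∫ η : EuclideanSpace ℝ (Fin n), (1+‖η‖)^(-((n:ℝ)+1))) with hCndef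
  have hCn0 : 0 ≤ Cn := by
    apply mul_nonneg (by positivity)
    exact integral_nonneg fun η => by positivity
  refine ⟨100*Cn + 1, (n:ℝ) + 2, by linarith, by positivity, fun t htt => ?_⟩
  have hn1 : (1:ℝ) ≤ (n:ℝ) := by exact_mod_cast hn
  have ht3 : (3:ℝ) ≤ t := by linarith
  have htn : (n:ℝ)+1 ≤ t := by linarith
  have ht0 : (0:ℝ) < t := by linarith
  -- pointwise estimate
  have key : ∀ ξ : EuclideanSpace ℝ (Fin n),
      ‖w t ξ - ν t ξ‖^2 ≤ 100*M^2*(1+‖ξ‖)^(-t) := by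
    intro ξ
    set r : ℝ := ‖ξ‖ with hrdef
    have hr0 : 0 ≤ r := norm_nonneg _
    have h1r : (0:ℝ) < 1 + r := by linarith
    set A : ℝ := (1+r)^(-t) with hAdef
    have hA0 : 0 < A := Real.rpow_pos_of_pos h1r _
    set F₀ : ℂ := fourierTransformCLM' u₀ ξ with hF₀
    set F₁ : ℂ := fourierTransformCLM' u₁ ξ with hF₁
    have heq : w t ξ - ν t ξ = (A:ℂ) *
        (((Real.cos (b r * t) : ℝ) : ℂ) * F₀ +
         ((Real.log (1 + r) / b r : ℝ) : ℂ) * ((Real.sin (b r * t) : ℝ) : ℂ) * F₀ +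
         ((1 / b r : ℝ) : ℂ) * ((Real.sin (b r * t) : ℝ) : ℂ) * (F₁ - P₁)) := by
      simp only [w, ν, ← hrdef, ← hAdef, ← hF₀, ← hF₁]
      ring
    have hnorm : ‖w t ξ - ν t ξ‖ ≤ A * (5 * M * (1 + t*r)) := by
      rw [heq, norm_mul, Complex.norm_real, Real.norm_eq_abs, abs_of_nonneg hA0.le]
      refine mul_le_mul_of_nonneg_left ?_ hA0.le
      refine le_trans norm_add₃_le ?_
      simp only [norm_mul, Complex.norm_real]
      have hbr : b r = Real.sqrt (r^2 - Real.log (1+r)^2) := rfl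
      rw [hbr]
      refine real_pointwise ht3 hr0 hM0 (norm_nonneg _) ?_ (norm_nonneg _) ?_ ?_
      · exact le_trans (norm_ft_le u₀ ξ) (by rw [← hN₀def]; linarith)
      · refine le_trans (ft_sub_le' hu₁ hu₁w ξ) ?_
        rw [← hMwdef]; linarith
      · refine le_trans (ft_sub_le hu₁ hu₁w ξ) ?_
        rw [← hMwdef, ← hrdef]
        nlinarith
    have hsq : ‖w t ξ - ν t ξ‖^2 ≤ (A * (5 * M * (1 + t*r)))^2 :=
      pow_le_pow_left₀ (norm_nonneg _) hnorm 2
    have hBern : 1 + t/2 * r ≤ (1+r)^(t/2) :=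
      one_add_mul_self_le_rpow_one_add (by linarith) (by linarith)
    have h1tr : 1 + t*r ≤ 2*(1+r)^(t/2) := by nlinarith
    have htr0 : 0 ≤ 1 + t*r := by positivity
    have hsq2 : (1+t*r)^2 ≤ 4*((1+r)^(t/2))^2 := by nlinarith
    have hpow : ((1+r)^(t/2))^2 = (1+r)^t := by
      rw [← Real.rpow_natCast ((1+r)^(t/2)) 2, ← Real.rpow_mul h1r.le]
      norm_num
    have hAsq : A^2 * (1+r)^t = A := by
      rw [hAdef, ← Real.rpow_natCast ((1+r)^(-t)) 2, ← Real.rpow_mul h1r.le,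
        ← Real.rpow_add h1r]
      congr 1
      ring
    calc ‖w t ξ - ν t ξ‖^2 ≤ (A * (5 * M * (1 + t*r)))^2 := hsq
      _ = 25*M^2 * ((1+t*r)^2 * A^2) := by ring
      _ ≤ 25*M^2 * ((4*((1+r)^(t/2))^2) * A^2) := by
          exact mul_le_mul_of_nonneg_left (mul_le_mul_of_nonneg_right hsq2 (sq_nonneg A))
            (mul_nonneg (by norm_num) (sq_nonneg M))
      _ = 100*M^2 * (A^2 * (1+r)^t) := by rw [hpow]; ring
      _ = 100*M^2*(1+r)^(-t) := by rw [hAsq]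
  -- integrate
  have hfin : (Module.finrank ℝ (EuclideanSpace ℝ (Fin n)) : ℝ) < t := by
    rw [finrank_euclideanSpace_fin]; linarith
  have hint : Integrable (fun ξ : EuclideanSpace ℝ (Fin n) => 100*M^2*(1+‖ξ‖)^(-t)) :=
    (integrable_one_add_norm hfin).const_mul _
  have step1 : (∫ ξ : EuclideanSpace ℝ (Fin n), ‖w t ξ - ν t ξ‖^2)
      ≤ ∫ ξ : EuclideanSpace ℝ (Fin n), 100*M^2*(1+‖ξ‖)^(-t) :=
    integral_mono_of_nonneg (Filter.Eventually.of_forall fun ξ => by positivity) hint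
      (Filter.Eventually.of_forall key)
  have step2 : (∫ ξ : EuclideanSpace ℝ (Fin n), 100*M^2*(1+‖ξ‖)^(-t))
      = 100*M^2 * ∫ ξ : EuclideanSpace ℝ (Fin n), (1+‖ξ‖)^(-t) := integral_const_mul _ _
  have step3 := intA n hn htn
  have step4 : 100*M^2 * (∫ ξ : EuclideanSpace ℝ (Fin n), (1+‖ξ‖)^(-t))
      ≤ 100*M^2 * (Cn * t^(-(n:ℝ))) := by
    refine mul_le_mul_of_nonneg_left ?_ (by positivity)
    rw [hCndef]
    exact step3
  have htpos : 0 ≤ M^2 * t^(-(n:ℝ)) := by positivity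
  calc (∫ ξ : EuclideanSpace ℝ (Fin n), ‖w t ξ - ν t ξ‖^2)
      ≤ 100*M^2 * (Cn * t^(-(n:ℝ))) := by rw [← step2] at step4; linarith
    _ = 100*Cn * (M^2 * t^(-(n:ℝ))) := by ring
    _ ≤ (100*Cn + 1) * (M^2 * t^(-(n:ℝ))) := by nlinarith
    _ = (100*Cn + 1) * M^2 * t^(-(n:ℝ)) := by ring
end

section
/- Let n ≥ 1, μ ∈ (0, 2), u₀ ∈ L¹(ℝⁿ) and u₁ ∈ L^{1,1}(ℝⁿ). For ξ ∈ ℝⁿ \ {0} write r := |ξ| and b(r) := √(r² - (μ²/4) log²(1+r)), and define w(t,ξ) := (1+r)^{-μt/2} [ cos(b(r)t)·û₀(ξ) + (μ log(1+r)/(2b(r)))·sin(b(r)t)·û₀(ξ) + (1/b(r))·sin(b(r)t)·û₁(ξ) ], and P₁ := ∫_{ℝⁿ} u₁(x) dx. Then there exist constants C₁ > 0, C₂ > 0, α > 0 and t₀ > 0, depending only on n and μ, such that for all t ≥ t₀: C₁ |P₁| t^{1-n/2} ≤ (∫_{ℝⁿ} |w(t,ξ)|² dξ)^{1/2} ≤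 C₂ (‖u₁‖_{1,1} t^{-n/2} + ‖u₀‖₁ t^{-n/2} + |P₁| t^{1-n/2} + |P₁| e^{-αt}). -/
open MeasureTheory

namespace Stmt14Aux

lemma norm_exp_I (θ : ℝ) : ‖Complex.exp (-(Complex.I * (θ:ℂ)))‖ = 1 := by
  rw [Complex.norm_exp]
  simp

lemma exp_I_sub_one_le (θ : ℝ) : ‖Complex.exp (-(Complex.I * (θ:ℂ))) - 1‖ ≤ 2 * |θ| := by
  have habs : ‖(-(Complex.I * (θ:ℂ)))‖ = |θ| := by
    simp [map_mul]
  rcases le_or_gt (|θ|) 1 with h | h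
  · have := Complex.norm_exp_sub_one_le (x := -(Complex.I * (θ:ℂ))) (by rw [habs]; exact h)
    rw [habs] at this
    exact this
  · calc ‖Complex.exp (-(Complex.I * (θ:ℂ))) - 1‖
        ≤ ‖Complex.exp (-(Complex.I * (θ:ℂ)))‖ + ‖(1:ℂ)‖ := norm_sub_le _ _
      _ = 2 := by rw [norm_exp_I]; norm_num
      _ ≤ 2 * |θ| := by nlinarith

variable {n : ℕ}

lemma ft_integrand_integrable (u : EuclideanSpace ℝ (Fin n) → ℂ) (hu : Integrable u)
    (ξ : EuclideanSpace ℝ (Fin n)) :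
    Integrable (fun x => Complex.exp (-(Complex.I * ((inner ℝ x ξ : ℝ) : ℂ))) * u x) := by
  have hc : Continuous fun x : EuclideanSpace ℝ (Fin n) =>
      Complex.exp (-(Complex.I * ((inner ℝ x ξ : ℝ) : ℂ))) := by
    exact Complex.continuous_exp.comp ((continuous_const.mul (Complex.continuous_ofReal.comp
      ((continuous_id.inner continuous_const)))).neg)
  exact hu.bdd_mul hc.aestronglyMeasurable (c := 1) (Filter.Eventually.of_forall fun x => le_of_eq (norm_exp_I _))

lemma ft_norm_le (u : EuclideanSpace ℝ (Fin n) → ℂ) (ξ : EuclideanSpace ℝ (Fin n)) :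
    ‖fourierTransformCLM' u ξ‖ ≤ ∫ x, ‖u x‖ := by
  refine (norm_integral_le_integral_norm _).trans_eq ?_
  congr 1
  ext x
  rw [norm_mul, norm_exp_I, one_mul]

lemma ft_continuous (u : EuclideanSpace ℝ (Fin n) → ℂ) (hu : Integrable u) :
    Continuous (fourierTransformCLM' u) := by
  apply continuous_of_dominated (bound := fun x => ‖u x‖)
  · intro ξ; exact (ft_integrand_integrable u hu ξ).aestronglyMeasurable
  · intro ξ; filter_upwards with x
    rw [norm_mul, norm_exp_I, one_mul]
  · exact hu.norm
  · filter_upwards with x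
    exact (Complex.continuous_exp.comp ((continuous_const.mul (Complex.continuous_ofReal.comp
      ((continuous_const.inner continuous_id)))).neg)).mul continuous_const

lemma ft_sub_le (u : EuclideanSpace ℝ (Fin n) → ℂ) (hu : Integrable u)
    (hw : Integrable (fun x => ‖x‖ * ‖u x‖)) (ξ : EuclideanSpace ℝ (Fin n)) :
    ‖fourierTransformCLM' u ξ - ∫ x, u x‖ ≤ 2 * ‖ξ‖ * ∫ x, ‖x‖ * ‖u x‖ := by
  have h1 : fourierTransformCLM' u ξ - ∫ x, u x
      = ∫ x, (Complex.exp (-(Complex.I * ((inner ℝ x ξ : ℝ) : ℂ))) - 1) * u x := by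
    rw [fourierTransformCLM']
    rw [← integral_sub (ft_integrand_integrable u hu ξ) hu]
    congr 1; ext x; ring
  rw [h1]
  refine (norm_integral_le_integral_norm _).trans ?_
  rw [show (2:ℝ) * ‖ξ‖ * ∫ x, ‖x‖ * ‖u x‖ = ∫ x, 2 * ‖ξ‖ * (‖x‖ * ‖u x‖) from
    (integral_const_mul _ _).symm]
  refine integral_mono_of_nonneg (Filter.Eventually.of_forall fun x => norm_nonneg _)
    (hw.const_mul _) (Filter.Eventually.of_forall fun x => ?_)
  simp only []
  rw [norm_mul]
  have h2 : ‖Complex.exp (-(Complex.I * ((inner ℝ x ξ : ℝ) : ℂ))) - 1‖ ≤ 2 * (‖x‖ * ‖ξ‖) := by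
    refine (exp_I_sub_one_le _).trans ?_
    have := abs_real_inner_le_norm x ξ
    nlinarith
  calc ‖Complex.exp (-(Complex.I * ((inner ℝ x ξ : ℝ) : ℂ))) - 1‖ * ‖u x‖
      ≤ 2 * (‖x‖ * ‖ξ‖) * ‖u x‖ := by
        exact mul_le_mul_of_nonneg_right h2 (norm_nonneg _)
    _ = 2 * ‖ξ‖ * (‖x‖ * ‖u x‖) := by ring

lemma pow_div_factorial_le_exp (x : ℝ) (hx : 0 ≤ x) (m : ℕ) :
    x ^ m / (Nat.factorial m : ℝ) ≤ Real.exp x :=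
  calc x ^ m / (Nat.factorial m : ℝ)
      ≤ ∑ i ∈ Finset.range (m+1), x ^ i / (Nat.factorial i : ℝ) :=
        Finset.single_le_sum (f := fun i => x ^ i / (Nat.factorial i : ℝ))
          (fun i _ => by positivity) (Finset.self_mem_range_succ m)
    _ ≤ Real.exp x := Real.sum_le_exp_of_nonneg hx _

lemma log_two_mul_le_log (r : ℝ) (hr0 : 0 ≤ r) (hr1 : r ≤ 1) :
    r * Real.log 2 ≤ Real.log (1 + r) := by
  have hcc := strictConcaveOn_log_Ioi.concaveOn
  have h := hcc.2 (Set.mem_Ioi.2 one_pos) (Set.mem_Ioi.2 two_pos)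
    (sub_nonneg.2 hr1) hr0 (by ring)
  simp only [smul_eq_mul, Real.log_one, mul_zero, zero_add] at h
  calc r * Real.log 2 ≤ Real.log ((1-r) * 1 + r * 2) := h
    _ = Real.log (1 + r) := by ring_nf

lemma one_add_pow_le (s : ℝ) (hs : 0 ≤ s) (m : ℕ) (hm : 1 ≤ m) :
    (1 + s) ^ m ≤ (m : ℝ) ^ m * Real.exp s := by
  have hm' : (1:ℝ) ≤ (m:ℝ) := by exact_mod_cast hm
  have h1 : (1 + s) ≤ (m : ℝ) * Real.exp (s / m) := by
    have h2 : s / m + 1 ≤ Real.exp (s / m) := Real.add_one_le_exp _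
    have h3 : (m:ℝ) * (s/m + 1) ≤ (m:ℝ) * Real.exp (s/m) := by
      exact mul_le_mul_of_nonneg_left h2 (by linarith)
    have h4 : (m:ℝ) * (s/m+1) = s + m := by field_simp
    nlinarith
  calc (1 + s) ^ m ≤ ((m:ℝ) * Real.exp (s / m)) ^ m := by
        exact pow_le_pow_left₀ (by positivity) h1 m
    _ = (m:ℝ) ^ m * Real.exp (s / m) ^ m := by rw [mul_pow]
    _ = (m:ℝ) ^ m * Real.exp s := by
        rw [← Real.exp_nat_mul]
        congr 2
        field_simp

lemma exp_mul_pow_le (n k : ℕ) (s : ℝ) (hs : 0 ≤ s) :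
    Real.exp (-s) * s ^ k ≤ ((n+1+k : ℕ) : ℝ) ^ (n+1+k) * (1 + s) ^ (-((n:ℝ)+1)) := by
  set m := n + 1 + k with hm
  have h1 : (1 + s) ^ (-((n:ℝ)+1)) = ((1+s) ^ ((n+1 : ℕ)) : ℝ)⁻¹ := by
    rw [← Real.rpow_natCast (1+s) (n+1), ← Real.rpow_neg (by positivity)]
    norm_num
  have hb : (0:ℝ) < (1+s) ^ (n+1 : ℕ) := by positivity
  rw [h1, ← div_eq_mul_inv, le_div_iff₀ hb]
  have key : Real.exp (-s) * s ^ k * (1+s)^(n+1:ℕ)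
      ≤ Real.exp (-s) * ((1+s) ^ m) := by
    have : s ^ k * (1+s)^(n+1:ℕ) ≤ (1+s) ^ m := by
      calc s ^ k * (1+s)^(n+1:ℕ) ≤ (1+s) ^ k * (1+s)^(n+1:ℕ) := by
            exact mul_le_mul_of_nonneg_right (pow_le_pow_left₀ hs (by linarith) k) hb.le
        _ = (1+s) ^ m := by rw [← pow_add, hm]; ring_nf
    calc Real.exp (-s) * s ^ k * (1+s)^(n+1:ℕ) = Real.exp (-s) * (s^k * (1+s)^(n+1:ℕ)) := by ring
      _ ≤ Real.exp (-s) * ((1+s)^m) := by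
          exact mul_le_mul_of_nonneg_left this (Real.exp_pos _).le
  refine key.trans ?_
  have h2 := one_add_pow_le s hs m (by omega)
  calc Real.exp (-s) * (1+s)^m ≤ Real.exp (-s) * ((m:ℝ)^m * Real.exp s) := by
        exact mul_le_mul_of_nonneg_left h2 (Real.exp_pos _).le
    _ = ((m:ℕ):ℝ)^m := by
        rw [Real.exp_neg]
        have := Real.exp_pos s
        field_simp

lemma integrable_exp_norm_pow (n k : ℕ) (hn : 1 ≤ n) :
    Integrable (fun y : EuclideanSpace ℝ (Fin n) => Real.exp (-‖y‖) * ‖y‖ ^ k) := by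
  have hnr : ((Module.finrank ℝ (EuclideanSpace ℝ (Fin n))) : ℝ) < (n:ℝ)+1 := by
    rw [finrank_euclideanSpace_fin]; linarith
  refine ((integrable_one_add_norm (μ := volume) hnr).const_mul
    (((n+1+k : ℕ) : ℝ) ^ (n+1+k))).mono' ?_ ?_
  · exact ((Real.continuous_exp.comp continuous_norm.neg).mul
      (continuous_norm.pow k)).aestronglyMeasurable
  · filter_upwards with y
    rw [Real.norm_eq_abs, abs_of_nonneg (by positivity)]
    exact exp_mul_pow_le n k ‖y‖ (norm_nonneg y)

lemma integrable_exp_c (n k : ℕ) (hn : 1 ≤ n) {c : ℝ} (hc : 0 < c) :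
    Integrable (fun ξ : EuclideanSpace ℝ (Fin n) => Real.exp (-(c * ‖ξ‖)) * ‖ξ‖ ^ k) := by
  have h := (integrable_exp_norm_pow n k hn).comp_smul (R := c) hc.ne'
  have heq : (fun ξ : EuclideanSpace ℝ (Fin n) => Real.exp (-(c * ‖ξ‖)) * ‖ξ‖ ^ k)
      = fun ξ => (c^k)⁻¹ * (Real.exp (-‖c • ξ‖) * ‖c • ξ‖ ^ k) := by
    funext ξ
    rw [norm_smul, Real.norm_eq_abs, abs_of_pos hc, mul_pow]
    field_simp
  rw [heq]
  exact h.const_mul _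

lemma integral_exp_c (n k : ℕ) (hn : 1 ≤ n) {c : ℝ} (hc : 0 < c) :
    ∫ ξ : EuclideanSpace ℝ (Fin n), Real.exp (-(c * ‖ξ‖)) * ‖ξ‖ ^ k
      = (c ^ (n + k))⁻¹ * ∫ y : EuclideanSpace ℝ (Fin n), Real.exp (-‖y‖) * ‖y‖ ^ k := by
  have h := Measure.integral_comp_smul_of_nonneg (μ := volume)
    (f := fun y : EuclideanSpace ℝ (Fin n) => Real.exp (-‖y‖) * ‖y‖ ^ k) c (hR := hc.le)
  rw [finrank_euclideanSpace_fin] at h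
  have heq : ∀ ξ : EuclideanSpace ℝ (Fin n),
      Real.exp (-‖c • ξ‖) * ‖c • ξ‖ ^ k = c^k * (Real.exp (-(c * ‖ξ‖)) * ‖ξ‖ ^ k) := by
    intro ξ
    rw [norm_smul, Real.norm_eq_abs, abs_of_pos hc, mul_pow]
    ring
  simp only [heq] at h
  rw [integral_const_mul, smul_eq_mul] at h
  have hck : (0:ℝ) < c ^ k := by positivity
  have hcn : (0:ℝ) < c ^ n := by positivity
  field_simp [pow_add] at h ⊢
  rw [← h]; ring

/-- Main kernel estimate: integrability and decay of `∫ (1+|ξ|)^{-μt} |ξ|^k dξ`. -/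
lemma kernel_bound (n k : ℕ) (hn : 1 ≤ n) {μ : ℝ} (hμ0 : 0 < μ) :
    ∃ C T₀ : ℝ, 0 < C ∧ 1 ≤ T₀ ∧ ∀ t : ℝ, T₀ ≤ t →
      Integrable (fun ξ : EuclideanSpace ℝ (Fin n) => (1+‖ξ‖) ^ (-(μ*t)) * ‖ξ‖^k) ∧
      ∫ ξ : EuclideanSpace ℝ (Fin n), (1+‖ξ‖) ^ (-(μ*t)) * ‖ξ‖^k
        ≤ C * t ^ (-((n:ℝ)+k)) := by
  set T₀ : ℝ := max 1 ((n+1+k+2)/μ) with hT₀def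
  have hT₀1 : (1:ℝ) ≤ T₀ := le_max_left _ _
  have hT₀pos : (0:ℝ) < T₀ := lt_of_lt_of_le one_pos hT₀1
  have hμT₀ : (n:ℝ)+1+k ≤ μ * T₀ := by
    have h1 : ((n:ℝ)+1+k+2)/μ ≤ T₀ := le_max_right _ _
    have := (div_le_iff₀ hμ0).mp h1
    nlinarith
  set c : ℝ := μ * Real.log 2 with hcdef
  have hlog2 : (0:ℝ) < Real.log 2 := Real.log_pos (by norm_num)
  have hc : 0 < c := mul_pos hμ0 hlog2
  set m : ℕ := n + k with hmdef
  set E : ℝ := ∫ y : EuclideanSpace ℝ (Fin n), Real.exp (-‖y‖) * ‖y‖ ^ k with hEdef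
  have hE : 0 ≤ E := integral_nonneg fun y => by positivity
  set J : ℝ := ∫ y : EuclideanSpace ℝ (Fin n), (1+‖y‖) ^ (-((n:ℝ)+1)) with hJdef
  have hJ : 0 ≤ J := integral_nonneg fun y => by positivity
  have hJint : Integrable (fun y : EuclideanSpace ℝ (Fin n) => (1+‖y‖) ^ (-((n:ℝ)+1))) := by
    apply integrable_one_add_norm
    rw [finrank_euclideanSpace_fin]; linarith
  refine ⟨(c^m)⁻¹ * E + (2:ℝ)^(μ*T₀) * (Nat.factorial m : ℝ) * (c^m)⁻¹ * J + 1, T₀,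
    by positivity, hT₀1, fun t ht => ?_⟩
  have ht1 : (1:ℝ) ≤ t := hT₀1.trans ht
  have htpos : (0:ℝ) < t := lt_of_lt_of_le one_pos ht1
  set D : ℝ := (2:ℝ)^(μ*T₀) * (2:ℝ)^(-(μ*t)) with hDdef
  have hD : 0 ≤ D := by positivity
  have hpt : ∀ ξ : EuclideanSpace ℝ (Fin n), (1+‖ξ‖) ^ (-(μ*t)) * ‖ξ‖^k
      ≤ Real.exp (-(c*t*‖ξ‖)) * ‖ξ‖^k + D * (1+‖ξ‖) ^ (-((n:ℝ)+1)) := by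
    intro ξ
    set r : ℝ := ‖ξ‖ with hrdef
    have hr0 : 0 ≤ r := norm_nonneg _
    have hr1 : (0:ℝ) < 1 + r := by linarith
    rcases le_or_gt r 1 with hle | hgt
    · have h1 : (1+r) ^ (-(μ*t)) ≤ Real.exp (-(c*t*r)) := by
        rw [Real.rpow_def_of_pos hr1]
        apply Real.exp_le_exp.2
        have h2 : r * Real.log 2 ≤ Real.log (1+r) := log_two_mul_le_log r hr0 hle
        have hμt : 0 ≤ μ * t := by positivity
        calc Real.log (1+r) * (-(μ*t)) = -((μ*t) * Real.log (1+r)) := by ring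
          _ ≤ -((μ*t) * (r * Real.log 2)) := by
              exact neg_le_neg (mul_le_mul_of_nonneg_left h2 hμt)
          _ = -(c*t*r) := by rw [hcdef]; ring
      have h3 : (1+r) ^ (-(μ*t)) * r^k ≤ Real.exp (-(c*t*r)) * r^k :=
        mul_le_mul_of_nonneg_right h1 (by positivity)
      have h4 : 0 ≤ D * (1+r) ^ (-((n:ℝ)+1)) := by positivity
      linarith
    · have h2r : (2:ℝ) ≤ 1 + r := by linarith
      have key : (1+r) ^ (-(μ*t)) * r^k ≤ D * (1+r) ^ (-((n:ℝ)+1)) := by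
        have e1 : r^k ≤ (1+r) ^ (k:ℝ) := by
          rw [Real.rpow_natCast]
          exact pow_le_pow_left₀ hr0 (by linarith) k
        have e2 : (1+r) ^ (-(μ*t)) * r^k ≤ (1+r) ^ (-(μ*t) + k) := by
          rw [Real.rpow_add hr1]
          exact mul_le_mul_of_nonneg_left e1 (by positivity)
        refine e2.trans ?_
        have split : (-(μ*t) + k : ℝ) = (-(μ*(t - T₀))) + (-(μ*T₀) + k) := by ring
        rw [split, Real.rpow_add hr1]
        have f1 : (1+r) ^ (-(μ*(t-T₀))) ≤ (2:ℝ) ^ (-(μ*(t-T₀))) := by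
          have hex : 0 ≤ μ*(t-T₀) := by
            have : 0 ≤ t - T₀ := by linarith
            positivity
          rw [Real.rpow_neg hr1.le, Real.rpow_neg (by norm_num : (0:ℝ) ≤ 2)]
          exact inv_anti₀ (Real.rpow_pos_of_pos two_pos _)
            (Real.rpow_le_rpow (by norm_num) h2r hex)
        have f2 : (1+r) ^ (-(μ*T₀) + k) ≤ (1+r) ^ (-((n:ℝ)+1)) := by
          apply Real.rpow_le_rpow_of_exponent_le (by linarith)
          linarith [hμT₀]
        have f3 : (2:ℝ) ^ (-(μ*(t-T₀))) = D := by
          rw [hDdef, ← Real.rpow_add two_pos]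
          congr 1; ring
        calc (1+r) ^ (-(μ*(t-T₀))) * (1+r) ^ (-(μ*T₀) + k)
            ≤ (2:ℝ) ^ (-(μ*(t-T₀))) * (1+r) ^ (-((n:ℝ)+1)) := by
              apply mul_le_mul f1 f2 (by positivity) (by positivity)
          _ = D * (1+r) ^ (-((n:ℝ)+1)) := by rw [f3]
      have h4 : 0 ≤ Real.exp (-(c*t*r)) * r^k := by positivity
      linarith
  have hct : 0 < c * t := by positivity
  have hmajint : Integrable (fun ξ : EuclideanSpace ℝ (Fin n) =>
      Real.exp (-(c*t*‖ξ‖)) * ‖ξ‖^k + D * (1+‖ξ‖) ^ (-((n:ℝ)+1))) :=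
    (integrable_exp_c n k hn hct).add (hJint.const_mul D)
  have hkermeas : AEStronglyMeasurable
      (fun ξ : EuclideanSpace ℝ (Fin n) => (1+‖ξ‖) ^ (-(μ*t)) * ‖ξ‖^k) volume := by
    apply Continuous.aestronglyMeasurable
    apply Continuous.mul ?_ (continuous_norm.pow k)
    apply Continuous.rpow_const (by fun_prop)
    intro ξ; left; positivity
  have hkerint : Integrable (fun ξ : EuclideanSpace ℝ (Fin n) => (1+‖ξ‖) ^ (-(μ*t)) * ‖ξ‖^k) := by
    refine hmajint.mono' hkermeas ?_
    filter_upwards with ξ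
    rw [Real.norm_eq_abs, abs_of_nonneg (by positivity)]
    exact hpt ξ
  refine ⟨hkerint, ?_⟩
  have hIle : ∫ ξ : EuclideanSpace ℝ (Fin n), (1+‖ξ‖) ^ (-(μ*t)) * ‖ξ‖^k
      ≤ ∫ ξ : EuclideanSpace ℝ (Fin n),
        (Real.exp (-(c*t*‖ξ‖)) * ‖ξ‖^k + D * (1+‖ξ‖) ^ (-((n:ℝ)+1))) :=
    integral_mono_of_nonneg (Filter.Eventually.of_forall fun ξ => by positivity)
      hmajint (Filter.Eventually.of_forall hpt)
  have hsplit : ∫ ξ : EuclideanSpace ℝ (Fin n),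
      (Real.exp (-(c*t*‖ξ‖)) * ‖ξ‖^k + D * (1+‖ξ‖) ^ (-((n:ℝ)+1)))
      = ((c*t) ^ (n+k))⁻¹ * E + D * J := by
    rw [integral_add (integrable_exp_c n k hn hct) (hJint.const_mul D),
      integral_const_mul, ← hJdef]
    congr 1
    have := integral_exp_c n k hn hct
    rw [← hEdef] at this
    simpa using this
  have hDle : D ≤ (2:ℝ)^(μ*T₀) * (Nat.factorial m : ℝ) * ((c*t)^m)⁻¹ := by
    have h2 : (2:ℝ)^(-(μ*t)) ≤ (Nat.factorial m : ℝ) * ((c*t)^m)⁻¹ := by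
      have hx : (0:ℝ) ≤ c * t := hct.le
      have hpfe := pow_div_factorial_le_exp (c*t) hx m
      have h2e : (2:ℝ)^(-(μ*t)) = (Real.exp (c*t))⁻¹ := by
        rw [Real.rpow_def_of_pos two_pos, ← Real.exp_neg]
        congr 1
        rw [hcdef]; ring
      rw [h2e]
      rw [div_le_iff₀ (by positivity : (0:ℝ) < (Nat.factorial m : ℝ))] at hpfe
      have hexppos := Real.exp_pos (c*t)
      have hctm : (0:ℝ) < (c*t)^m := by positivity
      rw [← one_div, ← div_eq_mul_inv, div_le_div_iff₀ hexppos hctm]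
      nlinarith [hpfe]
    calc D = (2:ℝ)^(μ*T₀) * (2:ℝ)^(-(μ*t)) := hDdef
      _ ≤ (2:ℝ)^(μ*T₀) * ((Nat.factorial m : ℝ) * ((c*t)^m)⁻¹) := by
          exact mul_le_mul_of_nonneg_left h2 (by positivity)
      _ = (2:ℝ)^(μ*T₀) * (Nat.factorial m : ℝ) * ((c*t)^m)⁻¹ := by ring
  rw [hsplit] at hIle
  refine hIle.trans ?_
  have htm : (0:ℝ) < (t:ℝ)^m := by positivity
  have hrw : t ^ (-((n:ℝ)+k)) = ((t^m : ℝ))⁻¹ := by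
    rw [← Real.rpow_natCast t m, ← Real.rpow_neg htpos.le]
    congr 1
    rw [hmdef]
    push_cast
    ring
  rw [hrw]
  have e1 : ((c*t)^(n+k))⁻¹ * E = (c^m)⁻¹ * E * ((t:ℝ)^m)⁻¹ := by
    rw [← hmdef, mul_pow, mul_inv]; ring
  have e2 : D * J ≤ (2:ℝ)^(μ*T₀) * (Nat.factorial m : ℝ) * ((c*t)^m)⁻¹ * J :=
    mul_le_mul_of_nonneg_right hDle hJ
  have e3 : (2:ℝ)^(μ*T₀) * (Nat.factorial m : ℝ) * ((c*t)^m)⁻¹ * J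
      = ((2:ℝ)^(μ*T₀) * (Nat.factorial m : ℝ) * (c^m)⁻¹ * J) * ((t:ℝ)^m)⁻¹ := by
    rw [mul_pow, mul_inv]; ring
  have e4 : ((c^m)⁻¹ * E + (2:ℝ)^(μ*T₀) * (Nat.factorial m : ℝ) * (c^m)⁻¹ * J)
      * ((t:ℝ)^m)⁻¹
      ≤ ((c^m)⁻¹ * E + (2:ℝ)^(μ*T₀) * (Nat.factorial m : ℝ) * (c^m)⁻¹ * J + 1)
      * ((t:ℝ)^m)⁻¹ := by
    apply mul_le_mul_of_nonneg_right (by linarith) (by positivity)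
  nlinarith [e4]

lemma sq3_bound (a b c : ℝ) : (a+(b+c))^2 ≤ 3*a^2+3*b^2+3*c^2 := by
  nlinarith [sq_nonneg (a-b), sq_nonneg (a-c), sq_nonneg (b-c)]

lemma sqrt_add3 (a b c : ℝ) (ha : 0 ≤ a) (hb : 0 ≤ b) (hc : 0 ≤ c) :
    Real.sqrt (a + b + c) ≤ Real.sqrt a + Real.sqrt b + Real.sqrt c := by
  have h : a + b + c ≤ (Real.sqrt a + Real.sqrt b + Real.sqrt c)^2 := by
    nlinarith [Real.sq_sqrt ha, Real.sq_sqrt hb, Real.sq_sqrt hc,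
      Real.sqrt_nonneg a, Real.sqrt_nonneg b, Real.sqrt_nonneg c,
      mul_nonneg (Real.sqrt_nonneg a) (Real.sqrt_nonneg b),
      mul_nonneg (Real.sqrt_nonneg a) (Real.sqrt_nonneg c),
      mul_nonneg (Real.sqrt_nonneg b) (Real.sqrt_nonneg c)]
  calc Real.sqrt (a+b+c) ≤ Real.sqrt ((Real.sqrt a + Real.sqrt b + Real.sqrt c)^2) :=
        Real.sqrt_le_sqrt h
    _ = Real.sqrt a + Real.sqrt b + Real.sqrt c := Real.sqrt_sq (by positivity)

end Stmt14Aux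

set_option maxHeartbeats 2000000 in
/-- Theorem 1.2: for `μ ∈ (0,2)`, `u₀ ∈ L¹`, `u₁ ∈ L^{1,1}`,
`C₁ |P₁| t^{1-n/2} ≤ ‖w(t,·)‖_{L²} ≤ C₂(‖u₁‖_{1,1} t^{-n/2} + ‖u₀‖₁ t^{-n/2} +
|P₁| t^{1-n/2} + |P₁| e^{-αt})` for large `t`. -/
theorem stmt14 (n : ℕ) (hn : 1 ≤ n) (μ : ℝ) (hμ : μ ∈ Set.Ioo (0:ℝ) 2)
    (u₀ u₁ : EuclideanSpace ℝ (Fin n) → ℂ)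
    (hu₀ : Integrable u₀) (hu₁ : Integrable u₁)
    (hu₁w : Integrable (fun x : EuclideanSpace ℝ (Fin n) => (1 + ‖x‖) * ‖u₁ x‖)) :
    let b : ℝ → ℝ := fun r => Real.sqrt (r ^ 2 - μ ^ 2 / 4 * Real.log (1 + r) ^ 2)
    let P₁ : ℂ := ∫ x, u₁ x
    let w : ℝ → EuclideanSpace ℝ (Fin n) → ℂ := fun t ξ =>
      (((1 + ‖ξ‖) ^ (-(μ * t) / 2) : ℝ) : ℂ) *
        (((Real.cos (b ‖ξ‖ * t) : ℝ) : ℂ) * fourierTransformCLM' u₀ ξ +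
         ((μ * Real.log (1 + ‖ξ‖) / (2 * b ‖ξ‖) : ℝ) : ℂ) *
           ((Real.sin (b ‖ξ‖ * t) : ℝ) : ℂ) * fourierTransformCLM' u₀ ξ +
         ((1 / b ‖ξ‖ : ℝ) : ℂ) * ((Real.sin (b ‖ξ‖ * t) : ℝ) : ℂ) *
           fourierTransformCLM' u₁ ξ)
    ∃ C₁ C₂ α t₀ : ℝ, 0 < C₁ ∧ 0 < C₂ ∧ 0 < α ∧ 0 < t₀ ∧ ∀ t : ℝ, t₀ ≤ t →
      C₁ * ‖P₁‖ * t ^ (1 - (n : ℝ) / 2) ≤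
        Real.sqrt (∫ ξ : EuclideanSpace ℝ (Fin n), ‖w t ξ‖ ^ 2) ∧
      Real.sqrt (∫ ξ : EuclideanSpace ℝ (Fin n), ‖w t ξ‖ ^ 2) ≤
        C₂ * ((∫ x, (1 + ‖x‖) * ‖u₁ x‖) * t ^ (-(n : ℝ) / 2) +
          (∫ x, ‖u₀ x‖) * t ^ (-(n : ℝ) / 2) +
          ‖P₁‖ * t ^ (1 - (n : ℝ) / 2) + ‖P₁‖ * Real.exp (-α * t)) := by
  intro b P₁ w
  obtain ⟨hμ0, hμ2⟩ := hμ
  classical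
  haveI : Nontrivial (EuclideanSpace ℝ (Fin n)) := by
    apply Module.nontrivial_of_finrank_pos (R := ℝ)
    rw [finrank_euclideanSpace_fin]; omega
  -- basic constants
  set κ : ℝ := Real.sqrt (1 - μ^2/4) with hκdef
  have hκ : 0 < κ := Real.sqrt_pos.2 (by nlinarith)
  have hκ1 : κ ≤ 1 := Real.sqrt_le_one.2 (by nlinarith)
  have hb0 : ∀ r : ℝ, 0 ≤ b r := fun r => Real.sqrt_nonneg _
  have hlog_le : ∀ r : ℝ, 0 ≤ r → Real.log (1+r) ≤ r := by
    intro r hr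
    have := Real.log_le_sub_one_of_pos (show (0:ℝ) < 1+r by linarith)
    linarith
  have hlog0 : ∀ r : ℝ, 0 ≤ r → 0 ≤ Real.log (1+r) := fun r hr =>
    Real.log_nonneg (by linarith)
  have hblb : ∀ r : ℝ, 0 ≤ r → κ * r ≤ b r := by
    intro r hr
    have h1 : Real.sqrt ((1 - μ^2/4) * r^2) = κ * r := by
      rw [hκdef, Real.sqrt_mul (by nlinarith : (0:ℝ) ≤ 1 - μ^2/4), Real.sqrt_sq hr]
    rw [← h1]
    apply Real.sqrt_le_sqrt
    have h2 := hlog_le r hr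
    have h3 := hlog0 r hr
    nlinarith [sq_nonneg μ, mul_le_mul h2 h2 h3 hr]
  have hbub : ∀ r : ℝ, 0 ≤ r → b r ≤ r := by
    intro r hr
    have h2 := hlog_le r hr
    have h3 := hlog0 r hr
    have h4 : b r ≤ Real.sqrt (r^2) := Real.sqrt_le_sqrt
      (by nlinarith [sq_nonneg μ, sq_nonneg (Real.log (1+r))])
    rwa [Real.sqrt_sq hr] at h4
  -- data norms
  set A : ℝ := ∫ x, ‖u₀ x‖ with hAdef
  set M : ℝ := ∫ x, (1 + ‖x‖) * ‖u₁ x‖ with hMdef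
  have hA0 : 0 ≤ A := integral_nonneg fun x => norm_nonneg _
  have hM0 : 0 ≤ M := integral_nonneg fun x => by positivity
  set P : ℝ := ‖P₁‖ with hPdef
  have hP0 : 0 ≤ P := norm_nonneg _
  have hu₁n : Integrable (fun x : EuclideanSpace ℝ (Fin n) => ‖x‖ * ‖u₁ x‖) := by
    refine hu₁w.mono' ?_ ?_
    · exact continuous_norm.aestronglyMeasurable.mul hu₁.norm.aestronglyMeasurable
    · filter_upwards with x
      rw [Real.norm_eq_abs, abs_of_nonneg (by positivity)]
      nlinarith [norm_nonneg x, norm_nonneg (u₁ x)]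
  have hMn : (∫ x : EuclideanSpace ℝ (Fin n), ‖x‖ * ‖u₁ x‖) ≤ M := by
    apply integral_mono hu₁n hu₁w
    intro x
    show ‖x‖ * ‖u₁ x‖ ≤ (1 + ‖x‖) * ‖u₁ x‖
    nlinarith [norm_nonneg x, norm_nonneg (u₁ x)]
  set K₀ : ℝ := 1 + μ/(2*κ) with hK₀def
  have hK₀1 : 1 ≤ K₀ := by
    have : 0 ≤ μ/(2*κ) := div_nonneg hμ0.le (by linarith)
    rw [hK₀def]; linarith
  have hK₀0 : 0 < K₀ := lt_of_lt_of_le one_pos hK₀1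
  -- Fourier transform facts
  have hft₀c := Stmt14Aux.ft_continuous u₀ hu₀
  have hft₁c := Stmt14Aux.ft_continuous u₁ hu₁
  have hft₀ : ∀ ξ, ‖fourierTransformCLM' u₀ ξ‖ ≤ A := fun ξ => Stmt14Aux.ft_norm_le u₀ ξ
  have hftsub : ∀ ξ, ‖fourierTransformCLM' u₁ ξ - P₁‖ ≤ 2*‖ξ‖*M := by
    intro ξ
    have h1 := Stmt14Aux.ft_sub_le u₁ hu₁ hu₁n ξ
    rw [show (∫ x : EuclideanSpace ℝ (Fin n), u₁ x) = P₁ from rfl] at h1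
    have h3 : 2*‖ξ‖*(∫ x : EuclideanSpace ℝ (Fin n), ‖x‖*‖u₁ x‖) ≤ 2*‖ξ‖*M :=
      mul_le_mul_of_nonneg_left hMn (by positivity)
    linarith
  have hft₁ : ∀ ξ, ‖fourierTransformCLM' u₁ ξ‖ ≤ P + 2*‖ξ‖*M := by
    intro ξ
    have h2 : ‖fourierTransformCLM' u₁ ξ‖ ≤ ‖P₁‖ + ‖fourierTransformCLM' u₁ ξ - P₁‖ := by
      have e : P₁ + (fourierTransformCLM' u₁ ξ - P₁) = fourierTransformCLM' u₁ ξ := by ring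
      calc ‖fourierTransformCLM' u₁ ξ‖ = ‖P₁ + (fourierTransformCLM' u₁ ξ - P₁)‖ := by rw [e]
        _ ≤ ‖P₁‖ + ‖fourierTransformCLM' u₁ ξ - P₁‖ := norm_add_le _ _
    have := hftsub ξ
    rw [hPdef]
    linarith
  have hft₁' : ∀ ξ, P - 2*‖ξ‖*M ≤ ‖fourierTransformCLM' u₁ ξ‖ := by
    intro ξ
    have h2 : ‖P₁‖ ≤ ‖fourierTransformCLM' u₁ ξ‖ + ‖fourierTransformCLM' u₁ ξ - P₁‖ := by
      have e : fourierTransformCLM' u₁ ξ - (fourierTransformCLM' u₁ ξ - P₁) = P₁ := by ring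
      calc ‖P₁‖ = ‖fourierTransformCLM' u₁ ξ - (fourierTransformCLM' u₁ ξ - P₁)‖ := by rw [e]
        _ ≤ ‖fourierTransformCLM' u₁ ξ‖ + ‖fourierTransformCLM' u₁ ξ - P₁‖ := norm_sub_le _ _
    have := hftsub ξ
    rw [hPdef]
    linarith
  -- coefficient bounds
  have hcoef_nonneg : ∀ r : ℝ, 0 ≤ r → 0 ≤ μ * Real.log (1+r) / (2 * b r) := by
    intro r hr
    have h1 := hlog0 r hr
    have h2 := hb0 r
    have h3 : 0 ≤ μ * Real.log (1+r) := mul_nonneg hμ0.le h1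
    exact div_nonneg h3 (by linarith)
  have hcoef_le : ∀ r : ℝ, 0 ≤ r → μ * Real.log (1+r) / (2 * b r) ≤ μ/(2*κ) := by
    intro r hr
    rcases eq_or_lt_of_le hr with heq | hpos
    · rw [← heq]
      simp only [Real.log_one, add_zero, mul_zero, zero_div]
      exact div_nonneg hμ0.le (by linarith)
    · have hbpos : 0 < b r := lt_of_lt_of_le (mul_pos hκ hpos) (hblb r hr)
      rw [div_le_div_iff₀ (by linarith) (by linarith)]
      have h1 := hblb r hr
      have h2 := hlog_le r hr
      have h3 := hlog0 r hr
      have h4 : κ * Real.log (1+r) ≤ κ * r := mul_le_mul_of_nonneg_left h2 hκ.le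
      nlinarith [hμ0.le]
  have hsin_div : ∀ (r t' : ℝ), 0 ≤ r → 0 ≤ t' → (1 / b r) * |Real.sin (b r * t')| ≤ t' := by
    intro r t' hr ht'
    rcases (hb0 r).eq_or_lt with h | h
    · rw [← h]
      simpa using ht'
    · have habs : |Real.sin (b r * t')| ≤ b r * t' := by
        have h1 := Real.abs_sin_le_abs (x := b r * t')
        rwa [abs_of_nonneg (mul_nonneg (hb0 r) ht')] at h1
      calc (1 / b r) * |Real.sin (b r * t')| ≤ (1 / b r) * (b r * t') :=
            mul_le_mul_of_nonneg_left habs (one_div_nonneg.2 (hb0 r))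
        _ = t' := by field_simp
  clear_value κ A M P K₀
  -- norm of w as a product
  have hwnorm : ∀ (t:ℝ) (ξ : EuclideanSpace ℝ (Fin n)), ‖w t ξ‖
      = (1+‖ξ‖) ^ (-(μ*t)/2) *
        ‖((Real.cos (b ‖ξ‖ * t) : ℝ) : ℂ) * fourierTransformCLM' u₀ ξ +
         ((μ * Real.log (1 + ‖ξ‖) / (2 * b ‖ξ‖) : ℝ) : ℂ) *
           ((Real.sin (b ‖ξ‖ * t) : ℝ) : ℂ) * fourierTransformCLM' u₀ ξ +
         ((1 / b ‖ξ‖ : ℝ) : ℂ) * ((Real.sin (b ‖ξ‖ * t) : ℝ) : ℂ) *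
           fourierTransformCLM' u₁ ξ‖ := by
    intro t ξ
    rw [show w t ξ = (((1 + ‖ξ‖) ^ (-(μ * t) / 2) : ℝ) : ℂ) *
        (((Real.cos (b ‖ξ‖ * t) : ℝ) : ℂ) * fourierTransformCLM' u₀ ξ +
         ((μ * Real.log (1 + ‖ξ‖) / (2 * b ‖ξ‖) : ℝ) : ℂ) *
           ((Real.sin (b ‖ξ‖ * t) : ℝ) : ℂ) * fourierTransformCLM' u₀ ξ +
         ((1 / b ‖ξ‖ : ℝ) : ℂ) * ((Real.sin (b ‖ξ‖ * t) : ℝ) : ℂ) *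
           fourierTransformCLM' u₁ ξ) from rfl]
    rw [norm_mul, Complex.norm_real, Real.norm_eq_abs, abs_of_nonneg (by positivity)]
  -- bound on the u₀-part
  have hXY : ∀ (t:ℝ) (ξ : EuclideanSpace ℝ (Fin n)),
      ‖((Real.cos (b ‖ξ‖ * t) : ℝ) : ℂ) * fourierTransformCLM' u₀ ξ +
       ((μ * Real.log (1 + ‖ξ‖) / (2 * b ‖ξ‖) : ℝ) : ℂ) *
         ((Real.sin (b ‖ξ‖ * t) : ℝ) : ℂ) * fourierTransformCLM' u₀ ξ‖ ≤ K₀ * A := by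
    intro t ξ
    have hr : (0:ℝ) ≤ ‖ξ‖ := norm_nonneg ξ
    refine (norm_add_le _ _).trans ?_
    have h1 : ‖((Real.cos (b ‖ξ‖ * t) : ℝ) : ℂ) * fourierTransformCLM' u₀ ξ‖ ≤ A := by
      rw [norm_mul, Complex.norm_real, Real.norm_eq_abs]
      calc |Real.cos (b ‖ξ‖ * t)| * ‖fourierTransformCLM' u₀ ξ‖ ≤ 1 * A :=
            mul_le_mul (Real.abs_cos_le_one _) (hft₀ ξ) (norm_nonneg _) one_pos.le
        _ = A := one_mul A
    have h2 : ‖((μ * Real.log (1 + ‖ξ‖) / (2 * b ‖ξ‖) : ℝ) : ℂ) *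
        ((Real.sin (b ‖ξ‖ * t) : ℝ) : ℂ) * fourierTransformCLM' u₀ ξ‖ ≤ μ/(2*κ) * A := by
      rw [norm_mul, norm_mul, Complex.norm_real, Complex.norm_real, Real.norm_eq_abs,
        Real.norm_eq_abs]
      have hc1 : |μ * Real.log (1+‖ξ‖) / (2 * b ‖ξ‖)| ≤ μ/(2*κ) := by
        rw [abs_of_nonneg (hcoef_nonneg _ hr)]
        exact hcoef_le _ hr
      have hc2 : |Real.sin (b ‖ξ‖ * t)| ≤ 1 :=
        abs_le.mpr ⟨Real.neg_one_le_sin _, Real.sin_le_one _⟩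
      have hμκ : (0:ℝ) ≤ μ/(2*κ) := div_nonneg hμ0.le (by linarith)
      calc |μ * Real.log (1+‖ξ‖) / (2 * b ‖ξ‖)| * |Real.sin (b ‖ξ‖ * t)| *
            ‖fourierTransformCLM' u₀ ξ‖
          ≤ (μ/(2*κ)) * 1 * A := by
            apply mul_le_mul _ (hft₀ ξ) (norm_nonneg _) (by linarith [hμκ])
            exact mul_le_mul hc1 hc2 (abs_nonneg _) hμκ
        _ = μ/(2*κ) * A := by ring
    rw [hK₀def]
    linarith
  -- pointwise upper bound
  have hup : ∀ (t:ℝ), 0 ≤ t → ∀ ξ, ‖w t ξ‖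
      ≤ (1+‖ξ‖) ^ (-(μ*t)/2) * (K₀*A + t*(P + 2*‖ξ‖*M)) := by
    intro t ht ξ
    have hr : (0:ℝ) ≤ ‖ξ‖ := norm_nonneg ξ
    rw [hwnorm t ξ]
    apply mul_le_mul_of_nonneg_left ?_ (by positivity)
    refine (norm_add_le _ _).trans ?_
    have hZ : ‖((1 / b ‖ξ‖ : ℝ) : ℂ) * ((Real.sin (b ‖ξ‖ * t) : ℝ) : ℂ) *
        fourierTransformCLM' u₁ ξ‖ ≤ t * (P + 2*‖ξ‖*M) := by
      rw [norm_mul, norm_mul, Complex.norm_real, Complex.norm_real, Real.norm_eq_abs,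
        Real.norm_eq_abs]
      have h1 : |1 / b ‖ξ‖| * |Real.sin (b ‖ξ‖ * t)| ≤ t := by
        rw [abs_of_nonneg (one_div_nonneg.2 (hb0 _))]
        exact hsin_div _ t hr ht
      exact mul_le_mul h1 (hft₁ ξ) (norm_nonneg _) ht
    linarith [hXY t ξ]
  -- pointwise squared upper bound
  have hup2 : ∀ (t:ℝ), 0 ≤ t → ∀ ξ, ‖w t ξ‖^2
      ≤ (3*K₀^2*A^2 + 3*t^2*P^2) * ((1+‖ξ‖) ^ (-(μ*t)) * ‖ξ‖^0)
        + 12*t^2*M^2 * ((1+‖ξ‖) ^ (-(μ*t)) * ‖ξ‖^2) := by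
    intro t ht ξ
    have h1 := hup t ht ξ
    have hw2 : ‖w t ξ‖^2 ≤ ((1+‖ξ‖) ^ (-(μ*t)/2))^2 * (K₀*A + t*(P + 2*‖ξ‖*M))^2 := by
      rw [← mul_pow]
      exact pow_le_pow_left₀ (norm_nonneg _) h1 2
    have hρ2 : ((1+‖ξ‖) ^ (-(μ*t)/2))^2 = (1+‖ξ‖) ^ (-(μ*t)) := by
      rw [← Real.rpow_natCast ((1+‖ξ‖) ^ (-(μ*t)/2)) 2, ← Real.rpow_mul (by positivity)]
      norm_num
    rw [hρ2] at hw2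
    have hker0 : (0:ℝ) ≤ (1+‖ξ‖) ^ (-(μ*t)) := by positivity
    have hsq : (K₀*A + t*(P + 2*‖ξ‖*M))^2 ≤ 3*K₀^2*A^2 + 3*t^2*P^2 + 12*t^2*M^2*‖ξ‖^2 := by
      have h5 : (K₀*A + t*(P + 2*‖ξ‖*M))^2 = (K₀*A + (t*P + t*(2*‖ξ‖*M)))^2 := by ring
      rw [h5]
      refine (Stmt14Aux.sq3_bound _ _ _).trans (le_of_eq ?_)
      ring
    calc ‖w t ξ‖^2 ≤ (1+‖ξ‖) ^ (-(μ*t)) * (K₀*A + t*(P + 2*‖ξ‖*M))^2 := hw2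
      _ ≤ (1+‖ξ‖) ^ (-(μ*t)) * (3*K₀^2*A^2 + 3*t^2*P^2 + 12*t^2*M^2*‖ξ‖^2) :=
          mul_le_mul_of_nonneg_left hsq hker0
      _ = (3*K₀^2*A^2 + 3*t^2*P^2) * ((1+‖ξ‖) ^ (-(μ*t)) * ‖ξ‖^0)
          + 12*t^2*M^2 * ((1+‖ξ‖) ^ (-(μ*t)) * ‖ξ‖^2) := by
          rw [pow_zero]; ring
  -- measurability
  have h1ne : ∀ ξ : EuclideanSpace ℝ (Fin n), (1:ℝ) + ‖ξ‖ ≠ 0 := by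
    intro ξ; positivity
  have hbc : Continuous (fun ξ : EuclideanSpace ℝ (Fin n) => b ‖ξ‖) := by
    apply Real.continuous_sqrt.comp
    exact (continuous_norm.pow 2).sub
      (continuous_const.mul (((continuous_const.add continuous_norm).log h1ne).pow 2))
  have hwmeas : ∀ (t:ℝ), AEStronglyMeasurable
      (fun ξ : EuclideanSpace ℝ (Fin n) => ‖w t ξ‖^2) volume := by
    intro t
    have hρc : Continuous (fun ξ : EuclideanSpace ℝ (Fin n) => ((1+‖ξ‖) ^ (-(μ*t)/2) : ℝ)) := by
      apply Continuous.rpow_const (continuous_const.add continuous_norm)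
      intro ξ; left; exact h1ne ξ
    have hcosm : Continuous fun ξ : EuclideanSpace ℝ (Fin n) => Real.cos (b ‖ξ‖ * t) :=
      Real.continuous_cos.comp (hbc.mul continuous_const)
    have hsinm : Continuous fun ξ : EuclideanSpace ℝ (Fin n) => Real.sin (b ‖ξ‖ * t) :=
      Real.continuous_sin.comp (hbc.mul continuous_const)
    have hcoefm : Measurable fun ξ : EuclideanSpace ℝ (Fin n) =>
        μ * Real.log (1+‖ξ‖) / (2 * b ‖ξ‖) :=
      ((continuous_const.mul ((continuous_const.add continuous_norm).log h1ne)).measurable).div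
        (continuous_const.mul hbc).measurable
    have hinvm : Measurable fun ξ : EuclideanSpace ℝ (Fin n) => 1 / b ‖ξ‖ :=
      measurable_const.div hbc.measurable
    have hwm : Measurable (w t) := by
      apply Measurable.mul
      · exact Complex.measurable_ofReal.comp hρc.measurable
      apply Measurable.add
      apply Measurable.add
      · exact (Complex.measurable_ofReal.comp hcosm.measurable).mul hft₀c.measurable
      · exact ((Complex.measurable_ofReal.comp hcoefm).mul
          (Complex.measurable_ofReal.comp hsinm.measurable)).mul hft₀c.measurable
      · exact ((Complex.measurable_ofReal.comp hinvm).mul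
          (Complex.measurable_ofReal.comp hsinm.measurable)).mul hft₁c.measurable
    exact ((hwm.norm).pow_const 2).aestronglyMeasurable
  -- kernel bounds
  obtain ⟨C0, T0, hC0, hT01, hker0⟩ := Stmt14Aux.kernel_bound n 0 hn hμ0
  obtain ⟨C2, T2, hC2, hT21, hker2⟩ := Stmt14Aux.kernel_bound n 2 hn hμ0
  set Tu : ℝ := max T0 T2 with hTudef
  have hTu1 : (1:ℝ) ≤ Tu := le_trans hT01 (le_max_left _ _)
  set C2f : ℝ := Real.sqrt (3*C0)*K₀ + Real.sqrt (3*C0) + Real.sqrt (12*C2) + 1 with hC2fdef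
  have hsq30 : (0:ℝ) ≤ Real.sqrt (3*C0) := Real.sqrt_nonneg _
  have hsq12 : (0:ℝ) ≤ Real.sqrt (12*C2) := Real.sqrt_nonneg _
  have hC2f : 0 < C2f := by
    rw [hC2fdef]
    linarith only [mul_nonneg hsq30 hK₀0.le, hsq30, hsq12]
  -- the upper bound, for all t ≥ Tu
  have hupper : ∀ t : ℝ, Tu ≤ t →
      Integrable (fun ξ : EuclideanSpace ℝ (Fin n) => ‖w t ξ‖^2) ∧
      Real.sqrt (∫ ξ : EuclideanSpace ℝ (Fin n), ‖w t ξ‖^2) ≤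
        C2f * (M * t^(-(n:ℝ)/2) + A * t^(-(n:ℝ)/2) + P * t^(1-(n:ℝ)/2)
          + P * Real.exp (-1*t)) := by
    intro t ht
    have ht1 : (1:ℝ) ≤ t := hTu1.trans ht
    have htpos : (0:ℝ) < t := lt_of_lt_of_le one_pos ht1
    obtain ⟨hint0, hbound0⟩ := hker0 t (le_trans (le_max_left _ _) ht)
    obtain ⟨hint2, hbound2⟩ := hker2 t (le_trans (le_max_right _ _) ht)
    push_cast at hbound0 hbound2
    rw [show -((n:ℝ)+0) = -(n:ℝ) by ring] at hbound0
    have hgint : Integrable (fun ξ : EuclideanSpace ℝ (Fin n) =>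
        (3*K₀^2*A^2 + 3*t^2*P^2) * ((1+‖ξ‖) ^ (-(μ*t)) * ‖ξ‖^0)
        + 12*t^2*M^2 * ((1+‖ξ‖) ^ (-(μ*t)) * ‖ξ‖^2)) :=
      (hint0.const_mul _).add (hint2.const_mul _)
    have hwint : Integrable (fun ξ : EuclideanSpace ℝ (Fin n) => ‖w t ξ‖^2) := by
      refine hgint.mono' (hwmeas t) ?_
      filter_upwards with ξ
      rw [Real.norm_eq_abs, abs_of_nonneg (by positivity)]
      exact hup2 t (le_trans zero_le_one ht1) ξ
    refine ⟨hwint, ?_⟩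
    have hIle : ∫ ξ : EuclideanSpace ℝ (Fin n), ‖w t ξ‖^2
        ≤ (3*K₀^2*A^2 + 3*t^2*P^2) * (C0 * t^(-(n:ℝ)))
          + 12*t^2*M^2 * (C2 * t^(-((n:ℝ)+2))) := by
      calc ∫ ξ : EuclideanSpace ℝ (Fin n), ‖w t ξ‖^2
          ≤ ∫ ξ : EuclideanSpace ℝ (Fin n),
            ((3*K₀^2*A^2 + 3*t^2*P^2) * ((1+‖ξ‖) ^ (-(μ*t)) * ‖ξ‖^0)
            + 12*t^2*M^2 * ((1+‖ξ‖) ^ (-(μ*t)) * ‖ξ‖^2)) :=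
            integral_mono_of_nonneg (Filter.Eventually.of_forall fun ξ => by positivity)
              hgint (Filter.Eventually.of_forall (hup2 t (le_trans zero_le_one ht1)))
        _ = (3*K₀^2*A^2 + 3*t^2*P^2) * (∫ ξ : EuclideanSpace ℝ (Fin n),
              (1+‖ξ‖) ^ (-(μ*t)) * ‖ξ‖^0)
            + 12*t^2*M^2 * (∫ ξ : EuclideanSpace ℝ (Fin n), (1+‖ξ‖) ^ (-(μ*t)) * ‖ξ‖^2) := by
            rw [integral_add (hint0.const_mul _) (hint2.const_mul _),
              integral_const_mul, integral_const_mul]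
        _ ≤ (3*K₀^2*A^2 + 3*t^2*P^2) * (C0 * t^(-(n:ℝ)))
            + 12*t^2*M^2 * (C2 * t^(-((n:ℝ)+2))) := by
            exact add_le_add (mul_le_mul_of_nonneg_left hbound0 (by positivity))
              (mul_le_mul_of_nonneg_left hbound2 (by positivity))
    -- rpow algebra
    set X : ℝ := t ^ (-(n:ℝ)/2) with hXdef
    set Y : ℝ := t ^ (1-(n:ℝ)/2) with hYdef
    have hXpos : 0 < X := Real.rpow_pos_of_pos htpos _
    have hYpos : 0 < Y := Real.rpow_pos_of_pos htpos _
    clear_value X Y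
    have eX : X^2 = t ^ (-(n:ℝ)) := by
      rw [hXdef, ← Real.rpow_natCast (t ^ (-(n:ℝ)/2)) 2, ← Real.rpow_mul htpos.le]
      norm_num
    have et2 : (t:ℝ)^2 = t ^ (2:ℝ) := by
      rw [show ((2:ℝ)) = ((2:ℕ):ℝ) by norm_num, Real.rpow_natCast]
    have eY : Y^2 = t^2 * t ^ (-(n:ℝ)) := by
      rw [hYdef, ← Real.rpow_natCast (t ^ (1-(n:ℝ)/2)) 2, ← Real.rpow_mul htpos.le]
      rw [et2, ← Real.rpow_add htpos]
      congr 1; ring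
    have eX2 : t^2 * t ^ (-((n:ℝ)+2)) = X^2 := by
      rw [eX, et2, ← Real.rpow_add htpos]
      congr 1; ring
    have hIfinal : ∫ ξ : EuclideanSpace ℝ (Fin n), ‖w t ξ‖^2
        ≤ (Real.sqrt (3*C0)*K₀*A*X)^2 + (Real.sqrt (3*C0)*P*Y)^2
          + (Real.sqrt (12*C2)*M*X)^2 := by
      have s1 : (Real.sqrt (3*C0))^2 = 3*C0 := Real.sq_sqrt (by positivity)
      have s2 : (Real.sqrt (12*C2))^2 = 12*C2 := Real.sq_sqrt (by positivity)
      refine hIle.trans (le_of_eq ?_)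
      have expand : (3*K₀^2*A^2 + 3*t^2*P^2) * (C0 * t^(-(n:ℝ)))
            + 12*t^2*M^2 * (C2 * t^(-((n:ℝ)+2)))
          = 3*C0*K₀^2*A^2*(t^(-(n:ℝ))) + 3*C0*P^2*(t^2 * t^(-(n:ℝ)))
            + 12*C2*M^2*(t^2*t^(-((n:ℝ)+2))) := by ring
      rw [expand, ← eY, eX2, ← eX]
      simp only [mul_pow]
      rw [s1, s2]
    have hfin1 : Real.sqrt (∫ ξ : EuclideanSpace ℝ (Fin n), ‖w t ξ‖^2)
        ≤ Real.sqrt (3*C0)*K₀*A*X + Real.sqrt (3*C0)*P*Y + Real.sqrt (12*C2)*M*X := by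
      calc Real.sqrt (∫ ξ : EuclideanSpace ℝ (Fin n), ‖w t ξ‖^2)
          ≤ Real.sqrt ((Real.sqrt (3*C0)*K₀*A*X)^2 + (Real.sqrt (3*C0)*P*Y)^2
            + (Real.sqrt (12*C2)*M*X)^2) := Real.sqrt_le_sqrt hIfinal
        _ ≤ Real.sqrt ((Real.sqrt (3*C0)*K₀*A*X)^2) + Real.sqrt ((Real.sqrt (3*C0)*P*Y)^2)
            + Real.sqrt ((Real.sqrt (12*C2)*M*X)^2) :=
            Stmt14Aux.sqrt_add3 _ _ _ (sq_nonneg _) (sq_nonneg _) (sq_nonneg _)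
        _ = Real.sqrt (3*C0)*K₀*A*X + Real.sqrt (3*C0)*P*Y + Real.sqrt (12*C2)*M*X := by
            rw [Real.sqrt_sq (mul_nonneg (mul_nonneg (mul_nonneg hsq30 hK₀0.le) hA0) hXpos.le),
              Real.sqrt_sq (mul_nonneg (mul_nonneg hsq30 hP0) hYpos.le),
              Real.sqrt_sq (mul_nonneg (mul_nonneg hsq12 hM0) hXpos.le)]
    refine hfin1.trans ?_
    have hexp0 : (0:ℝ) ≤ P * Real.exp (-1*t) := mul_nonneg hP0 (Real.exp_pos _).le
    have h1 : Real.sqrt (3*C0)*K₀*A*X ≤ C2f*(A*X) := by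
      have : Real.sqrt (3*C0)*K₀ ≤ C2f := by
        rw [hC2fdef]; linarith only [hsq30, hsq12]
      calc Real.sqrt (3*C0)*K₀*A*X = (Real.sqrt (3*C0)*K₀)*(A*X) := by ring
        _ ≤ C2f*(A*X) := mul_le_mul_of_nonneg_right this (mul_nonneg hA0 hXpos.le)
    have h2 : Real.sqrt (3*C0)*P*Y ≤ C2f*(P*Y) := by
      have : Real.sqrt (3*C0) ≤ C2f := by
        rw [hC2fdef]; linarith only [mul_nonneg hsq30 hK₀0.le, hsq12]
      calc Real.sqrt (3*C0)*P*Y = (Real.sqrt (3*C0))*(P*Y) := by ring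
        _ ≤ C2f*(P*Y) := mul_le_mul_of_nonneg_right this (mul_nonneg hP0 hYpos.le)
    have h3 : Real.sqrt (12*C2)*M*X ≤ C2f*(M*X) := by
      have : Real.sqrt (12*C2) ≤ C2f := by
        rw [hC2fdef]; linarith only [mul_nonneg hsq30 hK₀0.le, hsq30]
      calc Real.sqrt (12*C2)*M*X = (Real.sqrt (12*C2))*(M*X) := by ring
        _ ≤ C2f*(M*X) := mul_le_mul_of_nonneg_right this (mul_nonneg hM0 hXpos.le)
    have hCexp : 0 ≤ C2f * (P * Real.exp (-1*t)) := mul_nonneg hC2f.le hexp0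
    linarith only [h1, h2, h3, hCexp]
  -- now split on P₁ = 0
  by_cases hP₁0 : P₁ = 0
  · refine ⟨1, C2f, 1, Tu, one_pos, hC2f, one_pos, lt_of_lt_of_le one_pos hTu1,
      fun t ht => ⟨?_, (hupper t ht).2⟩⟩
    have hz : P = 0 := by rw [hPdef, hP₁0, norm_zero]
    rw [show (1:ℝ) * P * t ^ (1 - (n:ℝ)/2) = P * t ^ (1 - (n:ℝ)/2) from by ring, hz,
      zero_mul]
    exact Real.sqrt_nonneg _
  · have hPpos : 0 < P := by rw [hPdef]; exact norm_pos_iff.mpr hP₁0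
    set σ : ℝ := 2/Real.pi * κ with hσdef
    have hπ0 := Real.pi_pos
    have hσ : 0 < σ := mul_pos (div_pos two_pos hπ0) hκ
    set β : ℝ := Real.exp (-(3*μ/4)) with hβdef
    have hβ : 0 < β := Real.exp_pos _
    set c₁ : ℝ := β*σ/3 with hc₁def
    have hc₁ : 0 < c₁ := div_pos (mul_pos hβ hσ) (by norm_num)
    set v : ℝ := (volume (Metric.ball (0:EuclideanSpace ℝ (Fin n)) 1)).toReal with hvdef
    have hv : 0 < v := ENNReal.toReal_pos (Metric.measure_ball_pos volume 0 one_pos).ne'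
      measure_ball_lt_top.ne
    set W : ℝ := ((3/2:ℝ)^n - 1) * v with hWdef
    have h32 : (1:ℝ) < (3/2:ℝ)^n := one_lt_pow₀ (by norm_num) (by omega)
    have hW : 0 < W := by rw [hWdef]; exact mul_pos (by linarith) hv
    set C₁ : ℝ := c₁ * Real.sqrt W with hC₁def
    have hC₁ : 0 < C₁ := mul_pos hc₁ (Real.sqrt_pos.2 hW)
    clear_value σ β c₁ v W C₁
    set t₁ : ℝ := max Tu (3*(2*σ*M + K₀*A)/(σ*P)) + 1 with ht₁def
    have ht₁Tu : Tu ≤ t₁ := by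
      rw [ht₁def]; have := le_max_left Tu (3*(2*σ*M + K₀*A)/(σ*P)); linarith
    have ht₁pos : 0 < t₁ := lt_of_lt_of_le (lt_of_lt_of_le one_pos hTu1) ht₁Tu
    refine ⟨C₁, C2f, 1, t₁, hC₁, hC2f, one_pos, ht₁pos, fun t ht => ?_⟩
    have htTu : Tu ≤ t := le_trans ht₁Tu ht
    refine ⟨?_, (hupper t htTu).2⟩
    have ht1 : (1:ℝ) ≤ t := hTu1.trans htTu
    have htpos : (0:ℝ) < t := lt_of_lt_of_le one_pos ht1
    have htσ : 3*(2*σ*M + K₀*A) ≤ σ*P*t := by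
      have h1 : 3*(2*σ*M + K₀*A)/(σ*P) ≤ t := by
        have := le_max_right Tu (3*(2*σ*M + K₀*A)/(σ*P))
        rw [ht₁def] at ht
        linarith
      rw [div_le_iff₀ (mul_pos hσ hPpos)] at h1
      linarith only [h1]
    set S : Set (EuclideanSpace ℝ (Fin n)) :=
      Metric.closedBall (0:EuclideanSpace ℝ (Fin n)) (3/(2*t))
        \ Metric.ball (0:EuclideanSpace ℝ (Fin n)) (1/t) with hSdef
    have hSmeas : MeasurableSet S := measurableSet_closedBall.diff measurableSet_ball
    have hrad : (1:ℝ)/t ≤ 3/(2*t) := by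
      rw [div_le_div_iff₀ htpos (by positivity)]; linarith
    have hSsub : Metric.ball (0:EuclideanSpace ℝ (Fin n)) (1/t)
        ⊆ Metric.closedBall (0:EuclideanSpace ℝ (Fin n)) (3/(2*t)) :=
      Metric.ball_subset_closedBall.trans (Metric.closedBall_subset_closedBall hrad)
    have hmem : ∀ ξ ∈ S, 1/t ≤ ‖ξ‖ ∧ ‖ξ‖ ≤ 3/(2*t) := by
      intro ξ hξ
      obtain ⟨h1, h2⟩ := hξ
      rw [Metric.mem_closedBall, dist_zero_right] at h1
      rw [Metric.mem_ball, dist_zero_right] at h2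
      exact ⟨not_lt.1 h2, h1⟩
    -- pointwise lower bound on S
    have hlow : ∀ ξ ∈ S, c₁*P*t ≤ ‖w t ξ‖ := by
      intro ξ hξ
      obtain ⟨hr1, hr2⟩ := hmem ξ hξ
      have hr0 : (0:ℝ) ≤ ‖ξ‖ := norm_nonneg ξ
      have hrpos : 0 < ‖ξ‖ := lt_of_lt_of_le (div_pos one_pos htpos) hr1
      have hbpos : 0 < b ‖ξ‖ := lt_of_lt_of_le (mul_pos hκ hrpos) (hblb _ hr0)
      have hbrt0 : (0:ℝ) ≤ b ‖ξ‖ * t := mul_nonneg (hb0 _) htpos.le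
      have hbrtκ : κ ≤ b ‖ξ‖ * t := by
        have hb1 := hblb _ hr0
        have h2 : κ * (1/t) ≤ κ * ‖ξ‖ := mul_le_mul_of_nonneg_left hr1 hκ.le
        calc κ = κ*(1/t)*t := by field_simp [htpos.ne']
          _ ≤ κ*‖ξ‖*t := mul_le_mul_of_nonneg_right h2 htpos.le
          _ ≤ b ‖ξ‖ * t := mul_le_mul_of_nonneg_right hb1 htpos.le
      have hbrt32 : b ‖ξ‖ * t ≤ 3/2 := by
        calc b ‖ξ‖ * t ≤ ‖ξ‖*t := mul_le_mul_of_nonneg_right (hbub _ hr0) htpos.le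
          _ ≤ (3/(2*t))*t := mul_le_mul_of_nonneg_right hr2 htpos.le
          _ = 3/2 := by field_simp [htpos.ne']
      have hπ3 := Real.pi_gt_three
      have hsinlb : σ ≤ Real.sin (b ‖ξ‖ * t) := by
        have habs : |b ‖ξ‖ * t| ≤ Real.pi/2 := by rw [abs_of_nonneg hbrt0]; linarith
        have h1 := Real.mul_abs_le_abs_sin habs
        have hsin0 : 0 ≤ Real.sin (b ‖ξ‖ * t) :=
          Real.sin_nonneg_of_nonneg_of_le_pi hbrt0 (by linarith)
        rw [abs_of_nonneg hbrt0, abs_of_nonneg hsin0] at h1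
        have h2 : 2/Real.pi * κ ≤ 2/Real.pi * (b ‖ξ‖ * t) :=
          mul_le_mul_of_nonneg_left hbrtκ (div_nonneg (by norm_num) hπ0.le)
        rw [hσdef]
        linarith
      have hsin0' : 0 ≤ Real.sin (b ‖ξ‖ * t) := le_trans hσ.le hsinlb
      have hinvb : 2*t/3 ≤ 1 / b ‖ξ‖ := by
        have h1 : b ‖ξ‖ ≤ 3/(2*t) := le_trans (hbub _ hr0) hr2
        have h2 := one_div_le_one_div_of_le hbpos h1
        rw [one_div_div] at h2
        exact h2
      have hftlb : P - 3*M/t ≤ ‖fourierTransformCLM' u₁ ξ‖ := by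
        have hft := hft₁' ξ
        have h4 : 2*‖ξ‖*M ≤ 2*(3/(2*t))*M := by
          apply mul_le_mul_of_nonneg_right _ hM0
          linarith
        have e : 2*(3/(2*t))*M = 3*M/t := by field_simp
        linarith
      have hPM : 0 ≤ P - 3*M/t := by
        have h1 : σ*(6*M) ≤ σ*(P*t) := by
          linarith only [htσ, mul_nonneg hK₀0.le hA0]
        have h2 : 6*M ≤ P*t := le_of_mul_le_mul_left h1 hσ
        rw [sub_nonneg, div_le_iff₀ htpos]
        linarith
      have hZval : ‖((1 / b ‖ξ‖ : ℝ) : ℂ) * ((Real.sin (b ‖ξ‖ * t) : ℝ) : ℂ) *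
          fourierTransformCLM' u₁ ξ‖
          = (1 / b ‖ξ‖) * Real.sin (b ‖ξ‖ * t) * ‖fourierTransformCLM' u₁ ξ‖ := by
        rw [norm_mul, norm_mul, Complex.norm_real, Complex.norm_real, Real.norm_eq_abs,
          Real.norm_eq_abs, abs_of_nonneg (one_div_nonneg.2 (hb0 _)),
          abs_of_nonneg hsin0']
      have hZlb : (2*t/3)*σ*(P - 3*M/t)
          ≤ (1 / b ‖ξ‖) * Real.sin (b ‖ξ‖ * t) * ‖fourierTransformCLM' u₁ ξ‖ := by
        exact mul_le_mul (mul_le_mul hinvb hsinlb hσ.le (one_div_nonneg.2 (hb0 _)))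
          hftlb hPM (mul_nonneg (one_div_nonneg.2 (hb0 _)) hsin0')
      -- triangle: ‖sum‖ ≥ ‖Z‖ − ‖X+Y‖
      set Z : ℂ := ((1 / b ‖ξ‖ : ℝ) : ℂ) * ((Real.sin (b ‖ξ‖ * t) : ℝ) : ℂ) *
        fourierTransformCLM' u₁ ξ with hZdef
      set XY : ℂ := ((Real.cos (b ‖ξ‖ * t) : ℝ) : ℂ) * fourierTransformCLM' u₀ ξ +
        ((μ * Real.log (1 + ‖ξ‖) / (2 * b ‖ξ‖) : ℝ) : ℂ) *
          ((Real.sin (b ‖ξ‖ * t) : ℝ) : ℂ) * fourierTransformCLM' u₀ ξ with hXYdef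
      clear_value Z XY
      have htri : ‖Z‖ - ‖XY‖ ≤ ‖XY + Z‖ := by
        have h := norm_sub_norm_le Z (-XY)
        rw [norm_neg] at h
        have e : Z - -XY = XY + Z := by ring
        rw [e] at h
        exact h
      have hZlb' : (2*t/3)*σ*(P - 3*M/t) ≤ ‖Z‖ := by rw [hZval]; exact hZlb
      have hXYub : ‖XY‖ ≤ K₀*A := by rw [hXYdef]; exact hXY t ξ
      have hsum : (σ/3)*(P*t) ≤ ‖XY + Z‖ := by
        have expand : (2*t/3)*σ*(P - 3*M/t) = (2*σ/3)*(P*t) - 2*σ*M := by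
          field_simp
        have hkey : (σ/3)*(P*t) ≤ (2*t/3)*σ*(P - 3*M/t) - K₀*A := by
          rw [expand]
          linarith only [htσ]
        linarith only [htri, hZlb', hXYub, hkey]
      have hρlb : β ≤ (1+‖ξ‖) ^ (-(μ*t)/2) := by
        rw [Real.rpow_def_of_pos (by positivity), hβdef]
        apply Real.exp_le_exp.2
        have h1 : Real.log (1+‖ξ‖) ≤ 3/(2*t) := le_trans (hlog_le _ hr0) hr2
        have h2 : Real.log (1+‖ξ‖) * (μ*t/2) ≤ (3/(2*t)) * (μ*t/2) :=
          mul_le_mul_of_nonneg_right h1 (by positivity)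
        have h3 : (3/(2*t))*(μ*t/2) = 3*μ/4 := by field_simp; ring
        rw [h3] at h2
        linarith only [h2]
      have hwn := hwnorm t ξ
      calc c₁*P*t = β*((σ/3)*(P*t)) := by rw [hc₁def]; ring
        _ ≤ ((1+‖ξ‖) ^ (-(μ*t)/2)) * ‖XY + Z‖ :=
            mul_le_mul hρlb hsum (mul_nonneg (div_nonneg hσ.le (by norm_num))
              (mul_nonneg hP0 htpos.le)) (by positivity)
        _ = ‖w t ξ‖ := by rw [hwn, hXYdef, hZdef]
    -- integral lower bound
    have hlow2 : ∀ ξ ∈ S, (c₁*P*t)^2 ≤ ‖w t ξ‖^2 := fun ξ hξ =>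
      pow_le_pow_left₀ (mul_nonneg (mul_nonneg hc₁.le hP0) htpos.le) (hlow ξ hξ) 2
    have hwint := (hupper t htTu).1
    have hμS_fin : volume S ≠ ⊤ :=
      (lt_of_le_of_lt (measure_mono Set.diff_subset) measure_closedBall_lt_top).ne
    have hS1 := setIntegral_ge_of_const_le hSmeas hμS_fin hlow2 hwint.integrableOn
    have hS2 : ∫ ξ in S, ‖w t ξ‖^2 ≤ ∫ ξ : EuclideanSpace ℝ (Fin n), ‖w t ξ‖^2 :=
      setIntegral_le_integral hwint (Filter.Eventually.of_forall fun ξ => by positivity)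
    have hvol : (volume S).toReal = ((3/2:ℝ)^n - 1) * (1/t)^n * v := by
      rw [hSdef, measure_diff hSsub measurableSet_ball.nullMeasurableSet
        measure_ball_lt_top.ne]
      have h32t : (0:ℝ) ≤ 3/(2*t) := (div_pos (by norm_num) (by linarith)).le
      have h1t0 : (0:ℝ) ≤ 1/t := (div_pos one_pos htpos).le
      rw [Measure.addHaar_closedBall _ _ h32t, Measure.addHaar_ball _ _ h1t0,
        finrank_euclideanSpace_fin]
      have hle2 : ENNReal.ofReal ((1/t)^n) * volume (Metric.ball (0:EuclideanSpace ℝ (Fin n)) 1)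
          ≤ ENNReal.ofReal ((3/(2*t))^n) * volume (Metric.ball (0:EuclideanSpace ℝ (Fin n)) 1) :=
        mul_le_mul_left (ENNReal.ofReal_le_ofReal
          (pow_le_pow_left₀ h1t0 hrad n)) _
      rw [ENNReal.toReal_sub_of_le hle2 (ENNReal.mul_ne_top ENNReal.ofReal_ne_top
        measure_ball_lt_top.ne)]
      rw [ENNReal.toReal_mul, ENNReal.toReal_mul,
        ENNReal.toReal_ofReal (pow_nonneg h32t n),
        ENNReal.toReal_ofReal (pow_nonneg h1t0 n), ← hvdef]
      have e : (3/(2*t))^n = (3/2:ℝ)^n * (1/t)^n := by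
        rw [← mul_pow]
        congr 1
        ring
      rw [e]
      ring
    have hintnn : 0 ≤ ∫ ξ : EuclideanSpace ℝ (Fin n), ‖w t ξ‖^2 :=
      integral_nonneg fun ξ => by positivity
    have hgoal2 : (C₁ * P * t ^ (1-(n:ℝ)/2))^2 ≤ ∫ ξ : EuclideanSpace ℝ (Fin n), ‖w t ξ‖^2 := by
      have h1 : (c₁*P*t)^2 * (volume S).toReal ≤ ∫ ξ : EuclideanSpace ℝ (Fin n), ‖w t ξ‖^2 :=
        le_trans (by rw [smul_eq_mul, mul_comm] at hS1; exact hS1) hS2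
      rw [hvol] at h1
      have hYsq : (t ^ (1-(n:ℝ)/2))^2 = t^2 * (1/t)^n := by
        have ha : (t ^ (1-(n:ℝ)/2))^2 = t ^ ((2:ℝ) + (-(n:ℝ))) := by
          rw [← Real.rpow_natCast (t ^ (1-(n:ℝ)/2)) 2, ← Real.rpow_mul htpos.le]
          congr 1
          push_cast
          ring
        rw [ha, Real.rpow_add htpos,
          show ((2:ℝ)) = ((2:ℕ):ℝ) from by norm_num, Real.rpow_natCast,
          Real.rpow_neg htpos.le, Real.rpow_natCast, one_div, inv_pow]
      have hCW : C₁^2 = c₁^2 * W := by rw [hC₁def, mul_pow, Real.sq_sqrt hW.le]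
      calc (C₁*P*t^(1-(n:ℝ)/2))^2 = C₁^2*P^2*(t^(1-(n:ℝ)/2))^2 := by ring
        _ = c₁^2*W*P^2*(t^2*(1/t)^n) := by rw [hCW, hYsq]
        _ = (c₁*P*t)^2 * (((3/2:ℝ)^n-1)*(1/t)^n*v) := by rw [hWdef]; ring
        _ ≤ ∫ ξ : EuclideanSpace ℝ (Fin n), ‖w t ξ‖^2 := h1
    exact (Real.le_sqrt (mul_nonneg (mul_nonneg hC₁.le hP0)
      (Real.rpow_pos_of_pos htpos _).le) hintnn).mpr hgoal2
end
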